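/- arXiv:1002.4983 — 8 statements merged into one kernel-verified Lean document; each statement's English description precedes it below -/
import Mathlib

section
/- Let X be a nilpotent odd orthosymplectic endomorphism with dim V₀ = 2n+1 and dim V₁ = 2n, n ≥ 1, and suppose that dim Ker X = 3, dim(Ker X ∩ Im X) = 1, dim(Ker X ∩ V₀) = 2, and the restriction of φ to Ker X ∩ V₀ is nondegenerate (these conditions characterize the codimension-1 orbit O₁). Then the Springer fiber B_X has exactly two elements. -/
/-- The bilinear super-symmetric form `B` on `V = V₀ × V₁` associated to a nondegenerate
symmetric bilinear form `φ` on `V₀` and a nondegenerate alternating bilinear form `ψ`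
on `V₁`: `B((v,w),(v',w')) = φ(v,v') + ψ(w,w')`. -/
def Bform {V₀ V₁ : Type} [AddCommGroup V₀] [Module ℂ V₀] [AddCommGroup V₁] [Module ℂ V₁]
    (φ : V₀ →ₗ[ℂ] V₀ →ₗ[ℂ] ℂ) (ψ : V₁ →ₗ[ℂ] V₁ →ₗ[ℂ] ℂ) (p q : V₀ × V₁) : ℂ :=
  φ p.1 q.1 + ψ p.2 q.2

/-- The graded pieces of `V = V₀ × V₁`: `Vgr V₀ V₁ false = V₀ × 0` (even part) and
`Vgr V₀ V₁ true = 0 × V₁` (odd part). -/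
def Vgr (V₀ V₁ : Type) [AddCommGroup V₀] [Module ℂ V₀] [AddCommGroup V₁] [Module ℂ V₁]
    (ε : Bool) : Submodule ℂ (V₀ × V₁) :=
  if ε then Submodule.prod ⊥ ⊤ else Submodule.prod ⊤ ⊥

/-- The `B`-orthogonal complement `x^⊥ = {z : B(x,z) = 0}` of a vector `x ∈ V₀ × V₁`. -/
noncomputable def perp {V₀ V₁ : Type} [AddCommGroup V₀] [Module ℂ V₀] [AddCommGroup V₁] [Module ℂ V₁]
    (φ : V₀ →ₗ[ℂ] V₀ →ₗ[ℂ] ℂ) (ψ : V₁ →ₗ[ℂ] V₁ →ₗ[ℂ] ℂ) (x : V₀ × V₁) :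
    Submodule ℂ (V₀ × V₁) :=
  LinearMap.ker ((φ x.1).comp (LinearMap.fst ℂ V₀ V₁) + (ψ x.2).comp (LinearMap.snd ℂ V₀ V₁))

open Module Submodule LinearMap

section Aux

variable {M M' : Type} [AddCommGroup M] [Module ℂ M] [AddCommGroup M'] [Module ℂ M']

/-- Equivalence between a product submodule and the product of submodules. -/
def prodSubEquiv (p : Submodule ℂ M) (q : Submodule ℂ M') :
    ↥(p.prod q) ≃ₗ[ℂ] ↥p × ↥q where
  toFun x := (⟨x.1.1, x.2.1⟩, ⟨x.1.2, x.2.2⟩)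
  map_add' _ _ := rfl
  map_smul' _ _ := rfl
  invFun y := ⟨(y.1.1, y.2.1), ⟨y.1.2, y.2.2⟩⟩
  left_inv _ := rfl
  right_inv _ := rfl

lemma finrank_prod_sub [FiniteDimensional ℂ M] [FiniteDimensional ℂ M']
    (p : Submodule ℂ M) (q : Submodule ℂ M') :
    finrank ℂ ↥(p.prod q) = finrank ℂ ↥p + finrank ℂ ↥q := by
  rw [LinearEquiv.finrank_eq (prodSubEquiv p q), Module.finrank_prod]

lemma finrank_map_add_inf [FiniteDimensional ℂ M] (f : M →ₗ[ℂ] M') (p : Submodule ℂ M) :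
    finrank ℂ ↥(p.map f) + finrank ℂ ↥(LinearMap.ker f ⊓ p) = finrank ℂ ↥p := by
  have h1 := LinearMap.finrank_range_add_finrank_ker (f.domRestrict p)
  rw [LinearMap.range_domRestrict, LinearMap.ker_domRestrict] at h1
  have h2 : comap p.subtype (LinearMap.ker f) = comap p.subtype (LinearMap.ker f ⊓ p) := by
    apply Submodule.ext
    intro x
    simp only [Submodule.mem_comap, Submodule.mem_inf, LinearMap.mem_ker]
    exact ⟨fun h => ⟨h, x.2⟩, fun h => h.1⟩
  rw [h2, LinearEquiv.finrank_eq (Submodule.comapSubtypeEquivOfLe (inf_le_right : LinearMap.ker f ⊓ p ≤ p))] at h1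
  exact h1

lemma finrank_comap_eq [FiniteDimensional ℂ M] (f : M →ₗ[ℂ] M') (S : Submodule ℂ M') :
    finrank ℂ ↥(S.comap f) = finrank ℂ ↥(LinearMap.ker f) + finrank ℂ ↥(S ⊓ LinearMap.range f) := by
  have h1 := finrank_map_add_inf f (S.comap f)
  rw [Submodule.map_comap_eq] at h1
  have h2 : LinearMap.ker f ⊓ S.comap f = LinearMap.ker f := by
    rw [inf_eq_left]
    intro x hx
    simp only [Submodule.mem_comap, LinearMap.mem_ker] at *
    rw [hx]; exact S.zero_mem
  rw [h2, inf_comm] at h1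
  omega

lemma ker_pow_le_succ (T : Module.End ℂ M) (m : ℕ) :
    LinearMap.ker (T ^ m) ≤ LinearMap.ker (T ^ (m + 1)) := by
  intro x hx
  simp only [LinearMap.mem_ker] at *
  rw [pow_succ']
  simp [Module.End.mul_apply, hx]

lemma ker_pow_le (T : Module.End ℂ M) {a b : ℕ} (h : a ≤ b) :
    LinearMap.ker (T ^ a) ≤ LinearMap.ker (T ^ b) := by
  induction b with
  | zero => simpa [Nat.le_zero.mp h] using le_refl _
  | succ b ih =>
    rcases Nat.lt_or_ge a (b+1) with h' | h'
    · exact le_trans (ih (by omega)) (ker_pow_le_succ T b)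
    · have : a = b + 1 := by omega
      subst this; exact le_refl _

lemma ker_pow_stab (T : Module.End ℂ M) (m : ℕ)
    (h : LinearMap.ker (T ^ (m + 1)) = LinearMap.ker (T ^ m)) :
    ∀ k, LinearMap.ker (T ^ (m + k)) = LinearMap.ker (T ^ m) := by
  intro k
  induction k with
  | zero => rfl
  | succ k ih =>
    refine le_antisymm ?_ (ker_pow_le T (by omega))
    intro x hx
    simp only [LinearMap.mem_ker] at hx
    have hx' : (T ^ (m + k + 1)) x = 0 := by
      rw [show m + k + 1 = m + (k + 1) by omega]; exact hx
    have hTx : T x ∈ LinearMap.ker (T ^ (m + k)) := by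
      simp only [LinearMap.mem_ker]
      have : (T ^ (m + k)) (T x) = (T ^ (m + k + 1)) x := by
        rw [pow_succ]; rfl
      rw [this, hx']
    rw [ih] at hTx
    have : x ∈ LinearMap.ker (T ^ (m + 1)) := by
      simp only [LinearMap.mem_ker] at hTx ⊢
      rw [pow_succ]
      simpa [Module.End.mul_apply] using hTx
    rwa [h] at this

lemma ker_pow_strict (T : Module.End ℂ M) (hT : IsNilpotent T) (m : ℕ)
    (h : LinearMap.ker (T ^ m) ≠ ⊤) :
    LinearMap.ker (T ^ m) < LinearMap.ker (T ^ (m + 1)) := by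
  rcases lt_or_eq_of_le (ker_pow_le_succ T m) with h' | h'
  · exact h'
  · exfalso
    obtain ⟨k, hk⟩ := hT
    have := ker_pow_stab T m h'.symm k
    apply h
    rw [← this]
    have : T ^ (m + k) = 0 := by
      rw [pow_add, hk, mul_zero]
    rw [this]
    exact LinearMap.ker_zero

lemma finrank_ker_pow_le [FiniteDimensional ℂ M] (T : Module.End ℂ M)
    (h1 : finrank ℂ ↥(LinearMap.ker T) ≤ 1) (m : ℕ) :
    finrank ℂ ↥(LinearMap.ker (T ^ m)) ≤ m := by
  induction m with
  | zero =>
    rw [pow_zero, Module.End.one_eq_id, LinearMap.ker_id]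
    simp
  | succ m ih =>
    have key := finrank_map_add_inf (T ^ m) (LinearMap.ker (T ^ (m + 1)))
    have hinf : LinearMap.ker (T ^ m) ⊓ LinearMap.ker (T ^ (m + 1)) = LinearMap.ker (T ^ m) :=
      inf_eq_left.mpr (ker_pow_le_succ T m)
    rw [hinf] at key
    have hmap : (LinearMap.ker (T ^ (m + 1))).map (T ^ m) ≤ LinearMap.ker T := by
      rintro x ⟨y, hy, rfl⟩
      simp only [LinearMap.mem_ker] at *
      have : T ((T ^ m) y) = (T ^ (m + 1)) y := by
        rw [pow_succ', Module.End.mul_apply]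
      rw [this, hy]
    have := Submodule.finrank_mono hmap
    omega

lemma finrank_ker_pow_ge [FiniteDimensional ℂ M] (T : Module.End ℂ M) (hT : IsNilpotent T)
    (m : ℕ) : min m (finrank ℂ M) ≤ finrank ℂ ↥(LinearMap.ker (T ^ m)) := by
  induction m with
  | zero => simp
  | succ m ih =>
    by_cases htop : LinearMap.ker (T ^ m) = ⊤
    · have : LinearMap.ker (T ^ (m+1)) = ⊤ := top_le_iff.mp (htop ▸ ker_pow_le_succ T m)
      rw [this, finrank_top]
      omega
    · have hlt := ker_pow_strict T hT m htop
      have := Submodule.finrank_lt_finrank_of_lt hlt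
      have hle : finrank ℂ ↥(LinearMap.ker (T ^ m)) < finrank ℂ M := by
        have := Submodule.finrank_lt htop
        exact this
      omega

end Aux

lemma two_isotropic_lines {V : Type} [AddCommGroup V] [Module ℂ V] [FiniteDimensional ℂ V]
    (φ : V →ₗ[ℂ] V →ₗ[ℂ] ℂ) (hφsymm : ∀ a b : V, φ a b = φ b a)
    (K : Submodule ℂ V) (hK : finrank ℂ ↥K = 2)
    (hnd : ∀ x ∈ K, (∀ y ∈ K, φ x y = 0) → x = 0) :
    ∃ l₁ l₂ : V, l₁ ∈ K ∧ l₂ ∈ K ∧ φ l₁ l₁ = 0 ∧ φ l₂ l₂ = 0 ∧ φ l₁ l₂ = 1 ∧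
      ∀ x ∈ K, ∃ a b : ℂ, x = a • l₁ + b • l₂ := by
  classical
  -- step 1 : a nonzero isotropic vector in K
  obtain ⟨v, hvK, hvne, hviso⟩ : ∃ v : V, v ∈ K ∧ v ≠ 0 ∧ φ v v = 0 := by
    have b : Basis (Fin 2) ℂ ↥K := Module.finBasisOfFinrankEq ℂ ↥K hK
    set p : V := ((b 0 : ↥K) : V) with hp
    set q : V := ((b 1 : ↥K) : V) with hq
    by_cases hqq : φ q q = 0
    · refine ⟨q, (b 1).2, ?_, hqq⟩
      intro h0
      exact b.ne_zero 1 (ZeroMemClass.coe_eq_zero.mp (hq ▸ h0))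
    · obtain ⟨s, hs⟩ := IsAlgClosed.exists_pow_nat_eq ((φ p q) ^ 2 - φ p p * φ q q) (two_pos)
      set e : ℂ := -(φ p q) + s with he
      refine ⟨(φ q q) • p + e • q, K.add_mem (K.smul_mem _ (b 0).2) (K.smul_mem e (b 1).2), ?_, ?_⟩
      · intro h0
        have hw : ((φ q q) • b 0 + e • b 1 : ↥K) = 0 := by
          ext
          simpa using h0
        have := congrArg (fun z => (b.repr z) 0) hw
        simp [Finsupp.single_apply] at this
        exact hqq this
      · have expand : φ ((φ q q) • p + e • q) ((φ q q) • p + e • q)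
            = (φ q q) * (φ q q) * φ p p + (φ q q) * e * φ p q
              + e * (φ q q) * (φ q p) + e * e * φ q q := by
          simp [map_add, map_smul]
          ring
        rw [expand, hφsymm q p, he]
        linear_combination (φ q q) * hs
  -- step 2 : a vector pairing nontrivially with v
  obtain ⟨w, hwK, hvw⟩ : ∃ w : V, w ∈ K ∧ φ v w ≠ 0 := by
    by_contra hcon
    push_neg at hcon
    exact hvne (hnd v hvK fun y hy => hcon y hy)
  -- step 3 : hyperbolic pair
  set w₁ : V := (φ v w)⁻¹ • w with hw₁
  have hw₁K : w₁ ∈ K := K.smul_mem _ hwK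
  have hvw₁ : φ v w₁ = 1 := by
    rw [hw₁, map_smul]
    simp
    field_simp
  set l₂ : V := w₁ - (φ w₁ w₁ / 2) • v with hl₂
  have hl₂K : l₂ ∈ K := K.sub_mem hw₁K (K.smul_mem _ hvK)
  have hw₁v : φ w₁ v = 1 := by rw [hφsymm]; exact hvw₁
  have hl₂iso : φ l₂ l₂ = 0 := by
    rw [hl₂]
    simp only [map_sub, map_smul, LinearMap.sub_apply, LinearMap.smul_apply, smul_eq_mul]
    rw [hvw₁, hw₁v, hviso]
    ring
  have hvl₂ : φ v l₂ = 1 := by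
    rw [hl₂]
    simp only [map_sub, map_smul, LinearMap.sub_apply, LinearMap.smul_apply, smul_eq_mul]
    rw [hvw₁, hviso]
    ring
  refine ⟨v, l₂, hvK, hl₂K, hviso, hl₂iso, hvl₂, ?_⟩
  -- step 4 : the pair spans K
  have hl₂v : φ l₂ v = 1 := by rw [hφsymm]; exact hvl₂
  have hdisj : (ℂ ∙ v) ⊓ (ℂ ∙ l₂) = ⊥ := by
    rw [eq_bot_iff]
    rintro x ⟨hx1, hx2⟩
    obtain ⟨a, rfl⟩ := Submodule.mem_span_singleton.mp hx1
    obtain ⟨c, hc⟩ := Submodule.mem_span_singleton.mp hx2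
    have h1 : φ (a • v) l₂ = a := by rw [map_smul]; simp [hvl₂]
    have h2 : φ (a • v) l₂ = 0 := by
      rw [← hc, map_smul]
      simp [hl₂iso]
    rw [h1] at h2
    subst h2
    simp
  have hfr : finrank ℂ ↥((ℂ ∙ v) ⊔ (ℂ ∙ l₂)) = 2 := by
    have := Submodule.finrank_sup_add_finrank_inf_eq (ℂ ∙ v) (ℂ ∙ l₂)
    rw [hdisj, finrank_bot, finrank_span_singleton hvne,
      finrank_span_singleton (show l₂ ≠ 0 by
        intro h0; rw [h0] at hvl₂; simp at hvl₂)] at this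
    omega
  have hsple : (ℂ ∙ v) ⊔ (ℂ ∙ l₂) ≤ K := by
    apply sup_le <;> rw [Submodule.span_singleton_le_iff_mem] <;> assumption
  have hspan : (ℂ ∙ v) ⊔ (ℂ ∙ l₂) = K :=
    Submodule.eq_of_le_of_finrank_le hsple (by omega)
  intro x hx
  rw [← hspan] at hx
  obtain ⟨y, hy, z, hz, rfl⟩ := Submodule.mem_sup.mp hx
  obtain ⟨a, rfl⟩ := Submodule.mem_span_singleton.mp hy
  obtain ⟨c, rfl⟩ := Submodule.mem_span_singleton.mp hz
  exact ⟨a, c, rfl⟩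


/-- Let `X` be a nilpotent odd orthosymplectic endomorphism with `dim V₀ = 2n+1`,
`dim V₁ = 2n`, `n ≥ 1`, lying in the codimension-1 orbit `O₁` (characterized by
`dim Ker X = 3`, `dim(Ker X ∩ Im X) = 1`, `dim(Ker X ∩ V₀) = 2` and nondegeneracy of
`φ` on `Ker X ∩ V₀`). Then the Springer fiber `B_X` has exactly two elements. -/
theorem springer_fiber_of_subregular_has_two_elements
    (V₀ V₁ : Type) [AddCommGroup V₀] [Module ℂ V₀] [FiniteDimensional ℂ V₀]
    [AddCommGroup V₁] [Module ℂ V₁] [FiniteDimensional ℂ V₁]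
    (φ : V₀ →ₗ[ℂ] V₀ →ₗ[ℂ] ℂ) (ψ : V₁ →ₗ[ℂ] V₁ →ₗ[ℂ] ℂ)
    (hφsymm : ∀ a b : V₀, φ a b = φ b a)
    (hφnd : ∀ a : V₀, (∀ b : V₀, φ a b = 0) → a = 0)
    (hψalt : ∀ a : V₁, ψ a a = 0)
    (hψnd : ∀ a : V₁, (∀ b : V₁, ψ a b = 0) → a = 0)
    (u : V₀ →ₗ[ℂ] V₁) (ustar : V₁ →ₗ[ℂ] V₀)
    (hadj : ∀ (v : V₀) (w : V₁), φ (ustar w) v = ψ w (u v))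
    (X : Module.End ℂ (V₀ × V₁))
    (hX : ∀ p : V₀ × V₁, X p = (ustar p.2, u p.1))
    (n : ℕ) (hn : 1 ≤ n)
    (hd0 : Module.finrank ℂ V₀ = 2 * n + 1) (hd1 : Module.finrank ℂ V₁ = 2 * n)
    (hnil : IsNilpotent X)
    (hker : Module.finrank ℂ ↥(LinearMap.ker X) = 3)
    (hkerim : Module.finrank ℂ ↥(LinearMap.ker X ⊓ LinearMap.range X) = 1)
    (hker0 : Module.finrank ℂ ↥(LinearMap.ker X ⊓ Vgr V₀ V₁ false) = 2)
    (hnd : ∀ p ∈ LinearMap.ker X ⊓ Vgr V₀ V₁ false,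
      (∀ q ∈ LinearMap.ker X ⊓ Vgr V₀ V₁ false, φ p.1 q.1 = 0) → p = 0) :
    ∃ A C : (Fin n → Submodule ℂ V₀) × (Fin n → Submodule ℂ V₁), A ≠ C ∧
      {EF : (Fin n → Submodule ℂ V₀) × (Fin n → Submodule ℂ V₁) |
        (∀ i : Fin n, Module.finrank ℂ ↥(EF.1 i) = i.1 + 1) ∧
        (∀ j : Fin n, Module.finrank ℂ ↥(EF.2 j) = j.1 + 1) ∧
        (∀ i j : Fin n, i ≤ j → EF.1 i ≤ EF.1 j) ∧
        (∀ i j : Fin n, i ≤ j → EF.2 i ≤ EF.2 j) ∧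
        (∀ v ∈ EF.1 ⟨n - 1, by omega⟩, ∀ v' ∈ EF.1 ⟨n - 1, by omega⟩, φ v v' = 0) ∧
        (∀ w ∈ EF.2 ⟨n - 1, by omega⟩, ∀ w' ∈ EF.2 ⟨n - 1, by omega⟩, ψ w w' = 0) ∧
        (∀ i : Fin n, ∀ v ∈ EF.1 i, (i.1 = 0 → u v = 0) ∧
          (0 < i.1 → u v ∈ EF.2 ⟨i.1 - 1, Nat.lt_of_le_of_lt (Nat.sub_le i.1 1) i.isLt⟩)) ∧
        (∀ i : Fin n, ∀ w ∈ EF.2 i, ustar w ∈ EF.1 i)}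
      = {A, C} := by
  classical
  set Y : Module.End ℂ V₁ := u ∘ₗ ustar with hYdef
  have hYapp : ∀ w : V₁, Y w = u (ustar w) := fun w => rfl
  have hpow1 : ∀ (m : ℕ) (w : V₁), Y ((Y ^ m) w) = (Y ^ (m + 1)) w := by
    intro m w
    rw [pow_succ', Module.End.mul_apply]
  -- kernel of X as a product
  have hkerX : LinearMap.ker X = (LinearMap.ker u).prod (LinearMap.ker ustar) := by
    apply Submodule.ext
    rintro ⟨v, w⟩
    simp only [LinearMap.mem_ker, Submodule.mem_prod, hX, Prod.mk_eq_zero]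
    tauto
  have hVgrf : (LinearMap.ker X ⊓ Vgr V₀ V₁ false) = (LinearMap.ker u).prod ⊥ := by
    have hV : Vgr V₀ V₁ false = Submodule.prod ⊤ ⊥ := rfl
    apply Submodule.ext
    rintro ⟨v, w⟩
    simp only [Submodule.mem_inf, hkerX, hV, Submodule.mem_prod, Submodule.mem_top,
      Submodule.mem_bot, LinearMap.mem_ker]
    constructor
    · rintro ⟨⟨h1, -⟩, -, h3⟩
      exact ⟨h1, h3⟩
    · rintro ⟨h1, h3⟩
      subst h3
      exact ⟨⟨h1, map_zero _⟩, trivial, rfl⟩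
  have hkeru : finrank ℂ ↥(LinearMap.ker u) = 2 := by
    rw [hVgrf, finrank_prod_sub] at hker0
    simpa [finrank_bot] using hker0
  have hkerust : finrank ℂ ↥(LinearMap.ker ustar) = 1 := by
    rw [hkerX, finrank_prod_sub, hkeru] at hker
    omega
  have hndK : ∀ x ∈ LinearMap.ker u, (∀ y ∈ LinearMap.ker u, φ x y = 0) → x = 0 := by
    intro x hx h
    have hmem : ((x, 0) : V₀ × V₁) ∈ LinearMap.ker X ⊓ Vgr V₀ V₁ false := by
      rw [hVgrf]
      exact ⟨hx, Submodule.zero_mem ⊥⟩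
    have h0 := hnd (x, 0) hmem (fun q hq => by
      rw [hVgrf] at hq
      exact h q.1 hq.1)
    exact (Prod.ext_iff.mp h0).1
  have hdisj : LinearMap.ker u ⊓ LinearMap.range ustar = ⊥ := by
    rw [eq_bot_iff]
    rintro x ⟨hx1, w, rfl⟩
    have : ustar w = 0 := by
      apply hndK _ hx1
      intro y hy
      rw [hadj, LinearMap.mem_ker.mp hy, map_zero]
    simp [this]
  have horth : ∀ (w : V₁) (s : V₀), u s = 0 → φ (ustar w) s = 0 := by
    intro w s hs
    rw [hadj, hs, map_zero]
  have hψskew : ∀ a b : V₁, ψ a b = - ψ b a := by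
    intro a b
    have h := hψalt (a + b)
    have h2 : ψ a a + (ψ a b + (ψ b a + ψ b b)) = 0 := by
      rw [← h]
      simp [map_add]
      ring
    rw [hψalt a, hψalt b] at h2
    linear_combination h2
  have hφust : ∀ z z' : V₁, φ (ustar z) (ustar z') = ψ z (Y z') := fun z z' =>
    hadj (ustar z') z
  have hψY : ∀ z z' : V₁, ψ (Y z) z' = - ψ z (Y z') := by
    intro z z'
    rw [hψskew (Y z) z', (hφust z' z).symm, hφsymm, hφust z z']
  have hψYpow : ∀ (a : ℕ) (z z' : V₁), ψ ((Y ^ a) z) z' = (-1 : ℂ) ^ a * ψ z ((Y ^ a) z') := by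
    intro a
    induction a with
    | zero => intro z z'; simp
    | succ a ih =>
      intro z z'
      have h1 : (Y ^ (a + 1)) z = (Y ^ a) (Y z) := by
        rw [pow_succ, Module.End.mul_apply]
      rw [h1, ih (Y z) z', hψY z ((Y ^ a) z'), hpow1]
      ring
  -- nilpotency of Y
  have hXpow : ∀ (m : ℕ) (w : V₁), (X ^ (2 * m)) (0, w) = (0, (Y ^ m) w) := by
    intro m
    induction m with
    | zero => intro w; simp
    | succ m ih =>
      intro w
      have h2 : (X ^ (2 * (m + 1))) (0, w) = (X ^ (2 * m)) (X (X (0, w))) := by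
        rw [show 2 * (m + 1) = 2 * m + 1 + 1 by ring, pow_succ, pow_succ]
        rfl
      rw [h2, hX (0, w)]
      simp only [map_zero]
      rw [hX (ustar w, 0)]
      simp only [map_zero]
      rw [ih (u (ustar w))]
      have h3 : (Y ^ m) (u (ustar w)) = (Y ^ (m + 1)) w := by
        rw [pow_succ, Module.End.mul_apply]
        rfl
      rw [h3]
  have hnilY : IsNilpotent Y := by
    obtain ⟨k, hk⟩ := hnil
    refine ⟨k, ?_⟩
    ext w
    have h1 := hXpow k w
    have h2 : X ^ (2 * k) = 0 := by
      rw [show 2 * k = k + k by ring, pow_add, hk, mul_zero]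
    rw [h2] at h1
    simp only [LinearMap.zero_apply] at h1 ⊢
    simpa using (Prod.ext_iff.mp h1.symm).2
  have hkerY : LinearMap.ker Y = LinearMap.ker ustar := by
    apply le_antisymm
    · intro x hx
      have hm : ustar x ∈ LinearMap.ker u ⊓ LinearMap.range ustar :=
        ⟨LinearMap.mem_ker.mp hx, x, rfl⟩
      rw [hdisj] at hm
      exact LinearMap.mem_ker.mpr (Submodule.mem_bot ℂ |>.mp hm)
    · intro x hx
      rw [LinearMap.mem_ker] at hx ⊢
      rw [hYapp, hx, map_zero]
  have hkerYm : ∀ m : ℕ, m ≤ 2 * n → finrank ℂ ↥(LinearMap.ker (Y ^ m)) = m := by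
    intro m hm
    have h1 := finrank_ker_pow_le Y (by rw [hkerY, hkerust]) m
    have h2 := finrank_ker_pow_ge Y hnilY m
    rw [hd1] at h2
    omega
  have hY2n : Y ^ (2 * n) = 0 := by
    have h : LinearMap.ker (Y ^ (2 * n)) = ⊤ := by
      apply Submodule.eq_top_of_finrank_eq
      rw [hkerYm (2 * n) le_rfl, hd1]
    rwa [LinearMap.ker_eq_top] at h
  have hrY : ∀ m : ℕ, m ≤ 2 * n → finrank ℂ ↥(LinearMap.range (Y ^ m)) = 2 * n - m := by
    intro m hm
    have h := LinearMap.finrank_range_add_finrank_ker (Y ^ m)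
    rw [hkerYm m hm, hd1] at h
    omega
  have hrmono : ∀ a b : ℕ, a ≤ b → LinearMap.range (Y ^ b) ≤ LinearMap.range (Y ^ a) := by
    intro a b hab
    rintro x ⟨z, rfl⟩
    refine ⟨(Y ^ (b - a)) z, ?_⟩
    rw [← Module.End.mul_apply, ← pow_add, show a + (b - a) = b by omega]
  have hYpow_zero : ∀ (c : ℕ), 2 * n ≤ c → ∀ z : V₁, (Y ^ c) z = 0 := by
    intro c hc z
    rw [show c = (c - 2 * n) + 2 * n by omega, pow_add, Module.End.mul_apply, hY2n]
    simp
  have htop1 : LinearMap.range (Y ^ (2 * n - 1)) = LinearMap.ker ustar := by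
    apply Submodule.eq_of_le_of_finrank_le
    · rintro x ⟨z, rfl⟩
      rw [← hkerY, LinearMap.mem_ker, hpow1, hYpow_zero (2 * n - 1 + 1) (by omega)]
    · rw [hkerust, hrY (2 * n - 1) (by omega)]
      omega
  have hkerle : ∀ m : ℕ, m ≤ 2 * n - 1 → LinearMap.ker ustar ≤ LinearMap.range (Y ^ m) := by
    intro m hm
    rw [← htop1]
    exact hrmono m (2 * n - 1) hm
  have hRdim : ∀ m : ℕ, m ≤ 2 * n - 1 →
      finrank ℂ ↥((LinearMap.range (Y ^ m)).map ustar) = 2 * n - m - 1 := by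
    intro m hm
    have h := finrank_map_add_inf ustar (LinearMap.range (Y ^ m))
    rw [inf_eq_left.mpr (hkerle m hm), hkerust, hrY m (by omega)] at h
    omega
  have hrangeYu : ∀ m : ℕ, 1 ≤ m → LinearMap.range (Y ^ m) ≤ LinearMap.range u := by
    intro m hm
    rintro x ⟨z, rfl⟩
    refine ⟨ustar ((Y ^ (m - 1)) z), ?_⟩
    have : u (ustar ((Y ^ (m - 1)) z)) = Y ((Y ^ (m - 1)) z) := rfl
    rw [this, hpow1, show m - 1 + 1 = m by omega]
  have hψvan : ∀ (a b : ℕ), 2 * n ≤ a + b → ∀ z z' : V₁, ψ ((Y ^ a) z) ((Y ^ b) z') = 0 := by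
    intro a b hab z z'
    rw [hψYpow a]
    have h1 : (Y ^ a) ((Y ^ b) z') = (Y ^ (a + b)) z' := by
      rw [← Module.End.mul_apply, ← pow_add]
    rw [h1, hYpow_zero (a + b) hab, map_zero, mul_zero]
  -- the two isotropic lines in ker u
  obtain ⟨l₁, l₂, hl₁K, hl₂K, hl₁iso, hl₂iso, hl₁l₂, hrep⟩ :=
    two_isotropic_lines φ hφsymm (LinearMap.ker u) hkeru hndK
  have hl₂l₁ : φ l₂ l₁ = 1 := by rw [hφsymm]; exact hl₁l₂
  have hl₁ne : l₁ ≠ 0 := by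
    intro h
    rw [h] at hl₁l₂
    simp at hl₁l₂
  have hl₂ne : l₂ ≠ 0 := by
    intro h
    rw [h] at hl₁l₂
    simp at hl₁l₂
  have hkey₁ : ∀ x ∈ LinearMap.ker u, φ x l₁ = 0 → x ∈ (ℂ ∙ l₁) := by
    intro x hx hxl
    obtain ⟨a, b, rfl⟩ := hrep x hx
    have hb : b = 0 := by
      have : φ (a • l₁ + b • l₂) l₁ = b := by
        simp only [map_add, map_smul, LinearMap.add_apply, LinearMap.smul_apply, smul_eq_mul]
        rw [hl₁iso, hl₂l₁]
        ring
      rw [hxl] at this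
      exact this.symm
    rw [hb]
    exact Submodule.mem_span_singleton.mpr ⟨a, by simp⟩
  have hkey₂ : ∀ x ∈ LinearMap.ker u, φ x l₂ = 0 → x ∈ (ℂ ∙ l₂) := by
    intro x hx hxl
    obtain ⟨a, b, rfl⟩ := hrep x hx
    have ha : a = 0 := by
      have : φ (a • l₁ + b • l₂) l₂ = a := by
        simp only [map_add, map_smul, LinearMap.add_apply, LinearMap.smul_apply, smul_eq_mul]
        rw [hl₂iso, hl₁l₂]
        ring
      rw [hxl] at this
      exact this.symm
    rw [ha]
    exact Submodule.mem_span_singleton.mpr ⟨b, by simp⟩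
  -- the canonical subspaces
  set R0 : ℕ → Submodule ℂ V₀ := fun j => (LinearMap.range (Y ^ (2 * n - j - 1))).map ustar
    with hR0
  set R1 : ℕ → Submodule ℂ V₁ := fun j => LinearMap.range (Y ^ (2 * n - j - 1)) with hR1
  have hR00 : R0 0 = ⊥ := by
    rw [hR0]
    simp only [Nat.sub_zero]
    rw [htop1, eq_bot_iff]
    rintro x ⟨w, hw, rfl⟩
    rw [LinearMap.mem_ker.mp hw]
    simp
  have hR1dim : ∀ j : ℕ, j < n → finrank ℂ ↥(R1 j) = j + 1 := by
    intro j hj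
    rw [hR1]
    rw [hrY (2 * n - j - 1) (by omega)]
    omega
  have hR0dim : ∀ j : ℕ, j < n → finrank ℂ ↥(R0 j) = j := by
    intro j hj
    rw [hR0]
    rw [hRdim (2 * n - j - 1) (by omega)]
    omega
  have hR0le : ∀ j : ℕ, R0 j ≤ LinearMap.range ustar := by
    intro j
    rw [hR0]
    exact LinearMap.map_le_range
  have hspan_inf : ∀ l : V₀, l ∈ LinearMap.ker u → ∀ S : Submodule ℂ V₀,
      S ≤ LinearMap.range ustar → (ℂ ∙ l) ⊓ S = ⊥ := by
    intro l hl S hS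
    rw [eq_bot_iff]
    rintro x ⟨hx1, hx2⟩
    have hxk : x ∈ LinearMap.ker u := by
      obtain ⟨a, rfl⟩ := Submodule.mem_span_singleton.mp hx1
      exact Submodule.smul_mem _ a hl
    have : x ∈ LinearMap.ker u ⊓ LinearMap.range ustar := ⟨hxk, hS hx2⟩
    rw [hdisj] at this
    exact this
  have hEdim : ∀ l : V₀, l ≠ 0 → l ∈ LinearMap.ker u → ∀ j : ℕ, j < n →
      finrank ℂ ↥((ℂ ∙ l) ⊔ R0 j) = j + 1 := by
    intro l hl0 hlK j hj
    have h1 := Submodule.finrank_sup_add_finrank_inf_eq (ℂ ∙ l) (R0 j)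
    rw [hspan_inf l hlK (R0 j) (hR0le j), finrank_bot, finrank_span_singleton hl0,
      hR0dim j hj] at h1
    omega
  -- the comap identities
  have hcomapU : ∀ j : ℕ, j + 1 < n →
      (LinearMap.range (Y ^ (2 * n - (j + 1)))).comap u = LinearMap.ker u ⊔ R0 (j + 1) := by
    intro j hj
    have hle : LinearMap.ker u ⊔ R0 (j + 1) ≤
        (LinearMap.range (Y ^ (2 * n - (j + 1)))).comap u := by
      apply sup_le
      · intro x hx
        simp only [Submodule.mem_comap]
        rw [LinearMap.mem_ker.mp hx]
        exact Submodule.zero_mem _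
      · rw [hR0]
        rintro x ⟨z, ⟨z₀, rfl⟩, rfl⟩
        simp only [Submodule.mem_comap]
        refine ⟨z₀, ?_⟩
        have h5 : u (ustar ((Y ^ (2 * n - (j + 1) - 1)) z₀))
            = Y ((Y ^ (2 * n - (j + 1) - 1)) z₀) := rfl
        rw [h5, hpow1, show 2 * n - (j + 1) - 1 + 1 = 2 * n - (j + 1) by omega]
    have hd1' : finrank ℂ ↥((LinearMap.range (Y ^ (2 * n - (j + 1)))).comap u) = 2 + (j + 1) := by
      rw [finrank_comap_eq u (LinearMap.range (Y ^ (2 * n - (j + 1)))),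
        inf_eq_left.mpr (hrangeYu (2 * n - (j + 1)) (by omega)), hkeru,
        hrY (2 * n - (j + 1)) (by omega)]
      omega
    have hd2' : finrank ℂ ↥(LinearMap.ker u ⊔ R0 (j + 1)) = 2 + (j + 1) := by
      have h1 := Submodule.finrank_sup_add_finrank_inf_eq (LinearMap.ker u) (R0 (j + 1))
      have h2 : LinearMap.ker u ⊓ R0 (j + 1) = ⊥ := by
        rw [eq_bot_iff, ← hdisj]
        exact inf_le_inf_left _ (hR0le (j + 1))
      rw [h2, finrank_bot, hkeru, hR0dim (j + 1) hj] at h1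
      omega
    exact (Submodule.eq_of_le_of_finrank_le hle (by omega)).symm
  have hcomapUs : ∀ l : V₀, l ∈ LinearMap.ker u → ∀ j : ℕ, j < n →
      ((ℂ ∙ l) ⊔ R0 j).comap ustar = R1 j := by
    intro l hlK j hj
    have hinf : ((ℂ ∙ l) ⊔ R0 j) ⊓ LinearMap.range ustar = R0 j := by
      apply le_antisymm
      · rintro x ⟨hx1, hx2⟩
        obtain ⟨y, hy, z, hz, rfl⟩ := Submodule.mem_sup.mp hx1
        have hyr : y ∈ LinearMap.range ustar := by
          rw [show y = (y + z) - z from (add_sub_cancel_right y z).symm]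
          exact Submodule.sub_mem _ hx2 (hR0le j hz)
        have hy0 : y = 0 := by
          have hm : y ∈ (ℂ ∙ l) ⊓ LinearMap.range ustar := ⟨hy, hyr⟩
          rw [hspan_inf l hlK (LinearMap.range ustar) le_rfl] at hm
          exact hm
        rw [hy0, zero_add]
        exact hz
      · exact le_inf le_sup_right (hR0le j)
    have hle : R1 j ≤ ((ℂ ∙ l) ⊔ R0 j).comap ustar := by
      intro w hw
      simp only [Submodule.mem_comap]
      apply Submodule.mem_sup_right
      rw [hR0]
      exact Submodule.mem_map_of_mem hw
    have hcd : finrank ℂ ↥(((ℂ ∙ l) ⊔ R0 j).comap ustar) = j + 1 := by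
      rw [finrank_comap_eq ustar ((ℂ ∙ l) ⊔ R0 j), hinf, hkerust, hR0dim j hj]
      omega
    exact (Submodule.eq_of_le_of_finrank_le hle (by rw [hcd, hR1dim j hj])).symm
  have hul₁ : u l₁ = 0 := LinearMap.mem_ker.mp hl₁K
  have hR0mono : ∀ a b : ℕ, a ≤ b → R0 a ≤ R0 b := by
    intro a b hab
    rw [hR0]
    exact Submodule.map_mono (hrmono (2 * n - b - 1) (2 * n - a - 1) (by omega))
  have hR1mono : ∀ a b : ℕ, a ≤ b → R1 a ≤ R1 b := by
    intro a b hab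
    rw [hR1]
    exact hrmono (2 * n - b - 1) (2 * n - a - 1) (by omega)
  -- membership of the candidate flags in the Springer fiber
  have hmemb : ∀ l : V₀, l ∈ LinearMap.ker u → l ≠ 0 → φ l l = 0 →
      (∀ i : Fin n, finrank ℂ ↥((ℂ ∙ l) ⊔ R0 i.1) = i.1 + 1) ∧
      (∀ j : Fin n, finrank ℂ ↥(R1 j.1) = j.1 + 1) ∧
      (∀ i j : Fin n, i ≤ j → (ℂ ∙ l) ⊔ R0 i.1 ≤ (ℂ ∙ l) ⊔ R0 j.1) ∧
      (∀ i j : Fin n, i ≤ j → R1 i.1 ≤ R1 j.1) ∧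
      (∀ v ∈ (ℂ ∙ l) ⊔ R0 (n - 1), ∀ v' ∈ (ℂ ∙ l) ⊔ R0 (n - 1), φ v v' = 0) ∧
      (∀ w ∈ R1 (n - 1), ∀ w' ∈ R1 (n - 1), ψ w w' = 0) ∧
      (∀ i : Fin n, ∀ v ∈ (ℂ ∙ l) ⊔ R0 i.1,
        (i.1 = 0 → u v = 0) ∧ (0 < i.1 → u v ∈ R1 (i.1 - 1))) ∧
      (∀ i : Fin n, ∀ w ∈ R1 i.1, ustar w ∈ (ℂ ∙ l) ⊔ R0 i.1) := by
    intro l hlK hl0 hliso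
    have hul : u l = 0 := LinearMap.mem_ker.mp hlK
    refine ⟨?_, ?_, ?_, ?_, ?_, ?_, ?_, ?_⟩
    · intro i; exact hEdim l hl0 hlK i.1 i.2
    · intro j; exact hR1dim j.1 j.2
    · intro i j hij; exact sup_le_sup_left (hR0mono i.1 j.1 hij) _
    · intro i j hij; exact hR1mono i.1 j.1 hij
    · intro v hv v' hv'
      obtain ⟨y, hy, r, hr, rfl⟩ := Submodule.mem_sup.mp hv
      obtain ⟨a, rfl⟩ := Submodule.mem_span_singleton.mp hy
      rw [hR0] at hr
      obtain ⟨z, ⟨z₀, rfl⟩, rfl⟩ := hr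
      obtain ⟨y', hy', r', hr', rfl⟩ := Submodule.mem_sup.mp hv'
      obtain ⟨a', rfl⟩ := Submodule.mem_span_singleton.mp hy'
      rw [hR0] at hr'
      obtain ⟨z', ⟨z₀', rfl⟩, rfl⟩ := hr'
      have t2 : φ l (ustar ((Y ^ (2 * n - (n - 1) - 1)) z₀')) = 0 := by
        rw [hφsymm]; exact horth _ _ hul
      have t3 : φ (ustar ((Y ^ (2 * n - (n - 1) - 1)) z₀)) l = 0 := horth _ _ hul
      have t4 : φ (ustar ((Y ^ (2 * n - (n - 1) - 1)) z₀))
          (ustar ((Y ^ (2 * n - (n - 1) - 1)) z₀')) = 0 := by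
        rw [hφust, hpow1]
        exact hψvan (2 * n - (n - 1) - 1) (2 * n - (n - 1) - 1 + 1) (by omega) z₀ z₀'
      simp only [map_add, map_smul, LinearMap.add_apply, LinearMap.smul_apply, smul_eq_mul,
        hliso, t2, t3, t4]
      ring
    · intro w hw w' hw'
      rw [hR1] at hw hw'
      obtain ⟨z, rfl⟩ := hw
      obtain ⟨z', rfl⟩ := hw'
      exact hψvan _ _ (by omega) z z'
    · intro i v hv
      constructor
      · intro h0
        rw [h0] at hv
        rw [hR00, sup_bot_eq] at hv
        obtain ⟨a, rfl⟩ := Submodule.mem_span_singleton.mp hv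
        rw [map_smul, hul, smul_zero]
      · intro hpos
        have hin : i.1 < n := i.2
        obtain ⟨y, hy, r, hr, rfl⟩ := Submodule.mem_sup.mp hv
        obtain ⟨a, rfl⟩ := Submodule.mem_span_singleton.mp hy
        rw [hR0] at hr
        obtain ⟨z, ⟨z₀, rfl⟩, rfl⟩ := hr
        simp only [hR1]
        have hcalc : u (a • l + ustar ((Y ^ (2 * n - i.1 - 1)) z₀))
            = (Y ^ (2 * n - i.1)) z₀ := by
          rw [map_add, map_smul, hul, smul_zero, zero_add]
          have h5 : u (ustar ((Y ^ (2 * n - i.1 - 1)) z₀))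
              = Y ((Y ^ (2 * n - i.1 - 1)) z₀) := rfl
          rw [h5, hpow1, show 2 * n - i.1 - 1 + 1 = 2 * n - i.1 by omega]
        rw [hcalc, show 2 * n - (i.1 - 1) - 1 = 2 * n - i.1 by omega]
        exact ⟨z₀, rfl⟩
    · intro i w hw
      apply Submodule.mem_sup_right
      rw [hR1] at hw
      rw [hR0]
      exact Submodule.mem_map_of_mem hw
  -- the two candidate points
  refine ⟨(fun i : Fin n => (ℂ ∙ l₁) ⊔ R0 i.1, fun j : Fin n => R1 j.1),
    (fun i : Fin n => (ℂ ∙ l₂) ⊔ R0 i.1, fun j : Fin n => R1 j.1), ?_, ?_⟩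
  · -- distinctness
    intro hAC
    have hfst := congrArg
      (fun P : (Fin n → Submodule ℂ V₀) × (Fin n → Submodule ℂ V₁) => P.1 ⟨0, hn⟩) hAC
    simp only at hfst
    rw [hR00, sup_bot_eq, sup_bot_eq] at hfst
    have hl2mem : l₂ ∈ (ℂ ∙ l₁) := by
      rw [hfst]
      exact Submodule.mem_span_singleton_self l₂
    obtain ⟨c, hc⟩ := Submodule.mem_span_singleton.mp hl2mem
    rw [← hc, map_smul, smul_eq_mul, hl₁iso, mul_zero] at hl₁l₂
    exact zero_ne_one hl₁l₂
  · -- the set equality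
    apply Set.Subset.antisymm
    · -- uniqueness
      intro EF hEF
      simp only [Set.mem_setOf_eq] at hEF
      obtain ⟨h1, h2, h3, h4, h5, h6, h7, h8⟩ := hEF
      have hn0 : 0 < n := hn
      have hE0ker : EF.1 ⟨0, hn0⟩ ≤ LinearMap.ker u := fun v hv =>
        LinearMap.mem_ker.mpr ((h7 ⟨0, hn0⟩ v hv).1 rfl)
      have hE0fr : finrank ℂ ↥(EF.1 ⟨0, hn0⟩) = 1 := by simpa using h1 ⟨0, hn0⟩
      obtain ⟨x, hxE, hx0⟩ := Submodule.exists_mem_ne_zero_of_ne_bot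
        (p := EF.1 ⟨0, hn0⟩) (by
          intro hbot
          rw [hbot, finrank_bot] at hE0fr
          omega)
      have hE0span : EF.1 ⟨0, hn0⟩ = (ℂ ∙ x) :=
        (Submodule.eq_of_le_of_finrank_le ((Submodule.span_singleton_le_iff_mem _ _).mpr hxE)
          (by rw [hE0fr, finrank_span_singleton hx0])).symm
      have hxtop : x ∈ EF.1 ⟨n - 1, by omega⟩ :=
        h3 ⟨0, hn0⟩ ⟨n - 1, by omega⟩ (by exact Fin.mk_le_mk.mpr (by omega)) hxE
      have hxiso : φ x x = 0 := h5 x hxtop x hxtop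
      have hxker : x ∈ LinearMap.ker u := hE0ker hxE
      obtain ⟨a, b, hab⟩ := hrep x hxker
      have hab0 : a * b = 0 := by
        have hcomp : φ x x = 2 * (a * b) := by
          rw [hab]
          simp only [map_add, map_smul, LinearMap.add_apply, LinearMap.smul_apply, smul_eq_mul,
            hl₁iso, hl₂iso, hl₁l₂, hl₂l₁]
          ring
        rw [hxiso] at hcomp
        linear_combination (-1/2 : ℂ) * hcomp
      have hbranch : EF.1 ⟨0, hn0⟩ = (ℂ ∙ l₁) ∨ EF.1 ⟨0, hn0⟩ = (ℂ ∙ l₂) := by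
        rcases mul_eq_zero.mp hab0 with ha | hb
        · right
          have hxl : x ∈ (ℂ ∙ l₂) := Submodule.mem_span_singleton.mpr
            ⟨b, by rw [hab, ha, zero_smul, zero_add]⟩
          rw [hE0span]
          exact Submodule.eq_of_le_of_finrank_le ((Submodule.span_singleton_le_iff_mem _ _).mpr hxl)
            (by rw [finrank_span_singleton hx0, finrank_span_singleton hl₂ne])
        · left
          have hxl : x ∈ (ℂ ∙ l₁) := Submodule.mem_span_singleton.mpr
            ⟨a, by rw [hab, hb, zero_smul, add_zero]⟩
          rw [hE0span]
          exact Submodule.eq_of_le_of_finrank_le ((Submodule.span_singleton_le_iff_mem _ _).mpr hxl)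
            (by rw [finrank_span_singleton hx0, finrank_span_singleton hl₁ne])
      -- the main induction : all the spaces are determined
      have main : ∀ l : V₀, l ∈ LinearMap.ker u → l ≠ 0 →
          (∀ k ∈ LinearMap.ker u, φ k l = 0 → k ∈ (ℂ ∙ l)) →
          EF.1 ⟨0, hn0⟩ = (ℂ ∙ l) →
          ∀ (j : ℕ) (hj : j < n), EF.1 ⟨j, hj⟩ = (ℂ ∙ l) ⊔ R0 j ∧ EF.2 ⟨j, hj⟩ = R1 j := by
        intro l hlK hl0 hkey hE0
        have hul : u l = 0 := LinearMap.mem_ker.mp hlK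
        have hltop : l ∈ EF.1 ⟨n - 1, by omega⟩ := by
          apply h3 ⟨0, hn0⟩ ⟨n - 1, by omega⟩ (by exact Fin.mk_le_mk.mpr (by omega))
          rw [hE0]
          exact Submodule.mem_span_singleton_self l
        have Fstep : ∀ (j : ℕ) (hj : j < n),
            EF.1 ⟨j, hj⟩ = (ℂ ∙ l) ⊔ R0 j → EF.2 ⟨j, hj⟩ = R1 j := by
          intro j hj hE
          have hsub : EF.2 ⟨j, hj⟩ ≤ ((ℂ ∙ l) ⊔ R0 j).comap ustar := by
            intro w hw
            simp only [Submodule.mem_comap]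
            rw [← hE]
            exact h8 ⟨j, hj⟩ w hw
          rw [hcomapUs l hlK j hj] at hsub
          exact Submodule.eq_of_le_of_finrank_le hsub
            (le_of_eq (by rw [hR1dim j hj, h2 ⟨j, hj⟩]))
        intro j
        induction j with
        | zero =>
          intro hj
          have hE : EF.1 ⟨0, hj⟩ = (ℂ ∙ l) ⊔ R0 0 := by
            rw [hR00, sup_bot_eq]
            exact hE0
          exact ⟨hE, Fstep 0 hj hE⟩
        | succ j ih =>
          intro hj
          have hjn : j < n := by omega
          obtain ⟨hEj, hFj⟩ := ih hjn
          have hEstep : EF.1 ⟨j + 1, hj⟩ = (ℂ ∙ l) ⊔ R0 (j + 1) := by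
            have hsub : EF.1 ⟨j + 1, hj⟩ ≤ (LinearMap.range (Y ^ (2 * n - (j + 1)))).comap u := by
              intro v hv
              simp only [Submodule.mem_comap]
              have hv2 := (h7 ⟨j + 1, hj⟩ v hv).2 (Nat.succ_pos j)
              have hv2' : u v ∈ EF.2 ⟨j, hjn⟩ := hv2
              rw [hFj, hR1] at hv2'
              rw [show 2 * n - (j + 1) = 2 * n - j - 1 by omega]
              exact hv2'
            rw [hcomapU j hj] at hsub
            have hEle : EF.1 ⟨j + 1, hj⟩ ≤ (ℂ ∙ l) ⊔ R0 (j + 1) := by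
              intro x' hx'
              obtain ⟨k, hk, r, hr, rfl⟩ := Submodule.mem_sup.mp (hsub hx')
              have hktop : k + r ∈ EF.1 ⟨n - 1, by omega⟩ :=
                h3 ⟨j + 1, hj⟩ ⟨n - 1, by omega⟩ (by exact Fin.mk_le_mk.mpr (by omega)) hx'
              have hxl : φ (k + r) l = 0 := h5 (k + r) hktop l hltop
              have hrl : φ r l = 0 := by
                rw [hR0] at hr
                obtain ⟨z, hz, rfl⟩ := hr
                exact horth z l hul
              have hkl : φ k l = 0 := by
                have hexp : φ (k + r) l = φ k l + φ r l := by
                  rw [map_add, LinearMap.add_apply]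
                rw [hexp, hrl, add_zero] at hxl
                exact hxl
              exact Submodule.mem_sup.mpr ⟨k, hkey k hk hkl, r, hr, rfl⟩
            exact Submodule.eq_of_le_of_finrank_le hEle
              (le_of_eq (by rw [hEdim l hl0 hlK (j + 1) hj, h1 ⟨j + 1, hj⟩]))
          exact ⟨hEstep, Fstep (j + 1) hj hEstep⟩
      simp only [Set.mem_insert_iff, Set.mem_singleton_iff]
      rcases hbranch with hb | hb
      · left
        have hm := main l₁ hl₁K hl₁ne hkey₁ hb
        have hfst : EF.1 = fun i : Fin n => (ℂ ∙ l₁) ⊔ R0 i.1 := by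
          funext i
          exact (hm i.1 i.2).1
        have hsnd : EF.2 = fun j : Fin n => R1 j.1 := by
          funext j
          exact (hm j.1 j.2).2
        exact Prod.ext hfst hsnd
      · right
        have hm := main l₂ hl₂K hl₂ne hkey₂ hb
        have hfst : EF.1 = fun i : Fin n => (ℂ ∙ l₂) ⊔ R0 i.1 := by
          funext i
          exact (hm i.1 i.2).1
        have hsnd : EF.2 = fun j : Fin n => R1 j.1 := by
          funext j
          exact (hm j.1 j.2).2
        exact Prod.ext hfst hsnd
    · -- both candidates belong to the fiber
      intro EF hEF
      simp only [Set.mem_insert_iff, Set.mem_singleton_iff] at hEF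
      simp only [Set.mem_setOf_eq]
      rcases hEF with rfl | rfl
      · obtain ⟨m1, m2, m3, m4, m5, m6, m7, m8⟩ := hmemb l₁ hl₁K hl₁ne hl₁iso
        exact ⟨m1, m2, m3, m4, m5, m6, m7, m8⟩
      · obtain ⟨m1, m2, m3, m4, m5, m6, m7, m8⟩ := hmemb l₂ hl₂K hl₂ne hl₂iso
        exact ⟨m1, m2, m3, m4, m5, m6, m7, m8⟩
end

section
/- Let X be an odd orthosymplectic endomorphism and let x ∈ V_ε (ε ∈ {0,1}) be a nonzero vector with X(x) = 0 and B(x,x) = 0. Then: x ∈ x^⊥; X(x^⊥) ⊆ x^⊥; B induces a well-defined nondegenerate bilinear form B̄ on W = x^⊥/ℂx; writing W_δ for the image of x^⊥ ∩ V_δ in W (δ ∈ {0,1}), one has W = W₀ ⊕ W₁ with W₀ and W₁ B̄-orthogonal, the restriction φ̄ of B̄ to W₀ symmetric and nondegenerate, the restriction ψ̄ of B̄ to W₁ alternating and nondegenerate, dim W_ε = dim V_ε − 2 and dim W_{1−ε} = dim V_{1−ε}; and the map Z : W → W induced by X satisfies Z(W₀) ⊆ W₁, Z(W₁) ⊆ W₀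 and φ̄(Z(w), v) = ψ̄(w, Z(v)) for all v ∈ W₀, w ∈ W₁ (so Z is again an odd orthosymplectic endomorphism for this induced structure). -/
set_option maxHeartbeats 1000000

/-- Let `X` be odd orthosymplectic and `x ∈ V_ε` a nonzero isotropic vector with
`X(x) = 0`. Then `x ∈ x^⊥`, `X(x^⊥) ⊆ x^⊥`, `B` induces a well-defined nondegenerate
bilinear form `B̄` on `W = x^⊥/ℂx`, `W` is the orthogonal direct sum of `W₀` and `W₁`
(the images of `x^⊥ ∩ V₀` and `x^⊥ ∩ V₁`), on which `B̄` restricts to a nondegenerate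
symmetric (resp. alternating) form, `dim W_ε = dim V_ε − 2`, `dim W_{1−ε} = dim V_{1−ε}`,
and the induced map `Z` on `W` is again an odd orthosymplectic endomorphism. -/
theorem quotient_perp_is_orthosymplectic
    (V₀ V₁ : Type) [AddCommGroup V₀] [Module ℂ V₀] [FiniteDimensional ℂ V₀]
    [AddCommGroup V₁] [Module ℂ V₁] [FiniteDimensional ℂ V₁]
    (φ : V₀ →ₗ[ℂ] V₀ →ₗ[ℂ] ℂ) (ψ : V₁ →ₗ[ℂ] V₁ →ₗ[ℂ] ℂ)
    (hφsymm : ∀ a b : V₀, φ a b = φ b a)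
    (hφnd : ∀ a : V₀, (∀ b : V₀, φ a b = 0) → a = 0)
    (hψalt : ∀ a : V₁, ψ a a = 0)
    (hψnd : ∀ a : V₁, (∀ b : V₁, ψ a b = 0) → a = 0)
    (u : V₀ →ₗ[ℂ] V₁) (ustar : V₁ →ₗ[ℂ] V₀)
    (hadj : ∀ (v : V₀) (w : V₁), φ (ustar w) v = ψ w (u v))
    (X : Module.End ℂ (V₀ × V₁))
    (hX : ∀ p : V₀ × V₁, X p = (ustar p.2, u p.1))
    (x : V₀ × V₁) (hx0 : x ≠ 0) (ε : Bool) (hxε : x ∈ Vgr V₀ V₁ ε)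
    (hXx : X x = 0) (hiso : Bform φ ψ x x = 0)
    (L : Submodule ℂ ↥(perp φ ψ x))
    (hL : L = Submodule.comap (perp φ ψ x).subtype (Submodule.span ℂ {x}))
    (W0 W1 : Submodule ℂ (↥(perp φ ψ x) ⧸ L))
    (hW0 : W0 =
      Submodule.map L.mkQ (Submodule.comap (perp φ ψ x).subtype (Vgr V₀ V₁ false)))
    (hW1 : W1 =
      Submodule.map L.mkQ (Submodule.comap (perp φ ψ x).subtype (Vgr V₀ V₁ true))) :
    x ∈ perp φ ψ x ∧
    (∀ z ∈ perp φ ψ x, X z ∈ perp φ ψ x) ∧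
    ∃ Bbar : (↥(perp φ ψ x) ⧸ L) →ₗ[ℂ] (↥(perp φ ψ x) ⧸ L) →ₗ[ℂ] ℂ,
      (∀ z w : ↥(perp φ ψ x), Bbar (L.mkQ z) (L.mkQ w) = Bform φ ψ ↑z ↑w) ∧
      (∀ p, (∀ q, Bbar p q = 0) → p = 0) ∧
      W0 ⊔ W1 = ⊤ ∧ W0 ⊓ W1 = ⊥ ∧
      (∀ p ∈ W0, ∀ q ∈ W1, Bbar p q = 0 ∧ Bbar q p = 0) ∧
      (∀ p ∈ W0, ∀ q ∈ W0, Bbar p q = Bbar q p) ∧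
      (∀ p ∈ W0, (∀ q ∈ W0, Bbar p q = 0) → p = 0) ∧
      (∀ q ∈ W1, Bbar q q = 0) ∧
      (∀ p ∈ W1, (∀ q ∈ W1, Bbar p q = 0) → p = 0) ∧
      Module.finrank ℂ ↥(if ε then W1 else W0) + 2
          = Module.finrank ℂ ↥(Vgr V₀ V₁ ε) ∧
      Module.finrank ℂ ↥(if ε then W0 else W1)
          = Module.finrank ℂ ↥(Vgr V₀ V₁ (!ε)) ∧
      ∃ Z : Module.End ℂ (↥(perp φ ψ x) ⧸ L),
        (∀ z w : ↥(perp φ ψ x), (w : V₀ × V₁) = X ↑z → Z (L.mkQ z) = L.mkQ w) ∧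
        Submodule.map Z W0 ≤ W1 ∧ Submodule.map Z W1 ≤ W0 ∧
        (∀ p ∈ W0, ∀ q ∈ W1, Bbar (Z q) p = Bbar q (Z p)) := by
  classical
  -- basic facts about x
  have hxor : x.1 = 0 ∨ x.2 = 0 := by
    cases ε <;> simp [Vgr, Submodule.mem_prod] at hxε
    · right; exact hxε
    · left; exact hxε
  have hXxc : ustar x.2 = 0 ∧ u x.1 = 0 := by
    have h := (hX x).symm.trans hXx
    exact ⟨congrArg Prod.fst h, congrArg Prod.snd h⟩
  have hmem : ∀ z : V₀ × V₁, z ∈ perp φ ψ x ↔ Bform φ ψ x z = 0 := by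
    intro z; simp [perp, Bform, LinearMap.mem_ker]
  have hψanti : ∀ a b : V₁, ψ a b = -ψ b a := by
    intro a b
    have h := hψalt (a + b)
    simp only [map_add, LinearMap.add_apply, hψalt] at h
    linear_combination h
  have hxP : x ∈ perp φ ψ x := (hmem x).mpr hiso
  have hXperp : ∀ z : V₀ × V₁, X z ∈ perp φ ψ x := by
    intro z
    rw [hmem, hX]
    show φ x.1 (ustar z.2) + ψ x.2 (u z.1) = 0
    rw [hφsymm x.1 (ustar z.2), hadj, hXxc.2, ← hadj, hXxc.1]
    simp
  -- first-slot nondegeneracy of B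
  have hBnd : ∀ d : V₀ × V₁, (∀ w : V₀ × V₁, Bform φ ψ d w = 0) → d = 0 := by
    intro d hd
    have h1 : d.1 = 0 := hφnd d.1 fun b => by simpa [Bform] using hd (b, 0)
    have h2 : d.2 = 0 := hψnd d.2 fun b => by simpa [Bform] using hd (0, b)
    exact Prod.ext_iff.mpr ⟨by simpa using h1, by simpa using h2⟩
  obtain ⟨y, hy⟩ : ∃ y : V₀ × V₁, Bform φ ψ x y ≠ 0 := by
    by_contra hcon
    push_neg at hcon
    exact hx0 (hBnd x hcon)
  -- linearity of Bform in each slot (as plain function identities)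
  have hBsub₁ : ∀ d e w : V₀ × V₁, Bform φ ψ (d - e) w = Bform φ ψ d w - Bform φ ψ e w := by
    intro d e w; simp [Bform, map_sub]; ring
  have hBsmul₁ : ∀ (c : ℂ) (d w : V₀ × V₁), Bform φ ψ (c • d) w = c * Bform φ ψ d w := by
    intro c d w; simp [Bform, map_smul, smul_eq_mul]; ring
  have hBsub₂ : ∀ d e w : V₀ × V₁, Bform φ ψ w (d - e) = Bform φ ψ w d - Bform φ ψ w e := by
    intro d e w; simp [Bform, map_sub]; ring
  have hBsmul₂ : ∀ (c : ℂ) (d w : V₀ × V₁), Bform φ ψ w (c • d) = c * Bform φ ψ w d := by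
    intro c d w; simp [Bform, map_smul, smul_eq_mul]; ring
  have hBzx : ∀ w : ↥(perp φ ψ x), Bform φ ψ (↑w) x = 0 := by
    intro w
    have hw := (hmem ↑w).mp w.2
    rcases hxor with h | h
    · simp only [Bform, h, map_zero, LinearMap.zero_apply, zero_add] at hw
      simp only [Bform, h, map_zero, zero_add]
      rw [hψanti, hw, neg_zero]
    · simp only [Bform, h, map_zero, LinearMap.zero_apply, add_zero] at hw
      simp only [Bform, h, map_zero, add_zero]
      rw [hφsymm]; exact hw
  -- the bilinear form on perp
  obtain ⟨Bp, hBp⟩ : ∃ Bp : ↥(perp φ ψ x) →ₗ[ℂ] ↥(perp φ ψ x) →ₗ[ℂ] ℂ,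
      ∀ z w : ↥(perp φ ψ x), Bp z w = Bform φ ψ ↑z ↑w := by
    refine ⟨LinearMap.mk₂ ℂ (fun z w => Bform φ ψ (↑z) (↑w)) ?_ ?_ ?_ ?_, fun z w => rfl⟩ <;>
      intros <;> simp [Bform, map_add, map_smul, smul_eq_mul] <;> ring
  have hspanL : ∀ z : ↥(perp φ ψ x), z ∈ L ↔ ∃ c : ℂ, c • x = (z : V₀ × V₁) := by
    intro z
    rw [hL, Submodule.mem_comap, Submodule.mem_span_singleton]
    rfl
  have hker1 : L ≤ LinearMap.ker Bp := by
    intro z hz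
    obtain ⟨c, hc⟩ := (hspanL z).mp hz
    rw [LinearMap.mem_ker]
    ext w
    have hw := (hmem ↑w).mp w.2
    simp only [hBp, LinearMap.zero_apply, ← hc, hBsmul₁, hw, mul_zero]
  have hker2 : L ≤ LinearMap.ker (L.liftQ Bp hker1).flip := by
    intro z hz
    obtain ⟨c, hc⟩ := (hspanL z).mp hz
    rw [LinearMap.mem_ker]
    ext w
    show ((L.liftQ Bp hker1).flip z) (L.mkQ w) = 0
    rw [LinearMap.flip_apply, Submodule.mkQ_apply, Submodule.liftQ_apply, hBp]
    rw [← hc, hBsmul₂, hBzx w, mul_zero]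
  obtain ⟨Bbar, hBbar⟩ : ∃ Bbar : (↥(perp φ ψ x) ⧸ L) →ₗ[ℂ] (↥(perp φ ψ x) ⧸ L) →ₗ[ℂ] ℂ,
      ∀ z w : ↥(perp φ ψ x), Bbar (L.mkQ z) (L.mkQ w) = Bform φ ψ ↑z ↑w := by
    refine ⟨(L.liftQ (L.liftQ Bp hker1).flip hker2).flip, fun z w => ?_⟩
    simp only [LinearMap.flip_apply, Submodule.mkQ_apply, Submodule.liftQ_apply]
    exact hBp z w
  -- membership characterizations
  have hW0mem : ∀ p, p ∈ W0 ↔ ∃ a : ↥(perp φ ψ x), (↑a : V₀ × V₁).2 = 0 ∧ L.mkQ a = p := by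
    intro p
    rw [hW0]
    constructor
    · intro hmp
      obtain ⟨a, ha, hae⟩ := Submodule.mem_map.mp hmp
      rw [Submodule.mem_comap] at ha
      have ha' : (↑a : V₀ × V₁) ∈ Submodule.prod (⊤ : Submodule ℂ V₀) (⊥ : Submodule ℂ V₁) := ha
      exact ⟨a, ha'.2, hae⟩
    · rintro ⟨a, ha, rfl⟩
      refine Submodule.mem_map.mpr ⟨a, Submodule.mem_comap.mpr ?_, rfl⟩
      show (↑a : V₀ × V₁) ∈ Submodule.prod (⊤ : Submodule ℂ V₀) (⊥ : Submodule ℂ V₁)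
      exact Submodule.mem_prod.mpr ⟨trivial, ha⟩
  have hW1mem : ∀ p, p ∈ W1 ↔ ∃ a : ↥(perp φ ψ x), (↑a : V₀ × V₁).1 = 0 ∧ L.mkQ a = p := by
    intro p
    rw [hW1]
    constructor
    · intro hmp
      obtain ⟨a, ha, hae⟩ := Submodule.mem_map.mp hmp
      rw [Submodule.mem_comap] at ha
      have ha' : (↑a : V₀ × V₁) ∈ Submodule.prod (⊥ : Submodule ℂ V₀) (⊤ : Submodule ℂ V₁) := ha
      exact ⟨a, ha'.1, hae⟩
    · rintro ⟨a, ha, rfl⟩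
      refine Submodule.mem_map.mpr ⟨a, Submodule.mem_comap.mpr ?_, rfl⟩
      show (↑a : V₀ × V₁) ∈ Submodule.prod (⊥ : Submodule ℂ V₀) (⊤ : Submodule ℂ V₁)
      exact Submodule.mem_prod.mpr ⟨ha, trivial⟩
  -- nondegeneracy of Bbar
  have hndQ : ∀ p, (∀ q, Bbar p q = 0) → p = 0 := by
    intro p hp
    obtain ⟨z, rfl⟩ := L.mkQ_surjective p
    have hPz : ∀ w : V₀ × V₁, w ∈ perp φ ψ x → Bform φ ψ (↑z) w = 0 := by
      intro w hw
      have := hp (L.mkQ ⟨w, hw⟩)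
      rwa [hBbar] at this
    have hkey : ∀ w : V₀ × V₁,
        Bform φ ψ (↑z) w = (Bform φ ψ (↑z) y / Bform φ ψ x y) * Bform φ ψ x w := by
      intro w
      have hwmem : w - (Bform φ ψ x w / Bform φ ψ x y) • y ∈ perp φ ψ x := by
        rw [hmem, hBsub₂, hBsmul₂]
        field_simp
        ring
      have h2 := hPz _ hwmem
      rw [hBsub₂, hBsmul₂, sub_eq_zero] at h2
      rw [h2]
      field_simp
    have hzc : (↑z : V₀ × V₁) = (Bform φ ψ (↑z) y / Bform φ ψ x y) • x := by
      have hd : ∀ w : V₀ × V₁,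
          Bform φ ψ ((↑z : V₀ × V₁) - (Bform φ ψ (↑z) y / Bform φ ψ x y) • x) w = 0 := by
        intro w
        rw [hBsub₁, hBsmul₁, hkey w, sub_self]
      exact sub_eq_zero.mp (hBnd _ hd)
    have hzL : z ∈ L := (hspanL z).mpr ⟨_, hzc.symm⟩
    rw [Submodule.mkQ_apply, Submodule.Quotient.mk_eq_zero]
    exact hzL
  -- sup
  have hsplit : ∀ z : V₀ × V₁, z ∈ perp φ ψ x →
      ((z.1, 0) : V₀ × V₁) ∈ perp φ ψ x ∧ ((0, z.2) : V₀ × V₁) ∈ perp φ ψ x := by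
    intro z hz
    rw [hmem] at hz
    constructor <;> rw [hmem] <;> rcases hxor with h | h <;>
      simp only [Bform, h, map_zero, LinearMap.zero_apply, zero_add, add_zero] at hz ⊢ <;>
      simp [hz]
  have hsup : W0 ⊔ W1 = ⊤ := by
    rw [eq_top_iff]
    rintro p -
    obtain ⟨z, rfl⟩ := L.mkQ_surjective p
    obtain ⟨h1, h2⟩ := hsplit ↑z z.2
    apply Submodule.mem_sup.mpr
    refine ⟨L.mkQ ⟨((↑z : V₀ × V₁).1, 0), h1⟩, (hW0mem _).mpr ⟨_, rfl, rfl⟩,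
      L.mkQ ⟨(0, (↑z : V₀ × V₁).2), h2⟩, (hW1mem _).mpr ⟨_, rfl, rfl⟩, ?_⟩
    rw [← map_add]
    congr 1
    apply Subtype.ext
    simp
  -- inf
  have hinf : W0 ⊓ W1 = ⊥ := by
    rw [eq_bot_iff]
    intro p hp
    obtain ⟨hp0, hp1⟩ := Submodule.mem_inf.mp hp
    obtain ⟨a, ha, hpa⟩ := (hW0mem p).mp hp0
    obtain ⟨b, hb, hpb⟩ := (hW1mem p).mp hp1
    have hq : L.mkQ a = L.mkQ b := hpa.trans hpb.symm
    rw [Submodule.mkQ_apply, Submodule.mkQ_apply, Submodule.Quotient.eq] at hq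
    obtain ⟨c, hc⟩ := (hspanL (a - b)).mp hq
    have hc1 : c • x.1 = (↑a : V₀ × V₁).1 - (↑b : V₀ × V₁).1 := congrArg Prod.fst hc
    have hc2 : c • x.2 = (↑a : V₀ × V₁).2 - (↑b : V₀ × V₁).2 := congrArg Prod.snd hc
    rw [Submodule.mem_bot]
    rcases hxor with h | h
    · rw [h, smul_zero, hb, sub_zero] at hc1
      have ha0 : a = 0 := Subtype.ext (Prod.ext_iff.mpr ⟨by simpa using hc1.symm, by simpa using ha⟩)
      rw [← hpa, ha0, map_zero]
    · rw [h, smul_zero, ha, zero_sub] at hc2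
      have hb0 : b = 0 := Subtype.ext
        (Prod.ext_iff.mpr ⟨by simpa using hb, by simpa using neg_eq_zero.mp hc2.symm⟩)
      rw [← hpb, hb0, map_zero]
  -- orthogonality of W0 and W1
  have horth : ∀ p ∈ W0, ∀ q ∈ W1, Bbar p q = 0 ∧ Bbar q p = 0 := by
    intro p hp q hq
    obtain ⟨a, ha, rfl⟩ := (hW0mem p).mp hp
    obtain ⟨b, hb, rfl⟩ := (hW1mem q).mp hq
    constructor <;> rw [hBbar] <;> simp [Bform, ha, hb]
  -- symmetry on W0
  have hsymW0 : ∀ p ∈ W0, ∀ q ∈ W0, Bbar p q = Bbar q p := by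
    intro p hp q hq
    obtain ⟨a, ha, rfl⟩ := (hW0mem p).mp hp
    obtain ⟨b, hb, rfl⟩ := (hW0mem q).mp hq
    rw [hBbar, hBbar]
    simp only [Bform, ha, hb, map_zero, LinearMap.zero_apply, add_zero]
    exact hφsymm _ _
  -- nondegeneracy on W0
  have hndW0 : ∀ p ∈ W0, (∀ q ∈ W0, Bbar p q = 0) → p = 0 := by
    intro p hp h0
    refine hndQ p fun q => ?_
    have hqtop : q ∈ W0 ⊔ W1 := by rw [hsup]; trivial
    obtain ⟨q0, hq0, q1, hq1, rfl⟩ := Submodule.mem_sup.mp hqtop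
    rw [map_add, h0 q0 hq0, (horth p hp q1 hq1).1, add_zero]
  -- alternating on W1
  have haltW1 : ∀ q ∈ W1, Bbar q q = 0 := by
    intro q hq
    obtain ⟨b, hb, rfl⟩ := (hW1mem q).mp hq
    rw [hBbar]
    simp [Bform, hb, hψalt]
  -- nondegeneracy on W1
  have hndW1 : ∀ p ∈ W1, (∀ q ∈ W1, Bbar p q = 0) → p = 0 := by
    intro p hp h0
    refine hndQ p fun q => ?_
    have hqtop : q ∈ W0 ⊔ W1 := by rw [hsup]; trivial
    obtain ⟨q0, hq0, q1, hq1, rfl⟩ := Submodule.mem_sup.mp hqtop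
    rw [map_add, h0 q1 hq1, (horth q0 hq0 p hp).2, add_zero]
  -- dimension bookkeeping
  have hLrank : Module.finrank ℂ ↥L = 1 := by
    have hLs : L = Submodule.span ℂ {(⟨x, hxP⟩ : ↥(perp φ ψ x))} := by
      ext z
      rw [hspanL, Submodule.mem_span_singleton]
      constructor
      · rintro ⟨c, hc⟩
        exact ⟨c, Subtype.ext (by simpa using hc)⟩
      · rintro ⟨c, hc⟩
        exact ⟨c, by rw [← hc]; rfl⟩
    rw [hLs]
    exact finrank_span_singleton (fun h => hx0 (congrArg Subtype.val h))
  have hQrank := Submodule.finrank_quotient_add_finrank L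
  have hPrank : Module.finrank ℂ ↥(perp φ ψ x) + 1
      = Module.finrank ℂ V₀ + Module.finrank ℂ V₁ := by
    set g := ((φ x.1).comp (LinearMap.fst ℂ V₀ V₁) + (ψ x.2).comp (LinearMap.snd ℂ V₀ V₁))
      with hgdef
    have hgy : g y = Bform φ ψ x y := by simp [hgdef, Bform]
    have hrange : LinearMap.range g = ⊤ := by
      rw [LinearMap.range_eq_top]
      intro r
      refine ⟨(r / g y) • y, ?_⟩
      rw [map_smul, smul_eq_mul, hgy]
      field_simp
    have hr := LinearMap.finrank_range_add_finrank_ker g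
    rw [hrange, finrank_top, Module.finrank_prod] at hr
    have hker : LinearMap.ker g = perp φ ψ x := rfl
    rw [hker] at hr
    rw [Module.finrank_self] at hr
    omega
  have hVgrF : Module.finrank ℂ ↥(Vgr V₀ V₁ false) = Module.finrank ℂ V₀ := by
    have h : Vgr V₀ V₁ false = LinearMap.range (LinearMap.inl ℂ V₀ V₁) := by
      ext z
      show z ∈ Submodule.prod (⊤ : Submodule ℂ V₀) (⊥ : Submodule ℂ V₁) ↔ _
      rw [Submodule.mem_prod, LinearMap.mem_range]
      constructor
      · rintro ⟨-, h2⟩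
        exact ⟨z.1, Prod.ext_iff.mpr ⟨rfl, by simpa using h2.symm⟩⟩
      · rintro ⟨w, rfl⟩
        exact ⟨trivial, rfl⟩
    rw [h, LinearMap.finrank_range_of_inj LinearMap.inl_injective]
  have hVgrT : Module.finrank ℂ ↥(Vgr V₀ V₁ true) = Module.finrank ℂ V₁ := by
    have h : Vgr V₀ V₁ true = LinearMap.range (LinearMap.inr ℂ V₀ V₁) := by
      ext z
      show z ∈ Submodule.prod (⊥ : Submodule ℂ V₀) (⊤ : Submodule ℂ V₁) ↔ _
      rw [Submodule.mem_prod, LinearMap.mem_range]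
      constructor
      · rintro ⟨h1, -⟩
        exact ⟨z.2, Prod.ext_iff.mpr ⟨by simpa using h1.symm, rfl⟩⟩
      · rintro ⟨w, rfl⟩
        exact ⟨rfl, trivial⟩
    rw [h, LinearMap.finrank_range_of_inj LinearMap.inr_injective]
  have hWsum : Module.finrank ℂ ↥W0 + Module.finrank ℂ ↥W1
      = Module.finrank ℂ (↥(perp φ ψ x) ⧸ L) := by
    have h := Submodule.finrank_sup_add_finrank_inf_eq W0 W1
    rw [hsup, hinf, finrank_top, finrank_bot] at h
    omega
  -- dimension of the graded pieces of the quotient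
  have hdim1 : Module.finrank ℂ ↥(if ε then W1 else W0) + 2 = Module.finrank ℂ ↥(Vgr V₀ V₁ ε) ∧
      Module.finrank ℂ ↥(if ε then W0 else W1) = Module.finrank ℂ ↥(Vgr V₀ V₁ (!ε)) := by
    cases ε with
    | false =>
      have hx2 : x.2 = 0 := (Submodule.mem_bot ℂ).mp
        ((Submodule.mem_prod.mp (show x ∈ Submodule.prod (⊤ : Submodule ℂ V₀)
          (⊥ : Submodule ℂ V₁) from hxε)).2)
      have hsub : ∀ w : V₁, ((0, w) : V₀ × V₁) ∈ perp φ ψ x := by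
        intro w
        rw [hmem]
        simp [Bform, hx2]
      set e : V₁ →ₗ[ℂ] ↥(perp φ ψ x) :=
        LinearMap.codRestrict (perp φ ψ x) (LinearMap.inr ℂ V₀ V₁) hsub with hedef
      have hecoe : ∀ w : V₁, (↑(e w) : V₀ × V₁) = (0, w) := fun w => rfl
      set j : V₁ →ₗ[ℂ] (↥(perp φ ψ x) ⧸ L) := L.mkQ.comp e with hjdef
      have hjinj : Function.Injective j := by
        rw [← LinearMap.ker_eq_bot, eq_bot_iff]
        intro w hw
        rw [LinearMap.mem_ker, hjdef, LinearMap.comp_apply, Submodule.mkQ_apply,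
          Submodule.Quotient.mk_eq_zero] at hw
        obtain ⟨c, hc⟩ := (hspanL _).mp hw
        rw [hecoe] at hc
        have h2 : c • x.2 = w := congrArg Prod.snd hc
        rw [hx2, smul_zero] at h2
        rw [Submodule.mem_bot, ← h2]
      have hjrange : LinearMap.range j = W1 := by
        ext q
        rw [LinearMap.mem_range, hW1mem]
        constructor
        · rintro ⟨w, rfl⟩
          exact ⟨e w, by rw [hecoe], rfl⟩
        · rintro ⟨a, ha, rfl⟩
          refine ⟨(↑a : V₀ × V₁).2, ?_⟩
          show L.mkQ (e _) = L.mkQ a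
          congr 1
          apply Subtype.ext
          rw [hecoe]
          exact Prod.ext_iff.mpr ⟨ha.symm, rfl⟩
      have hW1rank : Module.finrank ℂ ↥W1 = Module.finrank ℂ V₁ := by
        rw [← hjrange, LinearMap.finrank_range_of_inj hjinj]
      constructor
      · show Module.finrank ℂ ↥W0 + 2 = _
        rw [hVgrF]
        omega
      · show Module.finrank ℂ ↥W1 = _
        rw [show (!false) = true from rfl, hVgrT]
        exact hW1rank
    | true =>
      have hx1 : x.1 = 0 := (Submodule.mem_bot ℂ).mp
        ((Submodule.mem_prod.mp (show x ∈ Submodule.prod (⊥ : Submodule ℂ V₀)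
          (⊤ : Submodule ℂ V₁) from hxε)).1)
      have hsub : ∀ v : V₀, ((v, 0) : V₀ × V₁) ∈ perp φ ψ x := by
        intro v
        rw [hmem]
        simp [Bform, hx1]
      set e : V₀ →ₗ[ℂ] ↥(perp φ ψ x) :=
        LinearMap.codRestrict (perp φ ψ x) (LinearMap.inl ℂ V₀ V₁) hsub with hedef
      have hecoe : ∀ v : V₀, (↑(e v) : V₀ × V₁) = (v, 0) := fun v => rfl
      set j : V₀ →ₗ[ℂ] (↥(perp φ ψ x) ⧸ L) := L.mkQ.comp e with hjdef
      have hjinj : Function.Injective j := by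
        rw [← LinearMap.ker_eq_bot, eq_bot_iff]
        intro v hv
        rw [LinearMap.mem_ker, hjdef, LinearMap.comp_apply, Submodule.mkQ_apply,
          Submodule.Quotient.mk_eq_zero] at hv
        obtain ⟨c, hc⟩ := (hspanL _).mp hv
        rw [hecoe] at hc
        have h1 : c • x.1 = v := congrArg Prod.fst hc
        rw [hx1, smul_zero] at h1
        rw [Submodule.mem_bot, ← h1]
      have hjrange : LinearMap.range j = W0 := by
        ext q
        rw [LinearMap.mem_range, hW0mem]
        constructor
        · rintro ⟨v, rfl⟩
          exact ⟨e v, by rw [hecoe], rfl⟩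
        · rintro ⟨a, ha, rfl⟩
          refine ⟨(↑a : V₀ × V₁).1, ?_⟩
          show L.mkQ (e _) = L.mkQ a
          congr 1
          apply Subtype.ext
          rw [hecoe]
          exact Prod.ext_iff.mpr ⟨rfl, ha.symm⟩
      have hW0rank : Module.finrank ℂ ↥W0 = Module.finrank ℂ V₀ := by
        rw [← hjrange, LinearMap.finrank_range_of_inj hjinj]
      constructor
      · show Module.finrank ℂ ↥W1 + 2 = _
        rw [hVgrT]
        omega
      · show Module.finrank ℂ ↥W0 = _
        rw [show (!true) = false from rfl, hVgrF]
        exact hW0rank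
  -- the induced endomorphism Z
  obtain ⟨Z, hZ⟩ : ∃ Z : Module.End ℂ (↥(perp φ ψ x) ⧸ L),
      ∀ z : ↥(perp φ ψ x), Z (L.mkQ z) = L.mkQ ⟨X ↑z, hXperp ↑z⟩ := by
    have hXr : ∀ z : ↥(perp φ ψ x), X ((perp φ ψ x).subtype z) ∈ perp φ ψ x := fun z =>
      hXperp ↑z
    set Xr : ↥(perp φ ψ x) →ₗ[ℂ] ↥(perp φ ψ x) :=
      LinearMap.codRestrict (perp φ ψ x) (X.comp (perp φ ψ x).subtype) hXr with hXrdef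
    have hkerZ : L ≤ LinearMap.ker (L.mkQ.comp Xr) := by
      intro z hz
      obtain ⟨c, hc⟩ := (hspanL z).mp hz
      rw [LinearMap.mem_ker, LinearMap.comp_apply]
      have hXr0 : Xr z = 0 := by
        apply Subtype.ext
        show X ↑z = 0
        rw [← hc, map_smul, hXx, smul_zero]
      rw [hXr0, map_zero]
    refine ⟨L.liftQ (L.mkQ.comp Xr) hkerZ, fun z => ?_⟩
    rw [Submodule.mkQ_apply, Submodule.liftQ_apply, LinearMap.comp_apply]
    rfl
  refine ⟨hxP, fun z _ => hXperp z, Bbar, hBbar, hndQ, hsup, hinf, horth, hsymW0, hndW0, haltW1,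
    hndW1, hdim1.1, hdim1.2, Z, ?_, ?_, ?_, ?_⟩
  · intro z w hw
    rw [hZ z]
    congr 1
    exact Subtype.ext hw.symm
  · intro q hq
    obtain ⟨p, hp, rfl⟩ := Submodule.mem_map.mp hq
    obtain ⟨a, ha, rfl⟩ := (hW0mem p).mp hp
    rw [hZ]
    refine (hW1mem _).mpr ⟨⟨X ↑a, hXperp ↑a⟩, ?_, rfl⟩
    show (X (↑a : V₀ × V₁)).1 = 0
    rw [hX]
    show ustar (↑a : V₀ × V₁).2 = 0
    rw [ha, map_zero]
  · intro q hq
    obtain ⟨p, hp, rfl⟩ := Submodule.mem_map.mp hq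
    obtain ⟨a, ha, rfl⟩ := (hW1mem p).mp hp
    rw [hZ]
    refine (hW0mem _).mpr ⟨⟨X ↑a, hXperp ↑a⟩, ?_, rfl⟩
    show (X (↑a : V₀ × V₁)).2 = 0
    rw [hX]
    show u (↑a : V₀ × V₁).1 = 0
    rw [ha, map_zero]
  · intro p hp q hq
    obtain ⟨a, ha, rfl⟩ := (hW0mem p).mp hp
    obtain ⟨b, hb, rfl⟩ := (hW1mem q).mp hq
    rw [hZ, hZ, hBbar, hBbar]
    show Bform φ ψ (X ↑b) ↑a = Bform φ ψ ↑b (X ↑a)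
    rw [hX, hX]
    show φ (ustar (↑b : V₀ × V₁).2) (↑a : V₀ × V₁).1 + ψ (u (↑b : V₀ × V₁).1) (↑a : V₀ × V₁).2
      = φ (↑b : V₀ × V₁).1 (ustar (↑a : V₀ × V₁).2) + ψ (↑b : V₀ × V₁).2 (u (↑a : V₀ × V₁).1)
    rw [ha, hb, hadj]
    simp
end

section
/- In the quotient setting, the value B(x,y) does not depend on the choice of y with X^{k−1}(y) = x, and the following dimension formulas hold. For every integer a with 1 ≤ a ≤ k−2: if a is odd then dim(Ker Z^a ∩ W_ε) = dim(Ker X^a ∩ V_ε) − 1 and dim(Ker Z^a ∩ W_{1−ε}) = dim(Ker X^a ∩ V_{1−ε}) + 1, while if a is even both dimensions are unchanged: dim(Ker Z^a ∩ W_δ) = dim(Ker X^a ∩ V_δ) for δ = ε, 1−ε. For a = k−1 ≥ 1: if B(x,y) ≠ 0 then dim(Ker Z^{k−1} ∩ W_ε) = dim(Ker X^{k−1} ∩ V_ε) − 1 and dim(Ker Z^{k−1} ∩ W_{1−ε}) = dim(Ker X^{k−1} ∩ V_{1−ε}); if B(x,y) = 0 and k−1 is odd then dim(Ker Z^{k−1}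 ∩ W_ε) = dim(Ker X^{k−1} ∩ V_ε) − 1 and dim(Ker Z^{k−1} ∩ W_{1−ε}) = dim(Ker X^{k−1} ∩ V_{1−ε}) + 1; if B(x,y) = 0 and k−1 is even then both dimensions are unchanged. -/
set_option maxHeartbeats 1600000 in
set_option synthInstance.maxHeartbeats 400000 in
/-- In the quotient setting (`W = x^⊥/ℂx`, `Z` induced by `X`): `B(x,y)` is independent
of the choice of `y` with `X^{k−1}(y) = x`, and for `1 ≤ a ≤ k−2` (according to the
parity of `a`) and for `a = k−1 ≥ 1` (according to whether `B(x,y)` vanishes and the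
parity of `k−1`), the dimensions `dim(Ker Z^a ∩ W_δ)` are as stated. -/
theorem dim_ker_pow_quotient_of_lt
    (V₀ V₁ : Type) [AddCommGroup V₀] [Module ℂ V₀] [FiniteDimensional ℂ V₀]
    [AddCommGroup V₁] [Module ℂ V₁] [FiniteDimensional ℂ V₁]
    (φ : V₀ →ₗ[ℂ] V₀ →ₗ[ℂ] ℂ) (ψ : V₁ →ₗ[ℂ] V₁ →ₗ[ℂ] ℂ)
    (hφsymm : ∀ a b : V₀, φ a b = φ b a)
    (hφnd : ∀ a : V₀, (∀ b : V₀, φ a b = 0) → a = 0)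
    (hψalt : ∀ a : V₁, ψ a a = 0)
    (hψnd : ∀ a : V₁, (∀ b : V₁, ψ a b = 0) → a = 0)
    (u : V₀ →ₗ[ℂ] V₁) (ustar : V₁ →ₗ[ℂ] V₀)
    (hadj : ∀ (v : V₀) (w : V₁), φ (ustar w) v = ψ w (u v))
    (X : Module.End ℂ (V₀ × V₁))
    (hX : ∀ p : V₀ × V₁, X p = (ustar p.2, u p.1))
    (k : ℕ) (hk : 1 ≤ k) (y x : V₀ × V₁) (hxy : x = (X ^ (k - 1)) y)
    (hXx : X x = 0) (hxim : x ∉ LinearMap.range (X ^ k))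
    (ε : Bool) (hxε : x ∈ Vgr V₀ V₁ ε) (hiso : Bform φ ψ x x = 0)
    (L : Submodule ℂ ↥(perp φ ψ x))
    (hL : L = Submodule.comap (perp φ ψ x).subtype (Submodule.span ℂ {x}))
    (Wg : Bool → Submodule ℂ (↥(perp φ ψ x) ⧸ L))
    (hWg : ∀ δ : Bool, Wg δ =
      Submodule.map L.mkQ (Submodule.comap (perp φ ψ x).subtype (Vgr V₀ V₁ δ)))
    (Z : Module.End ℂ (↥(perp φ ψ x) ⧸ L))
    (hZ : ∀ z w : ↥(perp φ ψ x), (w : V₀ × V₁) = X ↑z → Z (L.mkQ z) = L.mkQ w)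
    :
    (∀ y' : V₀ × V₁, (X ^ (k - 1)) y' = x → Bform φ ψ x y' = Bform φ ψ x y) ∧
    (∀ a : ℕ, 1 ≤ a → a ≤ k - 2 →
      (Odd a →
        Module.finrank ℂ ↥(LinearMap.ker (Z ^ a) ⊓ Wg ε) + 1
            = Module.finrank ℂ ↥(LinearMap.ker (X ^ a) ⊓ Vgr V₀ V₁ ε) ∧
        Module.finrank ℂ ↥(LinearMap.ker (Z ^ a) ⊓ Wg (!ε))
            = Module.finrank ℂ ↥(LinearMap.ker (X ^ a) ⊓ Vgr V₀ V₁ (!ε)) + 1) ∧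
      (Even a →
        Module.finrank ℂ ↥(LinearMap.ker (Z ^ a) ⊓ Wg ε)
            = Module.finrank ℂ ↥(LinearMap.ker (X ^ a) ⊓ Vgr V₀ V₁ ε) ∧
        Module.finrank ℂ ↥(LinearMap.ker (Z ^ a) ⊓ Wg (!ε))
            = Module.finrank ℂ ↥(LinearMap.ker (X ^ a) ⊓ Vgr V₀ V₁ (!ε)))) ∧
    (2 ≤ k → Bform φ ψ x y ≠ 0 →
      Module.finrank ℂ ↥(LinearMap.ker (Z ^ (k - 1)) ⊓ Wg ε) + 1
          = Module.finrank ℂ ↥(LinearMap.ker (X ^ (k - 1)) ⊓ Vgr V₀ V₁ ε) ∧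
      Module.finrank ℂ ↥(LinearMap.ker (Z ^ (k - 1)) ⊓ Wg (!ε))
          = Module.finrank ℂ ↥(LinearMap.ker (X ^ (k - 1)) ⊓ Vgr V₀ V₁ (!ε))) ∧
    (2 ≤ k → Bform φ ψ x y = 0 → Odd (k - 1) →
      Module.finrank ℂ ↥(LinearMap.ker (Z ^ (k - 1)) ⊓ Wg ε) + 1
          = Module.finrank ℂ ↥(LinearMap.ker (X ^ (k - 1)) ⊓ Vgr V₀ V₁ ε) ∧
      Module.finrank ℂ ↥(LinearMap.ker (Z ^ (k - 1)) ⊓ Wg (!ε))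
          = Module.finrank ℂ ↥(LinearMap.ker (X ^ (k - 1)) ⊓ Vgr V₀ V₁ (!ε)) + 1) ∧
    (2 ≤ k → Bform φ ψ x y = 0 → Even (k - 1) →
      Module.finrank ℂ ↥(LinearMap.ker (Z ^ (k - 1)) ⊓ Wg ε)
          = Module.finrank ℂ ↥(LinearMap.ker (X ^ (k - 1)) ⊓ Vgr V₀ V₁ ε) ∧
      Module.finrank ℂ ↥(LinearMap.ker (Z ^ (k - 1)) ⊓ Wg (!ε))
          = Module.finrank ℂ ↥(LinearMap.ker (X ^ (k - 1)) ⊓ Vgr V₀ V₁ (!ε))) := by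
  
  classical
  have hB0r : ∀ p : V₀ × V₁, Bform φ ψ p 0 = 0 := by intro p; simp [Bform]
  have hBsub : ∀ p q r : V₀ × V₁, Bform φ ψ p (q - r) = Bform φ ψ p q - Bform φ ψ p r := by
    intro p q r
    simp only [Bform, Prod.fst_sub, Prod.snd_sub, map_sub]
    ring
  have hBsmul : ∀ (c : ℂ) (p q : V₀ × V₁), Bform φ ψ (c • p) q = c * Bform φ ψ p q := by
    intro c p q
    simp only [Bform, Prod.smul_fst, Prod.smul_snd, map_smul, LinearMap.smul_apply,
      smul_eq_mul]
    ring
  have hBsmul2 : ∀ (c : ℂ) (p q : V₀ × V₁), Bform φ ψ p (c • q) = c * Bform φ ψ p q := by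
    intro c p q
    simp only [Bform, Prod.smul_fst, Prod.smul_snd, map_smul, smul_eq_mul]
    ring
  have hanti : ∀ a b : V₁, ψ a b = -ψ b a := by
    intro a b
    have h := hψalt (a + b)
    simp only [map_add, LinearMap.add_apply] at h
    linear_combination h - hψalt a - hψalt b
  have hx0 : x ≠ 0 := by
    intro h
    apply hxim
    rw [h]
    exact (LinearMap.range (X ^ k)).zero_mem
  set S : Module.End ℂ (V₀ × V₁) := LinearMap.prodMap LinearMap.id (-LinearMap.id) with hSdef
  have hSapp : ∀ p : V₀ × V₁, S p = (p.1, -p.2) := by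
    intro p; simp [hSdef]
  have hB1 : ∀ p q : V₀ × V₁, Bform φ ψ (X p) q = -Bform φ ψ (S p) (X q) := by
    intro p q
    rw [hX q, hX p, hSapp p]
    simp only [Bform, map_neg, LinearMap.neg_apply]
    linear_combination hadj q.1 p.2 + hφsymm p.1 (ustar q.2) + hadj p.1 q.2 + hanti (u p.1) q.2
  have hXS : ∀ p : V₀ × V₁, X (S p) = -(S (X p)) := by
    intro p
    rw [hSapp, hX p, hX, hSapp]
    simp [Prod.ext_iff]
  have hSX : ∀ (m : ℕ) (p : V₀ × V₁), (S ^ m) (X p) = ((-1 : ℂ) ^ m) • (X ((S ^ m) p)) := by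
    intro m
    induction m with
    | zero => intro p; simp
    | succ m ih =>
      intro p
      rw [pow_succ, Module.End.mul_apply]
      have h1 : S (X p) = -(X (S p)) := by rw [hXS p, neg_neg]
      rw [h1, map_neg, ih (S p), Module.End.mul_apply, pow_succ, mul_smul, neg_one_smul, smul_neg]
  have hScomm : ∀ (T : Module.End ℂ (V₀ × V₁)) (m : ℕ) (p : V₀ × V₁),
      T ((T ^ m) p) = (T ^ m) (T p) := by
    intro T m p
    rw [← Module.End.mul_apply, ← Module.End.mul_apply, ← pow_succ', ← pow_succ]
  have hiter : ∀ m : ℕ, ∃ c : ℂ, c ≠ 0 ∧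
      ∀ p q : V₀ × V₁, Bform φ ψ ((X ^ m) p) q = c * Bform φ ψ ((S ^ m) p) ((X ^ m) q) := by
    intro m
    induction m with
    | zero => exact ⟨1, one_ne_zero, by intro p q; simp only [pow_zero, Module.End.one_apply, one_mul]⟩
    | succ m ih =>
      obtain ⟨c, hc, hcB⟩ := ih
      refine ⟨c * (-1) ^ (m + 1), by simp [hc], ?_⟩
      intro p q
      rw [pow_succ X m, pow_succ S m]
      simp only [Module.End.mul_apply]
      rw [hcB (X p) q, hSX m p, hBsmul, hB1, hScomm S m p, hScomm X m q, pow_succ]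
      ring
  have hmemF : ∀ p : V₀ × V₁, p ∈ Vgr V₀ V₁ false ↔ p.2 = 0 := by
    intro p; simp [Vgr, Submodule.mem_prod]
  have hmemT : ∀ p : V₀ × V₁, p ∈ Vgr V₀ V₁ true ↔ p.1 = 0 := by
    intro p; simp [Vgr, Submodule.mem_prod]
  have hgrinf : ∀ (δ : Bool) (z : V₀ × V₁), z ∈ Vgr V₀ V₁ δ → z ∈ Vgr V₀ V₁ (!δ) → z = 0 := by
    intro δ z h1 h2
    have h12 : z.1 = 0 ∧ z.2 = 0 := by
      cases δ
      · exact ⟨(hmemT z).1 h2, (hmemF z).1 h1⟩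
      · exact ⟨(hmemT z).1 h1, (hmemF z).1 h2⟩
    rw [Prod.ext_iff]
    simpa using h12
  have hcomp : ∀ (δ : Bool) (p : V₀ × V₁), ∃ p₀ p₁ : V₀ × V₁,
      p = p₀ + p₁ ∧ p₀ ∈ Vgr V₀ V₁ δ ∧ p₁ ∈ Vgr V₀ V₁ (!δ) := by
    intro δ p
    cases δ
    · exact ⟨(p.1, 0), (0, p.2), by simp [Prod.ext_iff], (hmemF _).2 rfl, (hmemT _).2 rfl⟩
    · exact ⟨(0, p.2), (p.1, 0), by simp [Prod.ext_iff], (hmemT _).2 rfl, (hmemF _).2 rfl⟩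
  have hXgr : ∀ (δ : Bool) (p : V₀ × V₁), p ∈ Vgr V₀ V₁ δ → X p ∈ Vgr V₀ V₁ (!δ) := by
    intro δ p hp
    cases δ
    · exact (hmemT _).2 (by rw [hX]; simp [(hmemF p).1 hp])
    · exact (hmemF _).2 (by rw [hX]; simp [(hmemT p).1 hp])
  have hXgr_par : ∀ a : ℕ,
      (Even a → ∀ (δ : Bool) (p : V₀ × V₁), p ∈ Vgr V₀ V₁ δ → (X ^ a) p ∈ Vgr V₀ V₁ δ) ∧
      (Odd a → ∀ (δ : Bool) (p : V₀ × V₁), p ∈ Vgr V₀ V₁ δ → (X ^ a) p ∈ Vgr V₀ V₁ (!δ)) := by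
    intro a
    induction a with
    | zero =>
      refine ⟨fun _ δ p hp => by simpa using hp, fun h => absurd h (by simp)⟩
    | succ a ih =>
      constructor
      · intro he δ p hp
        have ha : Odd a := Nat.not_even_iff_odd.mp (Nat.even_add_one.mp he)
        have h2 := ih.2 ha (!δ) (X p) (hXgr δ p hp)
        rw [pow_succ, Module.End.mul_apply]
        simpa using h2
      · intro ho δ p hp
        have ha : Even a := by rcases ho with ⟨t, ht⟩; exact ⟨t, by omega⟩
        have h2 := ih.1 ha (!δ) (X p) (hXgr δ p hp)
        rw [pow_succ, Module.End.mul_apply]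
        exact h2
  have hXx0 : ∀ m : ℕ, 1 ≤ m → (X ^ m) x = 0 := by
    intro m hm
    obtain ⟨n, rfl⟩ : ∃ n, m = n + 1 := ⟨m - 1, by omega⟩
    rw [pow_succ, Module.End.mul_apply, hXx, map_zero]
  have hperpker : ∀ p : V₀ × V₁, (X ^ (k - 1)) p = 0 → Bform φ ψ x p = 0 := by
    intro p hp
    obtain ⟨c, hc, hcB⟩ := hiter (k - 1)
    rw [hxy, hcB, hp, hB0r, mul_zero]
  have hsigns : ∃ ce : ℂ, ce ≠ 0 ∧ (∀ q : V₀ × V₁, Bform φ ψ q x = ce * Bform φ ψ x q)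
      ∧ (∀ q : V₀ × V₁, Bform φ ψ x (S q) = ce * Bform φ ψ x q) := by
    cases ε with
    | false =>
      have hx2 : x.2 = 0 := (hmemF x).1 hxε
      refine ⟨1, one_ne_zero, ?_, ?_⟩
      · intro q; simp [Bform, hx2, hφsymm q.1 x.1]
      · intro q; simp [Bform, hSapp, hx2]
    | true =>
      have hx1 : x.1 = 0 := (hmemT x).1 hxε
      refine ⟨-1, by norm_num, ?_, ?_⟩
      · intro q; simp [Bform, hx1, hanti q.2 x.2]
      · intro q; simp [Bform, hSapp, hx1]
  obtain ⟨ce, hce0, hBsymmx, hBSx⟩ := hsigns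
  have hBSpow : ∀ (m : ℕ) (q : V₀ × V₁), Bform φ ψ x ((S ^ m) q) = ce ^ m * Bform φ ψ x q := by
    intro m
    induction m with
    | zero => intro q; simp
    | succ m ih =>
      intro q
      rw [pow_succ, Module.End.mul_apply, ih (S q), hBSx q, pow_succ]
      ring
  have hBval : ∀ p₀ : V₀ × V₁, (X ^ (k - 1)) p₀ = x →
      ∃ c : ℂ, c ≠ 0 ∧ Bform φ ψ x p₀ = c * Bform φ ψ x y := by
    intro p₀ hp₀
    obtain ⟨c, hc, hcB⟩ := hiter (k - 1)
    refine ⟨c * (ce * ce ^ (k - 1)), mul_ne_zero hc (mul_ne_zero hce0 (pow_ne_zero _ hce0)), ?_⟩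
    calc Bform φ ψ x p₀ = Bform φ ψ ((X ^ (k - 1)) y) p₀ := by rw [← hxy]
      _ = c * Bform φ ψ ((S ^ (k - 1)) y) ((X ^ (k - 1)) p₀) := hcB y p₀
      _ = c * Bform φ ψ ((S ^ (k - 1)) y) x := by rw [hp₀]
      _ = c * (ce * Bform φ ψ x ((S ^ (k - 1)) y)) := by rw [hBsymmx]
      _ = c * (ce * (ce ^ (k - 1) * Bform φ ψ x y)) := by rw [hBSpow]
      _ = _ := by ring
  have hmemperp : ∀ z : V₀ × V₁, z ∈ perp φ ψ x ↔ Bform φ ψ x z = 0 := by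
    intro z
    simp [perp, Bform, LinearMap.mem_ker, LinearMap.add_apply]
  have hxP : x ∈ perp φ ψ x := (hmemperp x).2 hiso
  have hXmemP : ∀ z : V₀ × V₁, X z ∈ perp φ ψ x := by
    intro z
    have h1 : Bform φ ψ (X z) x = 0 := by rw [hB1, hXx, hB0r, neg_zero]
    have h2 := hBsymmx (X z)
    rw [h1] at h2
    exact (hmemperp _).2 ((mul_eq_zero.mp h2.symm).resolve_left hce0)
  have hXaP : ∀ (m : ℕ) (z : V₀ × V₁), z ∈ perp φ ψ x → (X ^ m) z ∈ perp φ ψ x := by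
    intro m
    induction m with
    | zero => intro z hz; simpa using hz
    | succ m ih =>
      intro z hz
      rw [pow_succ, Module.End.mul_apply]
      exact ih (X z) (hXmemP z)
  have hZpow : ∀ (m : ℕ) (z : ↥(perp φ ψ x)),
      (Z ^ m) (L.mkQ z) = L.mkQ ⟨(X ^ m) ↑z, hXaP m ↑z z.2⟩ := by
    intro m
    induction m with
    | zero =>
      intro z
      have hz : (⟨(X ^ 0) (↑z : V₀ × V₁), hXaP 0 ↑z z.2⟩ : ↥(perp φ ψ x)) = z :=
        Subtype.ext (by simp)
      rw [pow_zero, Module.End.one_apply, hz]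
    | succ m ih =>
      intro z
      rw [pow_succ, Module.End.mul_apply, hZ z ⟨X ↑z, hXmemP ↑z⟩ rfl, ih ⟨X ↑z, hXmemP ↑z⟩]
      exact congrArg _ (Subtype.ext (show (X ^ m) (X (z : V₀ × V₁))
        = (X ^ (m + 1)) (z : V₀ × V₁) by rw [pow_succ, Module.End.mul_apply]))
  have hne : ¬((!ε) = ε) := by cases ε <;> simp
  have hpre : ∀ a : ℕ, a ≤ k - 1 → ∀ δ : Bool,
      (∀ p : V₀ × V₁, p ∈ Vgr V₀ V₁ δ → (X ^ a) p ∈ Vgr V₀ V₁ ε) →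
      (∀ p : V₀ × V₁, p ∈ Vgr V₀ V₁ (!δ) → (X ^ a) p ∈ Vgr V₀ V₁ (!ε)) →
      ∃ p₀, p₀ ∈ Vgr V₀ V₁ δ ∧ (X ^ a) p₀ = x := by
    intro a ha δ hmap1 hmap2
    obtain ⟨q₀, q₁, hq, h0, h1⟩ := hcomp δ ((X ^ (k - 1 - a)) y)
    have hqx : (X ^ a) ((X ^ (k - 1 - a)) y) = x := by
      rw [← Module.End.mul_apply, ← pow_add, show a + (k - 1 - a) = k - 1 by omega]
      exact hxy.symm
    refine ⟨q₀, h0, ?_⟩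
    have hsum : (X ^ a) q₀ + (X ^ a) q₁ = x := by rw [← map_add, ← hq, hqx]
    have h1' : (X ^ a) q₁ ∈ Vgr V₀ V₁ (!ε) := hmap2 q₁ h1
    have h0' : (X ^ a) q₀ ∈ Vgr V₀ V₁ ε := hmap1 q₀ h0
    have hzq : (X ^ a) q₁ = 0 := by
      have heq : (X ^ a) q₁ = x - (X ^ a) q₀ := by rw [← hsum]; abel
      exact hgrinf ε _ (by rw [heq]; exact Submodule.sub_mem _ hxε h0') h1'
    rw [← hsum, hzq, add_zero]
  have hnopre : ∀ (a : ℕ) (δ : Bool),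
      (∀ p : V₀ × V₁, p ∈ Vgr V₀ V₁ δ → (X ^ a) p ∈ Vgr V₀ V₁ (!ε)) →
      ¬∃ p₀, p₀ ∈ Vgr V₀ V₁ δ ∧ (X ^ a) p₀ = x := by
    rintro a δ hmap ⟨p₀, hg, hx'⟩
    apply hx0
    exact hgrinf ε x hxε (by rw [← hx']; exact hmap p₀ hg)
  -- the key counting lemma
  have key : ∀ a : ℕ, 1 ≤ a → a ≤ k - 1 → ∀ δ : Bool,
      Module.finrank ℂ ↥(LinearMap.ker (Z ^ a) ⊓ Wg δ)
        + (if δ = ε then 1 else 0)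
        + (if ∃ p₀, p₀ ∈ Vgr V₀ V₁ δ ∧ (X ^ a) p₀ = x ∧ Bform φ ψ x p₀ ≠ 0 then 1 else 0)
      = Module.finrank ℂ ↥(LinearMap.ker (X ^ a) ⊓ Vgr V₀ V₁ δ)
        + (if ∃ p₀, p₀ ∈ Vgr V₀ V₁ δ ∧ (X ^ a) p₀ = x then 1 else 0) := by
    intro a ha1 hak δ
    have hAperp : ∀ p : V₀ × V₁, (X ^ a) p = 0 → Bform φ ψ x p = 0 := by
      intro p hp
      apply hperpker
      have h1 : (X ^ (k - 1)) p = (X ^ (k - 1 - a)) ((X ^ a) p) := by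
        rw [← Module.End.mul_apply, ← pow_add]
        congr 2
        omega
      rw [h1, hp, map_zero]
    set Q : Submodule ℂ (V₀ × V₁) :=
      Vgr V₀ V₁ δ ⊓ Submodule.comap (X ^ a) (Submodule.span ℂ {x}) with hQdef
    have hmemQ : ∀ z : V₀ × V₁, z ∈ Q ↔ z ∈ Vgr V₀ V₁ δ ∧ ∃ c : ℂ, c • x = (X ^ a) z := by
      intro z
      simp [hQdef, Submodule.mem_comap, Submodule.mem_span_singleton]
    have hQrank : Module.finrank ℂ ↥Q
        = Module.finrank ℂ ↥(LinearMap.ker (X ^ a) ⊓ Vgr V₀ V₁ δ)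
          + (if ∃ p₀, p₀ ∈ Vgr V₀ V₁ δ ∧ (X ^ a) p₀ = x then 1 else 0) := by
      by_cases hex : ∃ p₀, p₀ ∈ Vgr V₀ V₁ δ ∧ (X ^ a) p₀ = x
      · obtain ⟨p₀, hp₀g, hp₀x⟩ := hex
        rw [if_pos ⟨p₀, hp₀g, hp₀x⟩]
        have hp₀0 : p₀ ≠ 0 := by
          intro h; apply hx0; rw [← hp₀x, h, map_zero]
        have hQeq : Q = (LinearMap.ker (X ^ a) ⊓ Vgr V₀ V₁ δ) ⊔ Submodule.span ℂ {p₀} := by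
          apply le_antisymm
          · intro z hz
            obtain ⟨hzg, c, hc⟩ := (hmemQ z).1 hz
            have hz1 : z - c • p₀ ∈ LinearMap.ker (X ^ a) ⊓ Vgr V₀ V₁ δ := by
              refine Submodule.mem_inf.2 ⟨?_, ?_⟩
              · rw [LinearMap.mem_ker, map_sub, map_smul, hp₀x, ← hc, sub_self]
              · exact Submodule.sub_mem _ hzg (Submodule.smul_mem _ c hp₀g)
            have hzz : z = (z - c • p₀) + c • p₀ := by abel
            rw [hzz]
            exact Submodule.add_mem _ (Submodule.mem_sup_left hz1)
              (Submodule.mem_sup_right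
                (Submodule.smul_mem _ c (Submodule.mem_span_singleton_self p₀)))
          · apply sup_le
            · intro z hz
              obtain ⟨hzk, hzg⟩ := Submodule.mem_inf.1 hz
              refine (hmemQ z).2 ⟨hzg, 0, ?_⟩
              rw [zero_smul]
              exact (LinearMap.mem_ker.1 hzk).symm
            · rw [Submodule.span_le, Set.singleton_subset_iff]
              exact (hmemQ p₀).2 ⟨hp₀g, 1, by rw [one_smul, hp₀x]⟩
        have hinf : (LinearMap.ker (X ^ a) ⊓ Vgr V₀ V₁ δ) ⊓ Submodule.span ℂ {p₀} = ⊥ := by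
          rw [eq_bot_iff]
          intro z hz
          obtain ⟨hzk2, hzs⟩ := Submodule.mem_inf.1 hz
          obtain ⟨hzk, hzg⟩ := Submodule.mem_inf.1 hzk2
          obtain ⟨c, rfl⟩ := Submodule.mem_span_singleton.1 hzs
          have hcx : c • ((X ^ a) p₀) = 0 := by
            rw [← map_smul]; exact LinearMap.mem_ker.1 hzk
          rw [hp₀x] at hcx
          rcases smul_eq_zero.1 hcx with h | h
          · simp [h]
          · exact absurd h hx0
        have hsum := Submodule.finrank_sup_add_finrank_inf_eq
          (LinearMap.ker (X ^ a) ⊓ Vgr V₀ V₁ δ) (Submodule.span ℂ {p₀})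
        rw [hinf, finrank_bot, finrank_span_singleton hp₀0, add_zero] at hsum
        rw [hQeq, hsum]
      · rw [if_neg hex]
        have hQeq : Q = LinearMap.ker (X ^ a) ⊓ Vgr V₀ V₁ δ := by
          apply le_antisymm
          · intro z hz
            obtain ⟨hzg, c, hc⟩ := (hmemQ z).1 hz
            rcases eq_or_ne c 0 with rfl | hc0
            · exact Submodule.mem_inf.2 ⟨by rw [LinearMap.mem_ker, ← hc, zero_smul], hzg⟩
            · exfalso
              refine hex ⟨c⁻¹ • z, Submodule.smul_mem _ _ hzg, ?_⟩
              rw [map_smul, ← hc, smul_smul, inv_mul_cancel₀ hc0, one_smul]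
          · intro z hz
            obtain ⟨hzk, hzg⟩ := Submodule.mem_inf.1 hz
            refine (hmemQ z).2 ⟨hzg, 0, ?_⟩
            rw [zero_smul]
            exact (LinearMap.mem_ker.1 hzk).symm
        rw [hQeq, add_zero]
    set Φ : (V₀ × V₁) →ₗ[ℂ] ℂ :=
      (φ x.1).comp (LinearMap.fst ℂ V₀ V₁) + (ψ x.2).comp (LinearMap.snd ℂ V₀ V₁) with hΦdef
    have hΦapp : ∀ z : V₀ × V₁, Φ z = Bform φ ψ x z := by
      intro z; simp [hΦdef, Bform]
    have hperpeq : perp φ ψ x = LinearMap.ker Φ := rfl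
    set f : ↥Q →ₗ[ℂ] ℂ := Φ.comp Q.subtype with hfdef
    have hkerf : LinearMap.ker f = Submodule.comap Q.subtype (Q ⊓ perp φ ψ x) := by
      rw [hfdef, LinearMap.ker_comp, Submodule.comap_inf, Submodule.comap_subtype_self,
        top_inf_eq, hperpeq]
    have hkerf_rank : Module.finrank ℂ ↥(LinearMap.ker f)
        = Module.finrank ℂ ↥(Q ⊓ perp φ ψ x) := by
      rw [hkerf]
      exact LinearEquiv.finrank_eq (Submodule.comapSubtypeEquivOfLe inf_le_left)
    have hrangef : Module.finrank ℂ ↥(LinearMap.range f)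
        = (if ∃ p₀, p₀ ∈ Vgr V₀ V₁ δ ∧ (X ^ a) p₀ = x ∧ Bform φ ψ x p₀ ≠ 0 then 1 else 0) := by
      by_cases hex : ∃ p₀, p₀ ∈ Vgr V₀ V₁ δ ∧ (X ^ a) p₀ = x ∧ Bform φ ψ x p₀ ≠ 0
      · rw [if_pos hex]
        obtain ⟨p₀, hg, hx', hB⟩ := hex
        have hp₀Q : p₀ ∈ Q := (hmemQ p₀).2 ⟨hg, 1, by rw [one_smul, hx']⟩
        have hrange_top : LinearMap.range f = ⊤ := by
          rw [eq_top_iff]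
          rintro c -
          refine ⟨(c / Bform φ ψ x p₀) • ⟨p₀, hp₀Q⟩, ?_⟩
          have hfp : f ⟨p₀, hp₀Q⟩ = Bform φ ψ x p₀ := by
            simp [hfdef, hΦapp]
          rw [map_smul, hfp, smul_eq_mul, div_mul_cancel₀ c hB]
        rw [hrange_top, finrank_top, Module.finrank_self]
      · rw [if_neg hex]
        have hf0 : f = 0 := by
          ext z
          rcases z with ⟨z, hzQ⟩
          obtain ⟨hzg, c, hc⟩ := (hmemQ z).1 hzQ
          have hfz : f ⟨z, hzQ⟩ = Bform φ ψ x z := by simp [hfdef, hΦapp]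
          rw [hfz, LinearMap.zero_apply]
          rcases eq_or_ne c 0 with rfl | hc0
          · exact hAperp z (by rw [← hc, zero_smul])
          · push_neg at hex
            have hz' := hex (c⁻¹ • z) (Submodule.smul_mem _ _ hzg)
              (by rw [map_smul, ← hc, smul_smul, inv_mul_cancel₀ hc0, one_smul])
            have hzz : z = c • (c⁻¹ • z) := by
              rw [smul_smul, mul_inv_cancel₀ hc0, one_smul]
            rw [hzz, hBsmul2, hz', mul_zero]
        rw [hf0, LinearMap.range_zero, finrank_bot]
    have hrnf := LinearMap.finrank_range_add_finrank_ker f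
    have hQPle : Q ⊓ perp φ ψ x ≤ perp φ ψ x := inf_le_right
    set g : ↥(Q ⊓ perp φ ψ x) →ₗ[ℂ] (↥(perp φ ψ x) ⧸ L) :=
      L.mkQ.comp (Submodule.inclusion hQPle) with hgdef
    have hrangeg : LinearMap.range g = LinearMap.ker (Z ^ a) ⊓ Wg δ := by
      rw [hgdef, LinearMap.range_comp, Submodule.range_inclusion]
      apply le_antisymm
      · intro w hw
        obtain ⟨z, hzN, rfl⟩ := Submodule.mem_map.1 hw
        have hzQ : (↑z : V₀ × V₁) ∈ Q :=
          (Submodule.mem_inf.1 (Submodule.mem_comap.1 hzN)).1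
        obtain ⟨hzg, c, hc⟩ := (hmemQ _).1 hzQ
        refine Submodule.mem_inf.2 ⟨?_, ?_⟩
        · rw [LinearMap.mem_ker, hZpow a z, Submodule.mkQ_apply, Submodule.Quotient.mk_eq_zero,
            hL, Submodule.mem_comap]
          exact Submodule.mem_span_singleton.2 ⟨c, hc⟩
        · rw [hWg δ]
          exact Submodule.mem_map.2 ⟨z, Submodule.mem_comap.2 hzg, rfl⟩
      · intro w hw
        obtain ⟨hker, hWmem⟩ := Submodule.mem_inf.1 hw
        rw [hWg δ] at hWmem
        obtain ⟨z, hzg, rfl⟩ := Submodule.mem_map.1 hWmem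
        rw [LinearMap.mem_ker, hZpow a z, Submodule.mkQ_apply, Submodule.Quotient.mk_eq_zero,
          hL, Submodule.mem_comap] at hker
        refine Submodule.mem_map.2 ⟨z, ?_, rfl⟩
        refine Submodule.mem_comap.2 (Submodule.mem_inf.2 ⟨?_, z.2⟩)
        exact (hmemQ _).2 ⟨Submodule.mem_comap.1 hzg, Submodule.mem_span_singleton.1 hker⟩
    have hmemkerg : ∀ w : ↥(Q ⊓ perp φ ψ x),
        w ∈ LinearMap.ker g ↔ (↑w : V₀ × V₁) ∈ Submodule.span ℂ {x} := by
      intro w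
      rw [hgdef, LinearMap.ker_comp, Submodule.ker_mkQ, Submodule.mem_comap, hL,
        Submodule.mem_comap]
      exact Iff.rfl
    have hkergrank : Module.finrank ℂ ↥(LinearMap.ker g) = (if δ = ε then 1 else 0) := by
      by_cases hδ : δ = ε
      · rw [if_pos hδ]
        have hxQ : x ∈ Q := by
          refine (hmemQ x).2 ⟨by rw [hδ]; exact hxε, 0, ?_⟩
          rw [zero_smul, hXx0 a ha1]
        have hxQP : x ∈ Q ⊓ perp φ ψ x := Submodule.mem_inf.2 ⟨hxQ, hxP⟩
        have hnxker : (⟨x, hxQP⟩ : ↥(Q ⊓ perp φ ψ x)) ∈ LinearMap.ker g :=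
          (hmemkerg _).2 (Submodule.mem_span_singleton_self x)
        refine finrank_eq_one (⟨⟨x, hxQP⟩, hnxker⟩ : ↥(LinearMap.ker g)) ?_ ?_
        · intro h
          apply hx0
          have h2 := congrArg
            (fun t : ↥(LinearMap.ker g) => ((t : ↥(Q ⊓ perp φ ψ x)) : V₀ × V₁)) h
          simpa using h2
        · rintro ⟨w, hw⟩
          obtain ⟨c, hc⟩ := Submodule.mem_span_singleton.1 ((hmemkerg w).1 hw)
          refine ⟨c, ?_⟩
          apply Subtype.ext
          apply Subtype.ext
          simpa using hc
      · rw [if_neg hδ]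
        have hbot : LinearMap.ker g = ⊥ := by
          rw [eq_bot_iff]
          intro w hw
          obtain ⟨c, hc⟩ := Submodule.mem_span_singleton.1 ((hmemkerg w).1 hw)
          have hgr : (↑w : V₀ × V₁) ∈ Vgr V₀ V₁ δ :=
            ((hmemQ _).1 (Submodule.mem_inf.1 w.2).1).1
          have hgre : (↑w : V₀ × V₁) ∈ Vgr V₀ V₁ ε := by
            rw [← hc]
            exact Submodule.smul_mem _ c hxε
          have hδ' : δ = !ε := by
            cases δ <;> cases ε <;> first | rfl | exact absurd rfl hδ
          have hz0 : (↑w : V₀ × V₁) = 0 := hgrinf ε _ hgre (by rw [← hδ']; exact hgr)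
          rw [Submodule.mem_bot]
          exact Subtype.ext hz0
        rw [hbot]
        exact finrank_bot ℂ ↥(Q ⊓ perp φ ψ x)
    have hrng := LinearMap.finrank_range_add_finrank_ker g
    rw [hrangeg, hkergrank] at hrng
    rw [hrangef, hkerf_rank, hQrank] at hrnf
    omega
  -- now the five parts
  refine ⟨?_, ?_, ?_, ?_, ?_⟩
  · -- independence of B(x,y)
    intro y' hy'
    obtain ⟨c, hc, hcB⟩ := hiter (k - 1)
    have h0 : Bform φ ψ x (y' - y) = 0 := by
      rw [hxy, hcB, map_sub, hy', ← hxy, sub_self, hB0r, mul_zero]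
    have h1 := hBsub x y' y
    linear_combination h0 - h1
  · -- 1 ≤ a ≤ k - 2
    intro a ha1 ha2
    have hak : a ≤ k - 1 := by omega
    have hkey_e := key a ha1 hak ε
    have hkey_o := key a ha1 hak (!ε)
    have hR : ∀ δ : Bool, ¬∃ p₀, p₀ ∈ Vgr V₀ V₁ δ ∧ (X ^ a) p₀ = x ∧ Bform φ ψ x p₀ ≠ 0 := by
      rintro δ ⟨p₀, -, hpx, hpB⟩
      apply hpB
      apply hperpker
      have h1 : (X ^ (k - 1)) p₀ = (X ^ (k - 1 - a)) ((X ^ a) p₀) := by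
        rw [← Module.End.mul_apply, ← pow_add]
        congr 2
        omega
      rw [h1, hpx]
      exact hXx0 _ (by omega)
    constructor
    · intro ho
      have hMe := hnopre a ε ((hXgr_par a).2 ho ε)
      have hMo := hpre a hak (!ε)
        (fun p hp => by simpa using (hXgr_par a).2 ho (!ε) p hp)
        (fun p hp => (hXgr_par a).2 ho ε p (by simpa using hp))
      rw [if_pos rfl, if_neg (hR ε), if_neg hMe] at hkey_e
      rw [if_neg hne, if_neg (hR (!ε)), if_pos hMo] at hkey_o
      exact ⟨by omega, by omega⟩
    · intro he
      have hMe := hpre a hak ε ((hXgr_par a).1 he ε) ((hXgr_par a).1 he (!ε))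
      have hMo := hnopre a (!ε) ((hXgr_par a).1 he (!ε))
      rw [if_pos rfl, if_neg (hR ε), if_pos hMe] at hkey_e
      rw [if_neg hne, if_neg (hR (!ε)), if_neg hMo] at hkey_o
      exact ⟨by omega, by omega⟩
  · -- a = k - 1, B(x,y) ≠ 0
    intro hk2 hBxy
    have ha1 : 1 ≤ k - 1 := by omega
    have hkey_e := key (k - 1) ha1 le_rfl ε
    have hkey_o := key (k - 1) ha1 le_rfl (!ε)
    rcases Nat.even_or_odd (k - 1) with he | ho
    · have hMe := hpre (k - 1) le_rfl ε ((hXgr_par _).1 he ε) ((hXgr_par _).1 he (!ε))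
      have hMo := hnopre (k - 1) (!ε) ((hXgr_par _).1 he (!ε))
      have hRe : ∃ p₀, p₀ ∈ Vgr V₀ V₁ ε ∧ (X ^ (k - 1)) p₀ = x ∧ Bform φ ψ x p₀ ≠ 0 := by
        obtain ⟨p₀, hg, hx'⟩ := hMe
        obtain ⟨c, hc, hBe⟩ := hBval p₀ hx'
        exact ⟨p₀, hg, hx', by rw [hBe]; exact mul_ne_zero hc hBxy⟩
      have hRo : ¬∃ p₀, p₀ ∈ Vgr V₀ V₁ (!ε) ∧ (X ^ (k - 1)) p₀ = x ∧ Bform φ ψ x p₀ ≠ 0 := by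
        rintro ⟨p₀, hg, hx', -⟩
        exact hMo ⟨p₀, hg, hx'⟩
      rw [if_pos rfl, if_pos hRe, if_pos hMe] at hkey_e
      rw [if_neg hne, if_neg hRo, if_neg hMo] at hkey_o
      exact ⟨by omega, by omega⟩
    · have hMe := hnopre (k - 1) ε ((hXgr_par _).2 ho ε)
      have hMo := hpre (k - 1) le_rfl (!ε)
        (fun p hp => by simpa using (hXgr_par _).2 ho (!ε) p hp)
        (fun p hp => (hXgr_par _).2 ho ε p (by simpa using hp))
      have hRe : ¬∃ p₀, p₀ ∈ Vgr V₀ V₁ ε ∧ (X ^ (k - 1)) p₀ = x ∧ Bform φ ψ x p₀ ≠ 0 := by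
        rintro ⟨p₀, hg, hx', -⟩
        exact hMe ⟨p₀, hg, hx'⟩
      have hRo : ∃ p₀, p₀ ∈ Vgr V₀ V₁ (!ε) ∧ (X ^ (k - 1)) p₀ = x ∧ Bform φ ψ x p₀ ≠ 0 := by
        obtain ⟨p₀, hg, hx'⟩ := hMo
        obtain ⟨c, hc, hBe⟩ := hBval p₀ hx'
        exact ⟨p₀, hg, hx', by rw [hBe]; exact mul_ne_zero hc hBxy⟩
      rw [if_pos rfl, if_neg hRe, if_neg hMe] at hkey_e
      rw [if_neg hne, if_pos hRo, if_pos hMo] at hkey_o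
      exact ⟨by omega, by omega⟩
  · -- a = k - 1, B(x,y) = 0, k - 1 odd
    intro hk2 hBxy ho
    have ha1 : 1 ≤ k - 1 := by omega
    have hkey_e := key (k - 1) ha1 le_rfl ε
    have hkey_o := key (k - 1) ha1 le_rfl (!ε)
    have hR0 : ∀ δ : Bool, ¬∃ p₀, p₀ ∈ Vgr V₀ V₁ δ ∧ (X ^ (k - 1)) p₀ = x
        ∧ Bform φ ψ x p₀ ≠ 0 := by
      rintro δ ⟨p₀, -, hx', hB⟩
      obtain ⟨c, hc, hBe⟩ := hBval p₀ hx'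
      exact hB (by rw [hBe, hBxy, mul_zero])
    have hMe := hnopre (k - 1) ε ((hXgr_par _).2 ho ε)
    have hMo := hpre (k - 1) le_rfl (!ε)
      (fun p hp => by simpa using (hXgr_par _).2 ho (!ε) p hp)
      (fun p hp => (hXgr_par _).2 ho ε p (by simpa using hp))
    rw [if_pos rfl, if_neg (hR0 ε), if_neg hMe] at hkey_e
    rw [if_neg hne, if_neg (hR0 (!ε)), if_pos hMo] at hkey_o
    exact ⟨by omega, by omega⟩
  · -- a = k - 1, B(x,y) = 0, k - 1 even
    intro hk2 hBxy he
    have ha1 : 1 ≤ k - 1 := by omega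
    have hkey_e := key (k - 1) ha1 le_rfl ε
    have hkey_o := key (k - 1) ha1 le_rfl (!ε)
    have hR0 : ∀ δ : Bool, ¬∃ p₀, p₀ ∈ Vgr V₀ V₁ δ ∧ (X ^ (k - 1)) p₀ = x
        ∧ Bform φ ψ x p₀ ≠ 0 := by
      rintro δ ⟨p₀, -, hx', hB⟩
      obtain ⟨c, hc, hBe⟩ := hBval p₀ hx'
      exact hB (by rw [hBe, hBxy, mul_zero])
    have hMe := hpre (k - 1) le_rfl ε ((hXgr_par _).1 he ε) ((hXgr_par _).1 he (!ε))
    have hMo := hnopre (k - 1) (!ε) ((hXgr_par _).1 he (!ε))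
    rw [if_pos rfl, if_neg (hR0 ε), if_pos hMe] at hkey_e
    rw [if_neg hne, if_neg (hR0 (!ε)), if_neg hMo] at hkey_o
    exact ⟨by omega, by omega⟩
end

section
/- Let X be an odd orthosymplectic endomorphism, k ≥ 1 an integer, y ∈ V, and set x = X^{k−1}(y); assume X(x) = 0 and x ∉ Im(X^k). Then Ker(X^a) ⊆ x^⊥ for every integer a with 0 ≤ a ≤ k−1, and Ker(X^k) ⊄ x^⊥, i.e. there exists z ∈ Ker(X^k) with B(x,z) ≠ 0. -/
/-- Let `X` be odd orthosymplectic, `k ≥ 1`, `x = X^{k−1}(y)` with `X(x) = 0` and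
`x ∉ Im(X^k)`. Then `Ker(X^a) ⊆ x^⊥` for all `a ≤ k−1`, while `Ker(X^k) ⊄ x^⊥`. -/
theorem ker_pow_le_perp_and_not_ker_pow_le_perp
    (V₀ V₁ : Type) [AddCommGroup V₀] [Module ℂ V₀] [FiniteDimensional ℂ V₀]
    [AddCommGroup V₁] [Module ℂ V₁] [FiniteDimensional ℂ V₁]
    (φ : V₀ →ₗ[ℂ] V₀ →ₗ[ℂ] ℂ) (ψ : V₁ →ₗ[ℂ] V₁ →ₗ[ℂ] ℂ)
    (hφsymm : ∀ a b : V₀, φ a b = φ b a)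
    (hφnd : ∀ a : V₀, (∀ b : V₀, φ a b = 0) → a = 0)
    (hψalt : ∀ a : V₁, ψ a a = 0)
    (hψnd : ∀ a : V₁, (∀ b : V₁, ψ a b = 0) → a = 0)
    (u : V₀ →ₗ[ℂ] V₁) (ustar : V₁ →ₗ[ℂ] V₀)
    (hadj : ∀ (v : V₀) (w : V₁), φ (ustar w) v = ψ w (u v))
    (X : Module.End ℂ (V₀ × V₁))
    (hX : ∀ p : V₀ × V₁, X p = (ustar p.2, u p.1))
    (k : ℕ) (hk : 1 ≤ k) (y x : V₀ × V₁) (hxy : x = (X ^ (k - 1)) y)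
    (hXx : X x = 0) (hxim : x ∉ LinearMap.range (X ^ k)) :
    (∀ a : ℕ, a ≤ k - 1 → ∀ z ∈ LinearMap.ker (X ^ a), Bform φ ψ x z = 0) ∧
      ∃ z ∈ LinearMap.ker (X ^ k), Bform φ ψ x z ≠ 0 := by
  -- abbreviations
  have hψskew : ∀ a b : V₁, ψ a b = -ψ b a := by
    intro a b
    have h := hψalt (a + b)
    simp only [map_add, LinearMap.add_apply, hψalt a, hψalt b] at h
    linear_combination h
  set S : Module.End ℂ (V₀ × V₁) :=
    (-(LinearMap.fst ℂ V₀ V₁)).prod (LinearMap.snd ℂ V₀ V₁) with hSdef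
  have hS : ∀ p : V₀ × V₁, S p = (-p.1, p.2) := fun p => rfl
  set Y : Module.End ℂ (V₀ × V₁) := X * S with hYdef
  have hY : ∀ p : V₀ × V₁, Y p = (ustar p.2, -(u p.1)) := by
    intro p
    show X (S p) = _
    rw [hS, hX]
    simp
  -- adjoint identities
  have hA : ∀ p q : V₀ × V₁, Bform φ ψ p (X q) = Bform φ ψ (Y p) q := by
    intro p q
    simp only [Bform, hX, hY, map_neg, LinearMap.neg_apply]
    have e1 : φ (ustar p.2) q.1 = ψ p.2 (u q.1) := hadj q.1 p.2
    have e2 : φ (ustar q.2) p.1 = ψ q.2 (u p.1) := hadj p.1 q.2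
    have e3 : φ p.1 (ustar q.2) = φ (ustar q.2) p.1 := hφsymm _ _
    have e4 : ψ q.2 (u p.1) = -ψ (u p.1) q.2 := hψskew _ _
    linear_combination e3 + e2 + e4 - e1
  have hB : ∀ p q : V₀ × V₁, Bform φ ψ (X p) q = -Bform φ ψ p (Y q) := by
    intro p q
    simp only [Bform, hX, hY]
    have e1 : φ (ustar p.2) q.1 = ψ p.2 (u q.1) := hadj q.1 p.2
    have e2 : φ (ustar q.2) p.1 = ψ q.2 (u p.1) := hadj p.1 q.2
    have e3 : φ p.1 (ustar q.2) = φ (ustar q.2) p.1 := hφsymm _ _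
    have e4 : ψ q.2 (u p.1) = -ψ (u p.1) q.2 := hψskew _ _
    have e5 : ψ p.2 (-(u q.1)) = -(ψ p.2 (u q.1)) := by rw [map_neg]
    rw [e5]
    linear_combination e1 + e3 + e2 + e4
  -- iterated adjoint identities
  have hC : ∀ (n : ℕ) (p q : V₀ × V₁),
      Bform φ ψ ((X ^ n) p) q = (-1 : ℂ) ^ n * Bform φ ψ p ((Y ^ n) q) := by
    intro n
    induction n with
    | zero => intro p q; simp
    | succ n ih =>
      intro p q
      have h1 : (X ^ (n + 1)) p = (X ^ n) (X p) := by
        rw [pow_succ]; rfl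
      have h2 : (Y ^ (n + 1)) q = Y ((Y ^ n) q) := by
        rw [pow_succ']; rfl
      rw [h1, ih (X p) q, hB, h2]
      ring
  have hC' : ∀ (n : ℕ) (p q : V₀ × V₁),
      Bform φ ψ p ((X ^ n) q) = Bform φ ψ ((Y ^ n) p) q := by
    intro n
    induction n with
    | zero => intro p q; simp
    | succ n ih =>
      intro p q
      have h1 : (X ^ (n + 1)) q = (X ^ n) (X q) := by
        rw [pow_succ]; rfl
      have h2 : (Y ^ (n + 1)) p = Y ((Y ^ n) p) := by
        rw [pow_succ']; rfl
      rw [h1, ih p (X q), hA, h2]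
  -- commutation relations
  have hSX : S * X = (-1 : ℂ) • (X * S) := by
    apply LinearMap.ext
    intro p
    show S (X p) = (-1 : ℂ) • (X (S p))
    rw [neg_one_smul]
    simp [hX, hS]
  have hSXn : ∀ n : ℕ, S * X ^ n = ((-1 : ℂ) ^ n) • (X ^ n * S) := by
    intro n
    induction n with
    | zero => simp
    | succ n ih =>
      have h1 : S * X ^ (n + 1) = (S * X ^ n) * X := by rw [mul_assoc, ← pow_succ]
      rw [h1, ih, smul_mul_assoc, mul_assoc, hSX, mul_smul_comm, smul_smul,
        ← pow_succ, pow_succ X, mul_assoc]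
  have hSmXn : ∀ m n : ℕ, ∃ c : ℂ, c ≠ 0 ∧ S ^ m * X ^ n = c • (X ^ n * S ^ m) := by
    intro m n
    induction m with
    | zero => exact ⟨1, one_ne_zero, by simp⟩
    | succ m ih =>
      obtain ⟨c, hc, hcm⟩ := ih
      refine ⟨(-1 : ℂ) ^ n * c, by simp [hc], ?_⟩
      rw [pow_succ', mul_assoc, hcm, mul_smul_comm, ← mul_assoc, hSXn]
      rw [smul_mul_assoc, smul_smul, mul_assoc, ← pow_succ', mul_comm c]
  have hYn : ∀ n : ℕ, ∃ c : ℂ, c ≠ 0 ∧ Y ^ n = c • (X ^ n * S ^ n) := by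
    intro n
    induction n with
    | zero => exact ⟨1, one_ne_zero, by simp⟩
    | succ n ih =>
      obtain ⟨c, hc, hcn⟩ := ih
      obtain ⟨d, hd, hdn⟩ := hSmXn n 1
      refine ⟨c * d, mul_ne_zero hc hd, ?_⟩
      calc Y ^ (n + 1) = Y ^ n * Y := pow_succ Y n
        _ = (c • (X ^ n * S ^ n)) * (X * S) := by rw [hcn, hYdef]
        _ = c • (X ^ n * ((S ^ n * X ^ 1) * S)) := by
              rw [smul_mul_assoc]
              congr 1
        _ = c • (X ^ n * ((d • (X ^ 1 * S ^ n)) * S)) := by rw [hdn]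
        _ = (c * d) • (X ^ (n + 1) * S ^ (n + 1)) := by
              rw [smul_mul_assoc, mul_smul_comm, smul_smul]
              congr 1
  -- nondegeneracy of B
  have hBnd : ∀ p : V₀ × V₁, (∀ q : V₀ × V₁, Bform φ ψ p q = 0) → p = 0 := by
    intro p hp
    have h1 : p.1 = 0 := by
      apply hφnd
      intro b
      have := hp (b, 0)
      simpa [Bform] using this
    have h2 : p.2 = 0 := by
      apply hψnd
      intro b
      have := hp (0, b)
      simpa [Bform] using this
    exact Prod.ext h1 h2
  constructor
  · -- part 1
    intro a ha z hz
    rw [LinearMap.mem_ker] at hz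
    obtain ⟨c, hc, hcY⟩ := hYn (k - 1)
    obtain ⟨d, hd, hdS⟩ := hSmXn (k - 1) a
    have hXaSz : (X ^ a) ((S ^ (k - 1)) z) = 0 := by
      have h0 : (S ^ (k - 1)) ((X ^ a) z) = d • (X ^ a) ((S ^ (k - 1)) z) :=
        LinearMap.congr_fun hdS z
      rw [hz, map_zero] at h0
      exact ((smul_eq_zero.mp h0.symm).resolve_left hd)
    have hYz : (Y ^ (k - 1)) z = 0 := by
      rw [hcY]
      show c • (X ^ (k - 1)) ((S ^ (k - 1)) z) = 0
      have hpow : (X ^ (k - 1)) ((S ^ (k - 1)) z) = 0 := by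
        have : X ^ (k - 1) = X ^ (k - 1 - a) * X ^ a := by
          rw [← pow_add, Nat.sub_add_cancel ha]
        rw [this]
        show (X ^ (k - 1 - a)) ((X ^ a) ((S ^ (k - 1)) z)) = 0
        rw [hXaSz, map_zero]
      rw [hpow, smul_zero]
    rw [hxy, hC (k - 1) y z, hYz]
    simp [Bform]
  · -- part 2
    by_contra hcon
    push_neg at hcon
    apply hxim
    -- the linear functional B(x, ·)
    set f : (V₀ × V₁) →ₗ[ℂ] ℂ :=
      (φ x.1).comp (LinearMap.fst ℂ V₀ V₁) + (ψ x.2).comp (LinearMap.snd ℂ V₀ V₁) with hfdef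
    have hf : ∀ z, f z = Bform φ ψ x z := fun z => rfl
    have hker : LinearMap.ker (X ^ k) ≤ LinearMap.ker f := by
      intro z hz
      rw [LinearMap.mem_ker, hf]
      exact hcon z hz
    -- factor f through X ^ k
    set A : (V₀ × V₁) →ₗ[ℂ] (V₀ × V₁) := (X ^ k : Module.End ℂ (V₀ × V₁)) with hAdef
    have hfactor : ∃ g : (V₀ × V₁) →ₗ[ℂ] ℂ, ∀ z, f z = g (A z) := by
      set fbar : ((V₀ × V₁) ⧸ LinearMap.ker A) →ₗ[ℂ] ℂ :=
        Submodule.liftQ (LinearMap.ker A) f hker with hfbar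
      set g₀ : LinearMap.range A →ₗ[ℂ] ℂ :=
        fbar.comp (A.quotKerEquivRange.symm : LinearMap.range A →ₗ[ℂ] _) with hg₀
      obtain ⟨g, hg⟩ := LinearMap.exists_extend g₀
      refine ⟨g, fun z => ?_⟩
      have h1 : g (A z) = g₀ ⟨A z, LinearMap.mem_range_self A z⟩ := by
        have := LinearMap.congr_fun hg ⟨A z, LinearMap.mem_range_self A z⟩
        exact this
      rw [h1, hg₀]
      show f z = fbar (A.quotKerEquivRange.symm ⟨A z, _⟩)
      rw [A.quotKerEquivRange_symm_apply_image z]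
      rfl
    obtain ⟨g, hg⟩ := hfactor
    -- represent g as B(p, ·)
    set BL : (V₀ × V₁) →ₗ[ℂ] ((V₀ × V₁) →ₗ[ℂ] ℂ) :=
      φ.compl₁₂ (LinearMap.fst ℂ V₀ V₁) (LinearMap.fst ℂ V₀ V₁) +
        ψ.compl₁₂ (LinearMap.snd ℂ V₀ V₁) (LinearMap.snd ℂ V₀ V₁) with hBLdef
    have hBL : ∀ p q : V₀ × V₁, BL p q = Bform φ ψ p q := fun p q => rfl
    have hBLinj : Function.Injective BL := by
      rw [← LinearMap.ker_eq_bot, LinearMap.ker_eq_bot']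
      intro p hp
      apply hBnd
      intro q
      rw [← hBL, hp]
      rfl
    have hBLsurj : Function.Surjective BL := by
      have hdim : Module.finrank ℂ (V₀ × V₁) =
          Module.finrank ℂ (Module.Dual ℂ (V₀ × V₁)) := (Subspace.dual_finrank_eq).symm
      exact (LinearMap.injective_iff_surjective_of_finrank_eq_finrank hdim).mp hBLinj
    obtain ⟨p, hp⟩ := hBLsurj g
    -- x = Y^k p
    have hxz : ∀ z, Bform φ ψ x z = Bform φ ψ ((Y ^ k) p) z := by
      intro z
      rw [← hf, hg, ← hp, hBL, ← hC' k p z]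
    have hxeq : x = (Y ^ k) p := by
      have hdiff : x - (Y ^ k) p = 0 := by
        apply hBnd
        intro q
        have h1 : Bform φ ψ (x - (Y ^ k) p) q
            = Bform φ ψ x q - Bform φ ψ ((Y ^ k) p) q := by
          simp only [Bform, Prod.fst_sub, Prod.snd_sub, map_sub, LinearMap.sub_apply]
          ring
        rw [h1, hxz q, sub_self]
      have := sub_eq_zero.mp hdiff
      exact this
    obtain ⟨c, hc, hcY⟩ := hYn k
    refine ⟨c • (S ^ k) p, ?_⟩
    rw [hxeq, hcY]
    show (X ^ k) (c • (S ^ k) p) = c • (X ^ k) ((S ^ k) p)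
    rw [map_smul]
end

section
/- Let X be an odd orthosymplectic endomorphism, k ≥ 1 an integer, y ∈ V, and set x = X^{k−1}(y); assume X(x) = 0, x ∉ Im(X^k), and x ∈ V_ε for some ε ∈ {0,1}. Then: (i) Ker(X^a) ∩ V_{1−ε} ⊆ x^⊥ for every integer a ≥ 0; (ii) dim(Ker(X^a) ∩ x^⊥ ∩ V_ε) = dim(Ker(X^a) ∩ V_ε) for 0 ≤ a ≤ k−1; (iii) dim(Ker(X^a) ∩ x^⊥ ∩ V_ε) = dim(Ker(X^a) ∩ V_ε) − 1 for every a ≥ k. -/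
lemma aux_hyperplane {V : Type} [AddCommGroup V] [Module ℂ V] [FiniteDimensional ℂ V]
    (W : Submodule ℂ V) (f : V →ₗ[ℂ] ℂ) (h : ¬ W ≤ LinearMap.ker f) :
    Module.finrank ℂ ↥(W ⊓ LinearMap.ker f) + 1 = Module.finrank ℂ ↥W := by
  set g : ↥W →ₗ[ℂ] ℂ := f.comp W.subtype with hg
  have hkg : LinearMap.ker g = Submodule.comap W.subtype (LinearMap.ker f) := by
    ext v; simp [hg, LinearMap.mem_ker]
  have hcomap : Submodule.comap W.subtype (W ⊓ LinearMap.ker f)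
      = Submodule.comap W.subtype (LinearMap.ker f) := by
    rw [Submodule.comap_inf, Submodule.comap_subtype_self, top_inf_eq]
  have hfr : Module.finrank ℂ ↥(W ⊓ LinearMap.ker f) = Module.finrank ℂ (LinearMap.ker g) := by
    rw [hkg, ← hcomap]
    exact (LinearEquiv.finrank_eq (Submodule.comapSubtypeEquivOfLe inf_le_left)).symm
  have hrange : Module.finrank ℂ (LinearMap.range g) = 1 := by
    obtain ⟨w, hwW, hw⟩ := Set.not_subset.mp h
    have hne : LinearMap.range g ≠ ⊥ := by
      intro hb
      have : g ⟨w, hwW⟩ = 0 := by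
        have : g ⟨w, hwW⟩ ∈ LinearMap.range g := LinearMap.mem_range_self _ _
        rw [hb] at this; simpa using this
      exact hw (by simpa [hg, LinearMap.mem_ker] using this)
    have h1 : 0 < Module.finrank ℂ (LinearMap.range g) :=
      Nat.pos_of_ne_zero fun h0 => hne (Submodule.finrank_eq_zero.mp h0)
    have h2 : Module.finrank ℂ (LinearMap.range g) ≤ 1 :=
      (Submodule.finrank_le _).trans_eq (Module.finrank_self ℂ)
    omega
  have := LinearMap.finrank_range_add_finrank_ker g
  rw [hrange] at this
  rw [hfr]
  omega

/-- Let `X` be odd orthosymplectic, `k ≥ 1`, `x = X^{k−1}(y)` with `X(x) = 0`,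
`x ∉ Im(X^k)` and `x ∈ V_ε`. Then (i) `Ker(X^a) ∩ V_{1−ε} ⊆ x^⊥` for all `a`;
(ii) `dim(Ker(X^a) ∩ x^⊥ ∩ V_ε) = dim(Ker(X^a) ∩ V_ε)` for `a ≤ k−1`; and
(iii) `dim(Ker(X^a) ∩ x^⊥ ∩ V_ε) = dim(Ker(X^a) ∩ V_ε) − 1` for `a ≥ k`. -/
theorem dim_ker_pow_inf_perp_inf_graded
    (V₀ V₁ : Type) [AddCommGroup V₀] [Module ℂ V₀] [FiniteDimensional ℂ V₀]
    [AddCommGroup V₁] [Module ℂ V₁] [FiniteDimensional ℂ V₁]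
    (φ : V₀ →ₗ[ℂ] V₀ →ₗ[ℂ] ℂ) (ψ : V₁ →ₗ[ℂ] V₁ →ₗ[ℂ] ℂ)
    (hφsymm : ∀ a b : V₀, φ a b = φ b a)
    (hφnd : ∀ a : V₀, (∀ b : V₀, φ a b = 0) → a = 0)
    (hψalt : ∀ a : V₁, ψ a a = 0)
    (hψnd : ∀ a : V₁, (∀ b : V₁, ψ a b = 0) → a = 0)
    (u : V₀ →ₗ[ℂ] V₁) (ustar : V₁ →ₗ[ℂ] V₀)
    (hadj : ∀ (v : V₀) (w : V₁), φ (ustar w) v = ψ w (u v))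
    (X : Module.End ℂ (V₀ × V₁))
    (hX : ∀ p : V₀ × V₁, X p = (ustar p.2, u p.1))
    (k : ℕ) (hk : 1 ≤ k) (y x : V₀ × V₁) (hxy : x = (X ^ (k - 1)) y)
    (hXx : X x = 0) (hxim : x ∉ LinearMap.range (X ^ k))
    (ε : Bool) (hxε : x ∈ Vgr V₀ V₁ ε) :
    (∀ a : ℕ, ∀ z ∈ LinearMap.ker (X ^ a) ⊓ Vgr V₀ V₁ (!ε), Bform φ ψ x z = 0) ∧
    (∀ a : ℕ, a ≤ k - 1 →
      Module.finrank ℂ ↥(LinearMap.ker (X ^ a) ⊓ perp φ ψ x ⊓ Vgr V₀ V₁ ε)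
        = Module.finrank ℂ ↥(LinearMap.ker (X ^ a) ⊓ Vgr V₀ V₁ ε)) ∧
    (∀ a : ℕ, k ≤ a →
      Module.finrank ℂ ↥(LinearMap.ker (X ^ a) ⊓ perp φ ψ x ⊓ Vgr V₀ V₁ ε) + 1
        = Module.finrank ℂ ↥(LinearMap.ker (X ^ a) ⊓ Vgr V₀ V₁ ε)) := by
  -- basic form facts
  have hψskew : ∀ a b : V₁, ψ a b = -ψ b a := by
    intro a b
    have h := hψalt (a + b)
    simp only [map_add, LinearMap.add_apply, hψalt] at h
    linear_combination h
  -- the sign involution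
  set s : (V₀ × V₁) →ₗ[ℂ] (V₀ × V₁) :=
    (LinearMap.fst ℂ V₀ V₁).prod (-(LinearMap.snd ℂ V₀ V₁)) with hs
  have hsapp : ∀ p : V₀ × V₁, s p = (p.1, -p.2) := fun p => rfl
  -- membership in graded pieces
  have hmemF : ∀ p : V₀ × V₁, p ∈ Vgr V₀ V₁ false ↔ p.2 = 0 := by
    intro p; simp [Vgr]
  have hmemT : ∀ p : V₀ × V₁, p ∈ Vgr V₀ V₁ true ↔ p.1 = 0 := by
    intro p; simp [Vgr]
  -- adjunction
  have hstep : ∀ p q : V₀ × V₁, Bform φ ψ (X p) q = Bform φ ψ p (X (s q)) := by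
    intro p q
    simp only [Bform, hX, hsapp, map_neg]
    linear_combination hadj q.1 p.2 + hψskew (u p.1) q.2 + hφsymm p.1 (ustar q.2)
      + hadj p.1 q.2
  have hiter : ∀ (n : ℕ) (p q : V₀ × V₁),
      Bform φ ψ ((X ^ n) p) q = Bform φ ψ p (((X ∘ₗ s) ^ n) q) := by
    intro n
    induction n with
    | zero => intro p q; simp
    | succ n ih =>
      intro p q
      rw [pow_succ', Module.End.mul_apply, hstep, ih, pow_succ, Module.End.mul_apply]
      rfl
  have hXs_neg : ∀ p : V₀ × V₁, X (s p) = - s (X p) := by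
    intro p
    rw [hsapp, hX, hX, hsapp]
    simp [Prod.ext_iff]
  have hker_s : ∀ (n : ℕ) (z : V₀ × V₁), (X ^ n) z = 0 → (X ^ n) (s z) = 0 := by
    intro n
    induction n with
    | zero => intro z hz; simp only [pow_zero, Module.End.one_apply] at hz ⊢; rw [hz]; exact map_zero s
    | succ n ih =>
      intro z hz
      rw [pow_succ, Module.End.mul_apply] at hz ⊢
      rw [hXs_neg, map_neg, ih _ hz, neg_zero]
  have hker_Xs : ∀ (n : ℕ) (z : V₀ × V₁), (X ^ n) z = 0 → ((X ∘ₗ s) ^ n) z = 0 := by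
    intro n
    induction n with
    | zero => intro z hz; simpa using hz
    | succ n ih =>
      intro z hz
      have h1 : (X ^ (n + 1)) (s z) = 0 := hker_s _ _ hz
      rw [pow_succ, Module.End.mul_apply] at h1
      rw [pow_succ, Module.End.mul_apply, LinearMap.comp_apply]
      exact ih _ h1
  -- ker monotone
  have hker_mono : ∀ {m n : ℕ}, m ≤ n → ∀ z : V₀ × V₁, (X ^ m) z = 0 → (X ^ n) z = 0 := by
    intro m n h z hz
    have : X ^ n = X ^ (n - m) * X ^ m := by rw [← pow_add, Nat.sub_add_cancel h]
    rw [this, Module.End.mul_apply, hz, map_zero]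
  -- grading of X
  have hstepV : ∀ (c : Bool) (p : V₀ × V₁), p ∈ Vgr V₀ V₁ c → X p ∈ Vgr V₀ V₁ (!c) := by
    intro c p hp
    cases c with
    | false =>
      rw [hmemF] at hp
      rw [Bool.not_false, hmemT]
      simp [hX, hp]
    | true =>
      rw [hmemT] at hp
      rw [Bool.not_true, hmemF]
      simp [hX, hp]
  have hpowV : ∀ n : ℕ, ∃ b : Bool,
      (∀ p ∈ Vgr V₀ V₁ false, (X ^ n) p ∈ Vgr V₀ V₁ b) ∧
      (∀ p ∈ Vgr V₀ V₁ true, (X ^ n) p ∈ Vgr V₀ V₁ (!b)) := by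
    intro n
    induction n with
    | zero => exact ⟨false, fun p hp => by simpa using hp, fun p hp => by simpa using hp⟩
    | succ n ih =>
      obtain ⟨b, h0, h1⟩ := ih
      refine ⟨!b, fun p hp => ?_, fun p hp => ?_⟩
      · rw [pow_succ', Module.End.mul_apply]; exact hstepV b _ (h0 p hp)
      · rw [pow_succ', Module.End.mul_apply]
        have := hstepV (!b) _ (h1 p hp)
        simpa using this
  have hzero_decomp : ∀ (b : Bool) (p q : V₀ × V₁), p ∈ Vgr V₀ V₁ b → q ∈ Vgr V₀ V₁ (!b) →
      p + q = 0 → p = 0 ∧ q = 0 := by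
    intro b p q hp hq hpq
    rw [Prod.ext_iff] at hpq
    simp only [Prod.fst_add, Prod.snd_add, Prod.fst_zero, Prod.snd_zero] at hpq
    cases b with
    | false =>
      rw [hmemF] at hp; rw [Bool.not_false, hmemT] at hq
      have h1 : p.1 = 0 := by simpa [hq] using hpq.1
      have h2 : q.2 = 0 := by simpa [hp] using hpq.2
      exact ⟨Prod.ext h1 hp, Prod.ext hq h2⟩
    | true =>
      rw [hmemT] at hp; rw [Bool.not_true, hmemF] at hq
      have h1 : q.1 = 0 := by simpa [hp] using hpq.1
      have h2 : p.2 = 0 := by simpa [hq] using hpq.2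
      exact ⟨Prod.ext hp h2, Prod.ext h1 hq⟩
  have hgraded_ker : ∀ (n : ℕ) (z : V₀ × V₁), (X ^ n) z = 0 →
      (X ^ n) ((z.1, 0) : V₀ × V₁) = 0 ∧ (X ^ n) ((0, z.2) : V₀ × V₁) = 0 := by
    intro n z hz
    obtain ⟨b, h0, h1⟩ := hpowV n
    have hzsum : ((z.1, 0) : V₀ × V₁) + (0, z.2) = z := by simp
    have hsum : (X ^ n) ((z.1, 0) : V₀ × V₁) + (X ^ n) ((0, z.2) : V₀ × V₁) = 0 := by
      rw [← map_add, hzsum, hz]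
    exact hzero_decomp b _ _ (h0 _ ((hmemF _).mpr rfl)) (h1 _ ((hmemT _).mpr rfl)) hsum
  -- perp membership
  have hperp : ∀ z : V₀ × V₁, z ∈ perp φ ψ x ↔ Bform φ ψ x z = 0 := by
    intro z
    simp [perp, Bform, LinearMap.mem_ker]
  -- part (i)
  have part1 : ∀ a : ℕ, ∀ z ∈ LinearMap.ker (X ^ a) ⊓ Vgr V₀ V₁ (!ε), Bform φ ψ x z = 0 := by
    intro a z hz
    rw [Submodule.mem_inf] at hz
    obtain ⟨-, hz2⟩ := hz
    cases ε with
    | false =>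
      rw [hmemF] at hxε
      rw [Bool.not_false, hmemT] at hz2
      simp [Bform, hxε, hz2]
    | true =>
      rw [hmemT] at hxε
      rw [Bool.not_true, hmemF] at hz2
      simp [Bform, hxε, hz2]
  -- vanishing on ker X^{k-1}
  have hvanish : ∀ z : V₀ × V₁, (X ^ (k - 1)) z = 0 → Bform φ ψ x z = 0 := by
    intro z hz
    rw [hxy, hiter, hker_Xs _ _ hz]
    simp [Bform]
  refine ⟨part1, ?_, ?_⟩
  · -- part (ii)
    intro a ha
    have hle : LinearMap.ker (X ^ a) ⊓ Vgr V₀ V₁ ε ≤ perp φ ψ x := by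
      intro z hz
      rw [Submodule.mem_inf] at hz
      obtain ⟨hz1, -⟩ := hz
      rw [hperp]
      exact hvanish z (hker_mono ha z (LinearMap.mem_ker.mp hz1))
    rw [inf_right_comm, inf_eq_left.mpr hle]
  · -- part (iii)
    intro a ha
    have hnot : ¬ (LinearMap.ker (X ^ a) ⊓ Vgr V₀ V₁ ε ≤ perp φ ψ x) := by
      intro hcon
      apply hxim
      -- set up the nondegenerate pairing as a map to the dual
      set Bf : (V₀ × V₁) →ₗ[ℂ] Module.Dual ℂ (V₀ × V₁) :=
        (φ.compl₁₂ (LinearMap.fst ℂ V₀ V₁) (LinearMap.fst ℂ V₀ V₁))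
          + (ψ.compl₁₂ (LinearMap.snd ℂ V₀ V₁) (LinearMap.snd ℂ V₀ V₁)) with hBfdef
      have hBf : ∀ p q : V₀ × V₁, Bf p q = Bform φ ψ p q := by
        intro p q; simp [hBfdef, Bform, LinearMap.compl₁₂_apply]
      have hBfinj : Function.Injective Bf := by
        rw [← LinearMap.ker_eq_bot]
        rw [Submodule.eq_bot_iff]
        intro v hv
        rw [LinearMap.mem_ker] at hv
        have hv' : ∀ q : V₀ × V₁, Bform φ ψ v q = 0 := by
          intro q; rw [← hBf, hv]; rfl
        have h1 : v.1 = 0 := by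
          apply hφnd
          intro b
          have := hv' (b, 0)
          simpa [Bform] using this
        have h2 : v.2 = 0 := by
          apply hψnd
          intro b
          have := hv' (0, b)
          simpa [Bform] using this
        exact Prod.ext h1 h2
      have hBfsurj : Function.Surjective Bf :=
        (LinearMap.injective_iff_surjective_of_finrank_eq_finrank
          (Subspace.dual_finrank_eq (K := ℂ) (V := V₀ × V₁)).symm).mp hBfinj
      set K := LinearMap.ker (X ^ k) with hK
      set e : (V₀ × V₁) ≃ₗ[ℂ] Module.Dual ℂ (V₀ × V₁) :=
        LinearEquiv.ofBijective Bf ⟨hBfinj, hBfsurj⟩ with he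
      set orthK := Submodule.comap Bf K.dualAnnihilator with horthK
      have hmem_orth : ∀ v : V₀ × V₁, v ∈ orthK ↔ ∀ z ∈ K, Bform φ ψ v z = 0 := by
        intro v
        rw [horthK, Submodule.mem_comap, Submodule.mem_dualAnnihilator]
        exact forall_congr' fun z => forall_congr' fun hz => by rw [hBf]
      have hR_le : LinearMap.range (X ^ k) ≤ orthK := by
        rintro v ⟨p, rfl⟩
        rw [hmem_orth]
        intro z hz
        rw [hiter, hker_Xs _ _ (LinearMap.mem_ker.mp hz)]
        simp [Bform]
      -- dimension count
      have hco : orthK = Submodule.map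
          (e.symm : Module.Dual ℂ (V₀ × V₁) →ₗ[ℂ] V₀ × V₁) K.dualAnnihilator := by
        have h0 : orthK = Submodule.comap (e : (V₀ × V₁) →ₗ[ℂ] Module.Dual ℂ (V₀ × V₁))
            K.dualAnnihilator := rfl
        rw [h0, Submodule.comap_equiv_eq_map_symm]
      have hfr1 : Module.finrank ℂ orthK = Module.finrank ℂ K.dualAnnihilator := by
        rw [hco]
        exact LinearEquiv.finrank_map_eq e.symm _
      have hfr2 : Module.finrank ℂ ((V₀ × V₁) ⧸ K) = Module.finrank ℂ K.dualAnnihilator :=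
        LinearEquiv.finrank_eq (Subspace.quotEquivAnnihilator K)
      have hfr3 : Module.finrank ℂ ((V₀ × V₁) ⧸ K) + Module.finrank ℂ K
          = Module.finrank ℂ (V₀ × V₁) := Submodule.finrank_quotient_add_finrank K
      have hfr4 : Module.finrank ℂ (LinearMap.range (X ^ k)) + Module.finrank ℂ K
          = Module.finrank ℂ (V₀ × V₁) := LinearMap.finrank_range_add_finrank_ker (X ^ k)
      have hReq : LinearMap.range (X ^ k) = orthK :=
        Submodule.eq_of_le_of_finrank_le hR_le (by omega)
      -- x is in orthK
      rw [hReq, hmem_orth]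
      intro z hz
      rw [hK, LinearMap.mem_ker] at hz
      obtain ⟨hz1, hz2⟩ := hgraded_ker k z hz
      have hsplit : Bform φ ψ x z = Bform φ ψ x (z.1, 0) + Bform φ ψ x (0, z.2) := by
        simp [Bform]
      rw [hsplit]
      have hBzero : ∀ w : V₀ × V₁, (X ^ k) w = 0 → w ∈ Vgr V₀ V₁ ε → Bform φ ψ x w = 0 := by
        intro w hw hwε
        have : w ∈ LinearMap.ker (X ^ a) ⊓ Vgr V₀ V₁ ε :=
          Submodule.mem_inf.mpr ⟨LinearMap.mem_ker.mpr (hker_mono ha w hw), hwε⟩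
        exact (hperp w).mp (hcon this)
      have hBzero' : ∀ w : V₀ × V₁, (X ^ k) w = 0 → w ∈ Vgr V₀ V₁ (!ε) →
          Bform φ ψ x w = 0 := by
        intro w hw hwε
        exact part1 a w (Submodule.mem_inf.mpr
          ⟨LinearMap.mem_ker.mpr (hker_mono ha w hw), hwε⟩)
      cases ε with
      | false =>
        rw [hBzero _ hz1 ((hmemF _).mpr rfl), hBzero' _ hz2 (by rw [Bool.not_false, hmemT])]
        ring
      | true =>
        rw [hBzero _ hz2 ((hmemT _).mpr rfl), hBzero' _ hz1 (by rw [Bool.not_true, hmemF])]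
        ring
    rw [inf_right_comm]
    exact aux_hyperplane _ _ hnot
end

section
/- Let X be an odd orthosymplectic endomorphism, k ≥ 1 an integer, y ∈ V, and set x = X^{k−1}(y); assume X(x) = 0 and x ∉ Im(X^k). Then: (i) the scalar B(x,y) does not depend on the choice of y with X^{k−1}(y) = x; (ii) dim{v ∈ x^⊥ : X^a(v) ∈ ℂx} = dim Ker(X^a) + 1 for every integer a with 0 ≤ a < k−1; (iii) dim{v ∈ x^⊥ : X^{k−1}(v) ∈ ℂx} = dim Ker(X^{k−1}) + 1 if B(x,y) = 0, and = dim Ker(X^{k−1}) if B(x,y) ≠ 0; (iv) dim{v ∈ x^⊥ : X^a(v) ∈ ℂx} = dim Ker(X^a) − 1 for every a ≥ k. -/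
open Module Submodule LinearMap

lemma aux_finrank_comap {V : Type} [AddCommGroup V] [Module ℂ V] [FiniteDimensional ℂ V]
    (T : Module.End ℂ V) (L : Submodule ℂ V) :
    Module.finrank ℂ ↥(Submodule.comap T L) =
      Module.finrank ℂ ↥(LinearMap.range T ⊓ L) + Module.finrank ℂ ↥(LinearMap.ker T) := by
  set S := Submodule.comap T L with hS
  have hker : LinearMap.ker T ≤ S := fun v hv => by
    simp only [hS, Submodule.mem_comap]
    rw [LinearMap.mem_ker.mp hv]; exact L.zero_mem
  have h1 := LinearMap.finrank_range_add_finrank_ker (T.domRestrict S)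
  rw [LinearMap.range_domRestrict, LinearMap.ker_domRestrict] at h1
  rw [hS, Submodule.map_comap_eq] at h1
  have h2 : Module.finrank ℂ ↥((LinearMap.ker T).comap S.subtype)
      = Module.finrank ℂ ↥(LinearMap.ker T) :=
    (Submodule.comapSubtypeEquivOfLe hker).finrank_eq
  rw [h2] at h1
  exact h1.symm

lemma aux_finrank_inf_ker {V : Type} [AddCommGroup V] [Module ℂ V] [FiniteDimensional ℂ V]
    (S : Submodule ℂ V) (f : V →ₗ[ℂ] ℂ) (h : ∃ v ∈ S, f v ≠ 0) :
    Module.finrank ℂ ↥(S ⊓ LinearMap.ker f) + 1 = Module.finrank ℂ ↥S := by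
  obtain ⟨v, hvS, hfv⟩ := h
  have h1 := LinearMap.finrank_range_add_finrank_ker (f.domRestrict S)
  have hrange : LinearMap.range (f.domRestrict S) = ⊤ := by
    rw [eq_top_iff]
    intro c _
    refine ⟨⟨(c * (f v)⁻¹) • v, S.smul_mem _ hvS⟩, ?_⟩
    simp [map_smul, smul_eq_mul]
    field_simp
  rw [hrange, LinearMap.ker_domRestrict] at h1
  have h2 : Module.finrank ℂ ↥((LinearMap.ker f).comap S.subtype)
      = Module.finrank ℂ ↥(S ⊓ LinearMap.ker f) := by
    have hle : S ⊓ LinearMap.ker f ≤ S := inf_le_left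
    have heq : (S ⊓ LinearMap.ker f).comap S.subtype = (LinearMap.ker f).comap S.subtype := by
      rw [Submodule.comap_inf, Submodule.comap_subtype_self, top_inf_eq]
    rw [← heq]
    exact (Submodule.comapSubtypeEquivOfLe hle).finrank_eq
  rw [h2] at h1
  rw [← h1, finrank_top, Module.finrank_self, add_comm]

lemma aux_sign_pow {V : Type} [AddCommGroup V] [Module ℂ V]
    (A B : Module.End ℂ V) (h : A * B = -(B * A)) :
    ∀ n : ℕ, B ^ n * A = ((-1 : ℂ) ^ n) • (A * B ^ n) := by
  intro n
  induction n with
  | zero => simp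
  | succ n ih =>
    rw [pow_succ, mul_assoc, show B * A = -(A * B) from by rw [h, neg_neg],
      mul_neg, ← mul_assoc, ih, smul_mul_assoc, mul_assoc, ← pow_succ, ← neg_smul]
    congr 1
    rw [pow_succ]
    ring

lemma aux_pow_formula {V : Type} [AddCommGroup V] [Module ℂ V]
    (A B : Module.End ℂ V) (h : A * B = -(B * A)) :
    ∀ n : ℕ, (B * A) ^ n = ((-1 : ℂ) ^ (n * (n + 1) / 2)) • (A ^ n * B ^ n) := by
  intro n
  induction n with
  | zero => simp
  | succ n ih =>
    have key : (n + 1) * (n + 1 + 1) / 2 = n * (n + 1) / 2 + (n + 1) := by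
      obtain ⟨r, hr⟩ := Nat.even_mul_succ_self n
      have h2 : (n + 1) * (n + 1 + 1) = n * (n + 1) + 2 * (n + 1) := by ring
      omega
    have step : A ^ n * B ^ n * (B * A) = ((-1 : ℂ) ^ (n + 1)) • (A ^ (n + 1) * B ^ (n + 1)) := by
      rw [mul_assoc, ← mul_assoc (B ^ n), ← pow_succ, aux_sign_pow A B h (n + 1), mul_smul_comm,
        ← mul_assoc, ← pow_succ]
    rw [pow_succ, ih, smul_mul_assoc, step, smul_smul, key, pow_add]
    congr 1
    ring

lemma aux_factor {V : Type} [AddCommGroup V] [Module ℂ V]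
    (T : Module.End ℂ V) (f : V →ₗ[ℂ] ℂ) (h : LinearMap.ker T ≤ LinearMap.ker f) :
    ∃ g : V →ₗ[ℂ] ℂ, ∀ v, g (T v) = f v := by
  set fbar := (LinearMap.ker T).liftQ f h with hfbar
  set e := T.quotKerEquivRange with he
  obtain ⟨g, hg⟩ := LinearMap.exists_extend (fbar.comp (e.symm : LinearMap.range T →ₗ[ℂ] _))
  refine ⟨g, fun v => ?_⟩
  have hw : ((e (Submodule.Quotient.mk v)) : V) = T v := T.quotKerEquivRange_apply_mk v
  have h2 := LinearMap.congr_fun hg (e (Submodule.Quotient.mk v))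
  simp only [LinearMap.comp_apply, Submodule.subtype_apply, LinearEquiv.coe_coe] at h2
  rw [hw] at h2
  rw [h2]
  simp [he, hfbar]


/-- Let `X` be odd orthosymplectic, `k ≥ 1`, `x = X^{k−1}(y)` with `X(x) = 0` and
`x ∉ Im(X^k)`. Then: (i) `B(x,y)` does not depend on the choice of `y`;
(ii) `dim{v ∈ x^⊥ : X^a(v) ∈ ℂx} = dim Ker(X^a) + 1` for `a < k−1`;
(iii) for `a = k−1` this dimension is `dim Ker(X^{k−1}) + 1` if `B(x,y) = 0` and
`dim Ker(X^{k−1})` if `B(x,y) ≠ 0`; (iv) it is `dim Ker(X^a) − 1` for `a ≥ k`. -/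
theorem dim_perp_inf_preimage_line
    (V₀ V₁ : Type) [AddCommGroup V₀] [Module ℂ V₀] [FiniteDimensional ℂ V₀]
    [AddCommGroup V₁] [Module ℂ V₁] [FiniteDimensional ℂ V₁]
    (φ : V₀ →ₗ[ℂ] V₀ →ₗ[ℂ] ℂ) (ψ : V₁ →ₗ[ℂ] V₁ →ₗ[ℂ] ℂ)
    (hφsymm : ∀ a b : V₀, φ a b = φ b a)
    (hφnd : ∀ a : V₀, (∀ b : V₀, φ a b = 0) → a = 0)
    (hψalt : ∀ a : V₁, ψ a a = 0)
    (hψnd : ∀ a : V₁, (∀ b : V₁, ψ a b = 0) → a = 0)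
    (u : V₀ →ₗ[ℂ] V₁) (ustar : V₁ →ₗ[ℂ] V₀)
    (hadj : ∀ (v : V₀) (w : V₁), φ (ustar w) v = ψ w (u v))
    (X : Module.End ℂ (V₀ × V₁))
    (hX : ∀ p : V₀ × V₁, X p = (ustar p.2, u p.1))
    (k : ℕ) (hk : 1 ≤ k) (y x : V₀ × V₁) (hxy : x = (X ^ (k - 1)) y)
    (hXx : X x = 0) (hxim : x ∉ LinearMap.range (X ^ k)) :
    (∀ y' : V₀ × V₁, (X ^ (k - 1)) y' = x → Bform φ ψ x y' = Bform φ ψ x y) ∧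
    (∀ a : ℕ, a < k - 1 →
      Module.finrank ℂ ↥(perp φ ψ x ⊓ Submodule.comap (X ^ a) (Submodule.span ℂ {x}))
        = Module.finrank ℂ ↥(LinearMap.ker (X ^ a)) + 1) ∧
    (Bform φ ψ x y = 0 →
      Module.finrank ℂ
          ↥(perp φ ψ x ⊓ Submodule.comap (X ^ (k - 1)) (Submodule.span ℂ {x}))
        = Module.finrank ℂ ↥(LinearMap.ker (X ^ (k - 1))) + 1) ∧
    (Bform φ ψ x y ≠ 0 →
      Module.finrank ℂ
          ↥(perp φ ψ x ⊓ Submodule.comap (X ^ (k - 1)) (Submodule.span ℂ {x}))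
        = Module.finrank ℂ ↥(LinearMap.ker (X ^ (k - 1)))) ∧
    (∀ a : ℕ, k ≤ a →
      Module.finrank ℂ ↥(perp φ ψ x ⊓ Submodule.comap (X ^ a) (Submodule.span ℂ {x})) + 1
        = Module.finrank ℂ ↥(LinearMap.ker (X ^ a))) := by
  -- basic bilinear form manipulation
  have hψskew : ∀ a b : V₁, ψ a b = - ψ b a := by
    intro a b
    have h := hψalt (a + b)
    simp only [map_add, LinearMap.add_apply, hψalt a, hψalt b] at h
    have : ψ a b + ψ b a = 0 := by linear_combination h
    linear_combination this
  have hBsub2 : ∀ p q r : V₀ × V₁, Bform φ ψ p (q - r) = Bform φ ψ p q - Bform φ ψ p r := by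
    intro p q r; simp only [Bform, Prod.fst_sub, Prod.snd_sub, map_sub]; ring
  have hBsmul2 : ∀ (c : ℂ) (p q : V₀ × V₁), Bform φ ψ p (c • q) = c * Bform φ ψ p q := by
    intro c p q
    simp only [Bform, Prod.smul_fst, Prod.smul_snd, map_smul, smul_eq_mul]; ring
  have hBsmul1 : ∀ (c : ℂ) (p q : V₀ × V₁), Bform φ ψ (c • p) q = c * Bform φ ψ p q := by
    intro c p q
    simp only [Bform, Prod.smul_fst, Prod.smul_snd, map_smul, LinearMap.smul_apply,
      smul_eq_mul]; ring
  have hBzero2 : ∀ p : V₀ × V₁, Bform φ ψ p 0 = 0 := by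
    intro p; simp [Bform]
  -- the parity involution
  set σ : Module.End ℂ (V₀ × V₁) := LinearMap.prodMap LinearMap.id (-LinearMap.id) with hσdef
  have hσ : ∀ p : V₀ × V₁, σ p = (p.1, -p.2) := fun p => rfl
  have hσσ : σ * σ = 1 := by
    apply LinearMap.ext; intro p
    simp [Module.End.mul_apply, hσ]
  -- adjoint identity for σ * X
  have hB1 : ∀ p q : V₀ × V₁, Bform φ ψ ((σ * X) p) q = Bform φ ψ p (X q) := by
    intro p q
    rw [Module.End.mul_apply, hX p, hX q, hσ]
    simp only [Bform, map_neg, LinearMap.neg_apply]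
    rw [hadj q.1 p.2, hφsymm p.1 (ustar q.2), hadj p.1 q.2, hψskew q.2 (u p.1)]
    ring
  have hA : ∀ (n : ℕ) (p q : V₀ × V₁),
      Bform φ ψ (((σ * X) ^ n) p) q = Bform φ ψ p ((X ^ n) q) := by
    intro n
    induction n with
    | zero => intro p q; simp
    | succ n ih =>
      intro p q
      rw [pow_succ, Module.End.mul_apply, ih ((σ * X) p) q, hB1, pow_succ',
        Module.End.mul_apply]
  -- commutation relations
  have hσX : X * σ = -(σ * X) := by
    apply LinearMap.ext; intro p
    simp only [Module.End.mul_apply, LinearMap.neg_apply, hσ, hX]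
    simp [Prod.ext_iff]
  have hAn : ∀ n : ℕ, (σ * X) ^ n = ((-1 : ℂ) ^ (n * (n + 1) / 2)) • (X ^ n * σ ^ n) :=
    aux_pow_formula X σ hσX
  have hσpow_sq : ∀ n : ℕ, σ ^ n * σ ^ n = 1 := by
    intro n
    rw [← pow_add, ← two_mul, pow_mul, pow_two, hσσ, one_pow]
  have hsign_sq : ∀ m : ℕ, ((-1 : ℂ) ^ m) * ((-1 : ℂ) ^ m) = 1 := by
    intro m; rw [← pow_add, ← two_mul, pow_mul]; norm_num
  -- X^n = sign • (σX)^n σ^n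
  have hXn : ∀ n : ℕ, X ^ n = ((-1 : ℂ) ^ (n * (n + 1) / 2)) • ((σ * X) ^ n * σ ^ n) := by
    intro n
    rw [hAn n, smul_mul_assoc, mul_assoc, hσpow_sq, mul_one, smul_smul, hsign_sq, one_smul]
  -- left vanishing lemma
  have hleft : ∀ (n : ℕ) (p q : V₀ × V₁), (X ^ n) q = 0 → Bform φ ψ ((X ^ n) p) q = 0 := by
    intro n p q hq
    rw [hXn n]
    simp only [LinearMap.smul_apply, Module.End.mul_apply]
    rw [hBsmul1, hA n ((σ ^ n) p) q, hq, hBzero2, mul_zero]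
  have hvanish : ∀ w : V₀ × V₁, (X ^ (k - 1)) w = 0 → Bform φ ψ x w = 0 := by
    intro w hw
    rw [hxy]
    exact hleft (k - 1) y w hw
  -- part (i)
  have parti : ∀ y' : V₀ × V₁, (X ^ (k - 1)) y' = x → Bform φ ψ x y' = Bform φ ψ x y := by
    intro y' hy'
    have h0 : (X ^ (k - 1)) (y' - y) = 0 := by
      rw [map_sub, hy', ← hxy, sub_self]
    have := hvanish (y' - y) h0
    rw [hBsub2] at this
    linear_combination this
  -- x is nonzero
  have hx0 : x ≠ 0 := by
    intro h
    exact hxim ⟨0, by rw [map_zero, h]⟩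
  -- powers kill x
  have hXmx : ∀ m : ℕ, 1 ≤ m → (X ^ m) x = 0 := by
    intro m hm
    obtain ⟨m', rfl⟩ : ∃ m', m = m' + 1 := ⟨m - 1, by omega⟩
    rw [pow_succ, Module.End.mul_apply, hXx, map_zero]
  -- the functional f with perp = ker f
  set f : (V₀ × V₁) →ₗ[ℂ] ℂ :=
    (φ x.1).comp (LinearMap.fst ℂ V₀ V₁) + (ψ x.2).comp (LinearMap.snd ℂ V₀ V₁) with hfdef
  have hperp : perp φ ψ x = LinearMap.ker f := rfl
  have hf : ∀ v : V₀ × V₁, f v = Bform φ ψ x v := fun v => rfl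
  set L : Submodule ℂ (V₀ × V₁) := Submodule.span ℂ {x} with hLdef
  -- range for small a
  have hrange_small : ∀ a : ℕ, a ≤ k - 1 → LinearMap.range (X ^ a) ⊓ L = L := by
    intro a ha
    rw [inf_eq_right]
    rw [Submodule.span_le, Set.singleton_subset_iff]
    refine ⟨(X ^ (k - 1 - a)) y, ?_⟩
    rw [← Module.End.mul_apply, ← pow_add, hxy]
    congr 2
    omega
  have hrange_pow_le : ∀ a : ℕ, k ≤ a → LinearMap.range (X ^ a) ≤ LinearMap.range (X ^ k) := by
    intro a ha
    have : X ^ a = X ^ k * X ^ (a - k) := by rw [← pow_add]; congr 1; omega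
    rw [this]
    rintro z ⟨w, rfl⟩
    exact ⟨(X ^ (a - k)) w, rfl⟩
  have hrange_big : ∀ a : ℕ, k ≤ a → LinearMap.range (X ^ a) ⊓ L = ⊥ := by
    intro a ha
    rw [eq_bot_iff]
    intro z hz
    rw [Submodule.mem_inf] at hz
    obtain ⟨hz1, hz2⟩ := hz
    rw [hLdef, Submodule.mem_span_singleton] at hz2
    obtain ⟨c, rfl⟩ := hz2
    rcases eq_or_ne c 0 with rfl | hc
    · simp
    · exfalso
      apply hxim
      apply hrange_pow_le a ha
      have : x = c⁻¹ • (c • x) := by rw [smul_smul, inv_mul_cancel₀ hc, one_smul]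
      rw [this]
      exact Submodule.smul_mem _ _ hz1
  have hfinL : Module.finrank ℂ ↥L = 1 := finrank_span_singleton hx0
  -- dimension of S for small a
  have hdimS_small : ∀ a : ℕ, a ≤ k - 1 →
      Module.finrank ℂ ↥(Submodule.comap (X ^ a) L)
        = Module.finrank ℂ ↥(LinearMap.ker (X ^ a)) + 1 := by
    intro a ha
    rw [aux_finrank_comap, hrange_small a ha, hfinL, add_comm]
  have hdimS_big : ∀ a : ℕ, k ≤ a →
      Module.finrank ℂ ↥(Submodule.comap (X ^ a) L)
        = Module.finrank ℂ ↥(LinearMap.ker (X ^ a)) := by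
    intro a ha
    rw [aux_finrank_comap, hrange_big a ha, finrank_bot, zero_add]
  -- when f vanishes on S, W = S
  have hW_of_vanish : ∀ a : ℕ, (∀ v ∈ Submodule.comap (X ^ a) L, f v = 0) →
      perp φ ψ x ⊓ Submodule.comap (X ^ a) L = Submodule.comap (X ^ a) L := by
    intro a hv
    rw [inf_eq_right, hperp]
    intro v hvS
    exact LinearMap.mem_ker.mpr (hv v hvS)
  -- (ii)
  have partii : ∀ a : ℕ, a < k - 1 →
      Module.finrank ℂ ↥(perp φ ψ x ⊓ Submodule.comap (X ^ a) L)
        = Module.finrank ℂ ↥(LinearMap.ker (X ^ a)) + 1 := by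
    intro a ha
    rw [hW_of_vanish a ?_, hdimS_small a (by omega)]
    intro v hv
    rw [Submodule.mem_comap, hLdef, Submodule.mem_span_singleton] at hv
    obtain ⟨c, hc⟩ := hv
    rw [hf]
    apply hvanish
    have : X ^ (k - 1) = X ^ (k - 1 - a) * X ^ a := by rw [← pow_add]; congr 1; omega
    rw [this, Module.End.mul_apply, ← hc, map_smul, hXmx (k - 1 - a) (by omega), smul_zero]
  -- (iii) vanishing case
  have partiii : Bform φ ψ x y = 0 →
      Module.finrank ℂ ↥(perp φ ψ x ⊓ Submodule.comap (X ^ (k - 1)) L)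
        = Module.finrank ℂ ↥(LinearMap.ker (X ^ (k - 1))) + 1 := by
    intro hBxy
    rw [hW_of_vanish (k - 1) ?_, hdimS_small (k - 1) le_rfl]
    intro v hv
    rw [Submodule.mem_comap, hLdef, Submodule.mem_span_singleton] at hv
    obtain ⟨c, hc⟩ := hv
    have h0 : (X ^ (k - 1)) (v - c • y) = 0 := by
      rw [map_sub, map_smul, ← hxy, hc, sub_self]
    have := hvanish _ h0
    rw [hBsub2, hBsmul2] at this
    rw [hf]
    rw [hBxy, mul_zero] at this
    linear_combination this
  -- (iii) nonvanishing case
  have partiii' : Bform φ ψ x y ≠ 0 →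
      Module.finrank ℂ ↥(perp φ ψ x ⊓ Submodule.comap (X ^ (k - 1)) L)
        = Module.finrank ℂ ↥(LinearMap.ker (X ^ (k - 1))) := by
    intro hBxy
    have hyS : y ∈ Submodule.comap (X ^ (k - 1)) L := by
      rw [Submodule.mem_comap, ← hxy, hLdef]
      exact Submodule.mem_span_singleton_self x
    have h1 := aux_finrank_inf_ker (Submodule.comap (X ^ (k - 1)) L) f
      ⟨y, hyS, by rw [hf]; exact hBxy⟩
    rw [hdimS_small (k - 1) le_rfl] at h1
    rw [hperp, inf_comm]
    omega
  -- (iv)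
  have partiv : ∀ a : ℕ, k ≤ a →
      Module.finrank ℂ ↥(perp φ ψ x ⊓ Submodule.comap (X ^ a) L) + 1
        = Module.finrank ℂ ↥(LinearMap.ker (X ^ a)) := by
    intro a ha
    -- there is v in ker X^a with f v ≠ 0
    have hexists : ∃ v ∈ Submodule.comap (X ^ a) L, f v ≠ 0 := by
      by_contra hcon
      push_neg at hcon
      have hker_le : LinearMap.ker (X ^ a) ≤ LinearMap.ker f := by
        intro v hv
        rw [LinearMap.mem_ker]
        apply hcon
        rw [Submodule.mem_comap, LinearMap.mem_ker.mp hv]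
        exact L.zero_mem
      obtain ⟨g, hg⟩ := aux_factor (X ^ a) f hker_le
      -- dual map β
      set β : (V₀ × V₁) →ₗ[ℂ] ((V₀ × V₁) →ₗ[ℂ] ℂ) :=
        (φ.compl₂ (LinearMap.fst ℂ V₀ V₁)).comp (LinearMap.fst ℂ V₀ V₁)
          + (ψ.compl₂ (LinearMap.snd ℂ V₀ V₁)).comp (LinearMap.snd ℂ V₀ V₁) with hβdef
      have hβ : ∀ p q : V₀ × V₁, β p q = Bform φ ψ p q := fun p q => rfl
      have hβinj : Function.Injective β := by
        rw [← LinearMap.ker_eq_bot, eq_bot_iff]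
        intro p hp
        rw [LinearMap.mem_ker] at hp
        have h1 : p.1 = 0 := by
          apply hφnd
          intro b
          have := LinearMap.congr_fun hp (b, 0)
          rw [hβ] at this
          simpa [Bform] using this
        have h2 : p.2 = 0 := by
          apply hψnd
          intro b
          have := LinearMap.congr_fun hp (0, b)
          rw [hβ] at this
          simpa [Bform] using this
        simp [Submodule.mem_bot, Prod.ext_iff, h1, h2]
      have hβsurj : Function.Surjective β :=
        (LinearMap.injective_iff_surjective_of_finrank_eq_finrank
          Subspace.dual_finrank_eq.symm).mp hβinj
      obtain ⟨p, hp⟩ := hβsurj g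
      -- x = (σ X)^a p
      have hxz : x = ((σ * X) ^ a) p := by
        apply hβinj
        apply LinearMap.ext
        intro q
        rw [hβ, hβ, hA a p q, ← hf q, ← hg q, ← hp]
        rfl
      apply hxim
      apply hrange_pow_le a ha
      rw [hxz, hAn a]
      exact ⟨((-1 : ℂ) ^ (a * (a + 1) / 2)) • ((σ ^ a) p), by
        simp only [LinearMap.smul_apply, Module.End.mul_apply, map_smul]⟩
    have h1 := aux_finrank_inf_ker (Submodule.comap (X ^ a) L) f hexists
    rw [hdimS_big a ha] at h1
    rw [hperp, inf_comm]
    exact h1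
  exact ⟨parti, partii, partiii, partiii', partiv⟩
end

section
/- A marked diagram D is admissible if and only if the following counting conditions hold: for every even length ℓ, the number of lines (ℓ, 0) in D equals the number of lines (ℓ, 1); for every length ℓ ≡ 1 (mod 4), the number of lines (ℓ, 1) in D is even; and for every length ℓ ≡ 3 (mod 4), the number of lines (ℓ, 0) in D is even. -/
/-- A marked line is a pair `(ℓ, ε)`; a marked diagram is a finite multiset of marked lines.
`IndecompD D` says that `D` is one of the five indecomposable diagrams. -/
def IndecompD (D : Multiset (ℕ × Bool)) : Prop :=
  (∃ p : ℕ, D = {(4 * p + 1, false)}) ∨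
  (∃ p : ℕ, 1 ≤ p ∧ D = {(4 * p - 1, true)}) ∨
  (∃ p : ℕ, 1 ≤ p ∧ D = {(4 * p - 1, false), (4 * p - 1, false)}) ∨
  (∃ p : ℕ, D = {(4 * p + 1, true), (4 * p + 1, true)}) ∨
  (∃ p : ℕ, 1 ≤ p ∧ D = {(2 * p, false), (2 * p, true)})

/-- A marked diagram is admissible if it is a multiset sum of indecomposable diagrams. -/
def AdmissibleD (D : Multiset (ℕ × Bool)) : Prop :=
  ∃ L : Multiset (Multiset (ℕ × Bool)), (∀ d ∈ L, IndecompD d) ∧ L.sum = D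

/-- The number of boxes of `D` labelled `b` (a line `(ℓ, ε)` has `⌈ℓ/2⌉` boxes labelled `ε`
and `⌊ℓ/2⌋` boxes labelled `1 − ε`). -/
def sizeD (b : Bool) (D : Multiset (ℕ × Bool)) : ℕ :=
  (D.map (fun l => if l.2 = b then (l.1 + 1) / 2 else l.1 / 2)).sum

/-- `D` has parity `ε` if its size is `(2m + (−1)^ε, 2m)` for some `m`
(here `false` plays the role of `ε = 0` and `true` of `ε = 1`). -/
def HasParityD (ε : Bool) (D : Multiset (ℕ × Bool)) : Prop :=
  ∃ m : ℕ, sizeD true D = 2 * m ∧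
    (if ε then sizeD false D + 1 = 2 * m else sizeD false D = 2 * m + 1)

/-- The two replacement moves applied to lines of length `k`: either replace one line
`(k, ε')` with `k ≥ 2` by `(k − 2, !ε')` (the line disappears if `k = 2`), or replace two
lines `(k, ε')`, `(k, ε'')` by `(k − 1, !ε')` and `(k − 1, ε'')` (discarded if `k = 1`). -/
def MoveAtD (k : ℕ) (D D' : Multiset (ℕ × Bool)) : Prop :=
  (∃ ε' : Bool, 2 ≤ k ∧ (k, ε') ∈ D ∧
    D' = D.erase (k, ε') + (if k = 2 then 0 else {(k - 2, !ε')})) ∨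
  (∃ ε' ε'' : Bool, (k, ε') ∈ D ∧ (k, ε'') ∈ D.erase (k, ε') ∧
    D' = (D.erase (k, ε')).erase (k, ε'') +
      (if k = 1 then 0 else {(k - 1, !ε'), (k - 1, ε'')}))

/-- `D'` is an admissible subdiagram of `D` with the removed boxes lying on lines of
length `k`. -/
def SubdiagAtD (k : ℕ) (D D' : Multiset (ℕ × Bool)) : Prop :=
  AdmissibleD D' ∧
  sizeD false D' + sizeD true D' + 2 = sizeD false D + sizeD true D ∧
  (∃ ε : Bool, HasParityD ε D ∧ HasParityD (!ε) D') ∧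
  MoveAtD k D D'

/-- `D'` is an admissible subdiagram of `D`. -/
def SubdiagD (D D' : Multiset (ℕ × Bool)) : Prop := ∃ k : ℕ, SubdiagAtD k D D'

/-- The set of admissible slicings of a diagram `D` of size `(2n+1, 2n)`: sequences
`D = D₀ ⊃ D₁ ⊃ … ⊃ D_{2n}` where each `Dᵢ` is an admissible subdiagram of `D_{i−1}`. -/
def SlicingsD (n : ℕ) (D : Multiset (ℕ × Bool)) :
    Set (Fin (2 * n + 1) → Multiset (ℕ × Bool)) :=
  {s | s 0 = D ∧ ∀ i : Fin (2 * n), SubdiagD (s i.castSucc) (s i.succ)}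

def Ctg (D : Multiset (ℕ × Bool)) : Prop :=
  (∀ l : ℕ, l % 2 = 0 → D.count (l, false) = D.count (l, true)) ∧
  (∀ l : ℕ, l % 4 = 1 → Even (D.count (l, true))) ∧
  (∀ l : ℕ, l % 4 = 3 → Even (D.count (l, false)))

lemma ctg_add {D₁ D₂ : Multiset (ℕ × Bool)} (h₁ : Ctg D₁) (h₂ : Ctg D₂) : Ctg (D₁ + D₂) := by
  obtain ⟨a₁, b₁, c₁⟩ := h₁
  obtain ⟨a₂, b₂, c₂⟩ := h₂
  refine ⟨fun l hl => ?_, fun l hl => ?_, fun l hl => ?_⟩ <;>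
    simp only [Multiset.count_add]
  · rw [a₁ l hl, a₂ l hl]
  · exact (b₁ l hl).add (b₂ l hl)
  · exact (c₁ l hl).add (c₂ l hl)

lemma ctg_sub {D' S : Multiset (ℕ × Bool)} (h : Ctg (D' + S)) (hS : Ctg S) : Ctg D' := by
  obtain ⟨a, b, c⟩ := h
  obtain ⟨a', b', c'⟩ := hS
  refine ⟨fun l hl => ?_, fun l hl => ?_, fun l hl => ?_⟩
  · have h1 := a l hl; have h2 := a' l hl
    simp only [Multiset.count_add] at h1; omega
  · obtain ⟨k, hk⟩ := b l hl; obtain ⟨j, hj⟩ := b' l hl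
    simp only [Multiset.count_add] at hk; exact ⟨k - j, by omega⟩
  · obtain ⟨k, hk⟩ := c l hl; obtain ⟨j, hj⟩ := c' l hl
    simp only [Multiset.count_add] at hk; exact ⟨k - j, by omega⟩

lemma count_pair (a x y : ℕ × Bool) :
    ({x, y} : Multiset (ℕ × Bool)).count a =
      (if a = x then 1 else 0) + (if a = y then 1 else 0) := by
  rw [show ({x, y} : Multiset (ℕ × Bool)) = x ::ₘ {y} from rfl,
    Multiset.count_cons, Multiset.count_singleton]
  omega

lemma ctg_indecomp {d : Multiset (ℕ × Bool)} (h : IndecompD d) : Ctg d := by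
  rcases h with ⟨p, rfl⟩ | ⟨p, hp, rfl⟩ | ⟨p, hp, rfl⟩ | ⟨p, rfl⟩ | ⟨p, hp, rfl⟩ <;>
    refine ⟨fun l hl => ?_, fun l hl => ?_, fun l hl => ?_⟩ <;>
    simp only [Multiset.count_singleton, count_pair, Prod.mk.injEq] <;>
    split_ifs <;> simp_all <;> omega

lemma ctg_sum {L : Multiset (Multiset (ℕ × Bool))} (h : ∀ d ∈ L, IndecompD d) :
    Ctg L.sum := by
  induction L using Multiset.induction with
  | empty => exact ⟨fun l _ => by simp, fun l _ => by simp, fun l _ => by simp⟩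
  | cons d L ih =>
    rw [Multiset.sum_cons]
    exact ctg_add (ctg_indecomp (h d (by simp))) (ih fun d' hd' => h d' (by simp [hd']))

lemma pair_le_of_mem {x y : ℕ × Bool} {D : Multiset (ℕ × Bool)} (hxy : x ≠ y)
    (hx : x ∈ D) (hy : y ∈ D) : ({x, y} : Multiset (ℕ × Bool)) ≤ D := by
  rw [Multiset.le_iff_count]; intro a; rw [count_pair]
  rw [← Multiset.one_le_count_iff_mem] at hx hy
  rcases eq_or_ne a x with rfl | h1 <;> rcases eq_or_ne a y with rfl | h2 <;>
    simp_all

lemma double_le_of_count {x : ℕ × Bool} {D : Multiset (ℕ × Bool)}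
    (h : 2 ≤ D.count x) : ({x, x} : Multiset (ℕ × Bool)) ≤ D := by
  rw [Multiset.le_iff_count]; intro a; rw [count_pair]
  rcases eq_or_ne a x with rfl | h1 <;> simp_all

lemma ctg_backward : ∀ (n : ℕ) (D : Multiset (ℕ × Bool)), D.card = n →
    (∀ p ∈ D, 1 ≤ p.1) → Ctg D → AdmissibleD D := by
  intro n
  induction n using Nat.strong_induction_on with
  | _ n ih =>
    intro D hcard hD hC
    rcases eq_or_ne D 0 with rfl | hne
    · exact ⟨0, by simp, by simp⟩
    obtain ⟨⟨l, ε⟩, hmem⟩ := Multiset.exists_mem_of_ne_zero hne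
    have hl1 : 1 ≤ l := hD _ hmem
    have hcnt : 1 ≤ D.count (l, ε) := Multiset.one_le_count_iff_mem.mpr hmem
    have key : ∃ S, IndecompD S ∧ S ≤ D ∧ S ≠ 0 := by
      have h4 : l % 4 = 0 ∨ l % 4 = 1 ∨ l % 4 = 2 ∨ l % 4 = 3 := by omega
      rcases h4 with h4 | h4 | h4 | h4
      · -- even
        have hc := hC.1 l (by omega)
        have hf : (l, false) ∈ D := by
          rw [← Multiset.one_le_count_iff_mem]; cases ε <;> omega
        have ht : (l, true) ∈ D := by
          rw [← Multiset.one_le_count_iff_mem]; cases ε <;> omega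
        refine ⟨{(l, false), (l, true)},
          Or.inr (Or.inr (Or.inr (Or.inr ⟨l / 2, by omega,
            by rw [show 2 * (l / 2) = l by omega]⟩))),
          pair_le_of_mem (by simp) hf ht, by simp⟩
      · cases ε with
        | false =>
          exact ⟨{(l, false)}, Or.inl ⟨l / 4, by rw [show 4 * (l / 4) + 1 = l by omega]⟩,
            Multiset.singleton_le.mpr hmem, by simp⟩
        | true =>
          obtain ⟨j, hj⟩ := hC.2.1 l h4
          refine ⟨{(l, true), (l, true)},
            Or.inr (Or.inr (Or.inr (Or.inl ⟨l / 4,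
              by rw [show 4 * (l / 4) + 1 = l by omega]⟩))),
            double_le_of_count (by omega), by simp⟩
      · have hc := hC.1 l (by omega)
        have hf : (l, false) ∈ D := by
          rw [← Multiset.one_le_count_iff_mem]; cases ε <;> omega
        have ht : (l, true) ∈ D := by
          rw [← Multiset.one_le_count_iff_mem]; cases ε <;> omega
        refine ⟨{(l, false), (l, true)},
          Or.inr (Or.inr (Or.inr (Or.inr ⟨l / 2, by omega,
            by rw [show 2 * (l / 2) = l by omega]⟩))),
          pair_le_of_mem (by simp) hf ht, by simp⟩
      · cases ε with
        | true =>
          exact ⟨{(l, true)}, Or.inr (Or.inl ⟨(l + 1) / 4, by omega,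
            by rw [show 4 * ((l + 1) / 4) - 1 = l by omega]⟩),
            Multiset.singleton_le.mpr hmem, by simp⟩
        | false =>
          obtain ⟨j, hj⟩ := hC.2.2 l h4
          refine ⟨{(l, false), (l, false)},
            Or.inr (Or.inr (Or.inl ⟨(l + 1) / 4, by omega,
              by rw [show 4 * ((l + 1) / 4) - 1 = l by omega]⟩)),
            double_le_of_count (by omega), by simp⟩
    obtain ⟨S, hSi, hSle, hSne⟩ := key
    have hDeq : D - S + S = D := tsub_add_cancel_of_le hSle
    have hC' : Ctg (D - S) := ctg_sub (by rwa [hDeq]) (ctg_indecomp hSi)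
    have hcard' : (D - S).card < n := by
      have h1 := Multiset.card_le_card hSle
      have h2 : 0 < S.card := Multiset.card_pos.mpr hSne
      rw [Multiset.card_sub hSle]
      omega
    have hD' : ∀ p ∈ D - S, 1 ≤ p.1 := fun p hp =>
      hD p (Multiset.mem_of_le (Multiset.sub_le_self D S) hp)
    obtain ⟨L, hL, hLs⟩ := ih _ hcard' (D - S) rfl hD' hC'
    refine ⟨S ::ₘ L, fun d hd => ?_, ?_⟩
    · rcases Multiset.mem_cons.mp hd with rfl | h
      · exact hSi
      · exact hL d h
    · rw [Multiset.sum_cons, hLs, add_comm]; exact hDeq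


/-- A marked diagram (all lines of length `≥ 1`) is admissible if and only if: for every
even length the numbers of lines of the two parities agree; for every length `≡ 1 (mod 4)`
the number of lines of parity `1` is even; and for every length `≡ 3 (mod 4)` the number
of lines of parity `0` is even. -/
theorem admissible_iff_counting (D : Multiset (ℕ × Bool)) (hD : ∀ p ∈ D, 1 ≤ p.1) :
    AdmissibleD D ↔
      ((∀ l : ℕ, l % 2 = 0 → D.count (l, false) = D.count (l, true)) ∧
       (∀ l : ℕ, l % 4 = 1 → Even (D.count (l, true))) ∧
       (∀ l : ℕ, l % 4 = 3 → Even (D.count (l, false)))) := by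
  constructor
  · rintro ⟨L, hL, rfl⟩
    exact ctg_sum hL
  · intro h
    exact ctg_backward D.card D rfl hD h
end

section
/- Every nonempty admissible marked diagram of parity ε contains at least one line of odd length and parity ε. -/
/-- The signed difference between the number of `false` boxes and `true` boxes. -/
def diffD (D : Multiset (ℕ × Bool)) : ℤ := (sizeD false D : ℤ) - (sizeD true D : ℤ)

lemma sizeD_add (b : Bool) (A B : Multiset (ℕ × Bool)) :
    sizeD b (A + B) = sizeD b A + sizeD b B := by
  simp [sizeD]

lemma diffD_add (A B : Multiset (ℕ × Bool)) :
    diffD (A + B) = diffD A + diffD B := by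
  simp [diffD, sizeD_add]; ring

lemma diffD_sum (L : Multiset (Multiset (ℕ × Bool))) :
    diffD L.sum = (L.map diffD).sum := by
  induction L using Multiset.induction with
  | empty => simp [diffD, sizeD]
  | cons a s ih => simp [Multiset.sum_cons, diffD_add, ih]

lemma multiset_sum_nonpos (s : Multiset ℤ) (h : ∀ x ∈ s, x ≤ 0) : s.sum ≤ 0 := by
  induction s using Multiset.induction with
  | empty => simp
  | cons a t ih =>
    rw [Multiset.sum_cons]
    have := h a (Multiset.mem_cons_self a t)
    have := ih (fun x hx => h x (Multiset.mem_cons_of_mem hx))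
    omega

lemma indecomp_odd (d : Multiset (ℕ × Bool)) (ε : Bool) (hd : IndecompD d)
    (h : if ε then diffD d < 0 else 0 < diffD d) :
    ∃ l : ℕ, Odd l ∧ (l, ε) ∈ d := by
  rcases hd with ⟨p, rfl⟩ | ⟨p, hp, rfl⟩ | ⟨p, hp, rfl⟩ | ⟨p, rfl⟩ | ⟨p, hp, rfl⟩
  · cases ε
    · exact ⟨4 * p + 1, ⟨2 * p, by ring⟩, by simp⟩
    · exfalso; simp [diffD, sizeD] at h; omega
  · obtain ⟨q, rfl⟩ : ∃ q, p = q + 1 := ⟨p - 1, by omega⟩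
    have h3 : 4 * (q + 1) - 1 = 4 * q + 3 := by omega
    cases ε
    · exfalso; simp [diffD, sizeD, h3] at h; omega
    · exact ⟨4 * (q + 1) - 1, ⟨2 * q + 1, by omega⟩, by simp⟩
  · obtain ⟨q, rfl⟩ : ∃ q, p = q + 1 := ⟨p - 1, by omega⟩
    cases ε
    · exact ⟨4 * (q + 1) - 1, ⟨2 * q + 1, by omega⟩, by simp⟩
    · exfalso
      have h3 : 4 * (q + 1) - 1 = 4 * q + 3 := by omega
      simp [diffD, sizeD, h3, Multiset.insert_eq_cons] at h; omega
  · cases ε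
    · exfalso; simp [diffD, sizeD, Multiset.insert_eq_cons] at h; omega
    · exact ⟨4 * p + 1, ⟨2 * p, by ring⟩, by simp⟩
  · exfalso
    cases ε <;> simp [diffD, sizeD, Multiset.insert_eq_cons] at h <;> omega

/-- Every nonempty admissible marked diagram of parity `ε` contains a line of odd length
and parity `ε`. -/
theorem exists_odd_line_of_parity (D : Multiset (ℕ × Bool)) (ε : Bool)
    (hadm : AdmissibleD D) (hne : D ≠ 0) (hpar : HasParityD ε D) :
    ∃ l : ℕ, Odd l ∧ (l, ε) ∈ D := by
  obtain ⟨L, hL, rfl⟩ := hadm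
  have hdiff : diffD L.sum = (if ε then (-1 : ℤ) else 1) := by
    obtain ⟨m, h1, h2⟩ := hpar
    cases ε <;> simp at h2 ⊢ <;> simp [diffD] <;> omega
  have hex : ∃ d ∈ L, (if ε then diffD d < 0 else 0 < diffD d) := by
    by_contra hc
    push_neg at hc
    cases ε
    · simp only [if_neg Bool.false_ne_true, not_lt] at hc hdiff
      have : (L.map diffD).sum ≤ 0 :=
        multiset_sum_nonpos _ (by
          intro x hx
          obtain ⟨d, hd, rfl⟩ := Multiset.mem_map.mp hx
          simpa using hc d hd)
      rw [← diffD_sum] at this; linarith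
    · simp only [if_true, not_lt] at hc hdiff
      have : (0 : ℤ) ≤ (L.map diffD).sum :=
        Multiset.sum_nonneg (by
          intro x hx
          obtain ⟨d, hd, rfl⟩ := Multiset.mem_map.mp hx
          simpa using hc d hd)
      rw [← diffD_sum] at this; linarith
  obtain ⟨d, hdL, hsign⟩ := hex
  obtain ⟨l, hodd, hmem⟩ := indecomp_odd d ε (hL d hdL) hsign
  have hle : d ≤ L.sum := by
    have := Multiset.cons_erase hdL
    calc d ≤ d + (L.erase d).sum := le_add_of_nonneg_right (by positivity)
    _ = ((d ::ₘ L.erase d)).sum := by rw [Multiset.sum_cons]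
    _ = L.sum := by rw [this]
  exact ⟨l, hodd, Multiset.mem_of_le hle hmem⟩
end
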